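/- arXiv:1307.4861 — 7 statements merged into one kernel-verified Lean document; each statement's English description precedes it below -/
import Mathlib

section
/- Let G be a group generated by a subset A, and suppose every element of G is a product of k palindromes over A. Let W = (ℤ → G) ⋊ ℤ, where ℤ acts on the group of all functions ℤ → G (under pointwise multiplication) by shifts: (n • f)(x) = f(x − n). For a ∈ A let δ_a : ℤ → G be the function equal to a at 0 and to the identity elsewhere, and let t = (1, 1) ∈ W where the first coordinate is the constant-identity function. Let S = {(δ_a, 0) : a ∈ A} ∪ {t}. Then every element of the subgroup of W generated by S (a copy of the restricted wreath product G ≀ ℤ) is a product of 2 + k palindromes over S. -/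
/-- A palindromic word over `X`: a finite list of elements of `X ∪ X⁻¹`
that reads the same forwards and backwards. -/
def IsPalindromicWord {G : Type*} [Group G] (X : Set G) (w : List G) : Prop :=
  (∀ g ∈ w, g ∈ X ∨ g⁻¹ ∈ X) ∧ w.reverse = w

/-- `g` is a product (in order) of the evaluations of `n` palindromic words over `X`. -/
def IsProdOfPalindromes {G : Type*} [Group G] (X : Set G) (n : ℕ) (g : G) : Prop :=
  ∃ ws : List (List G), ws.length = n ∧ (∀ w ∈ ws, IsPalindromicWord X w) ∧
    (ws.map List.prod).prod = g

/-- The shift automorphism of the group of all functions `ℤ → G`: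
`(n • f) (x) = f (x - n)`. -/
def shiftAut (G : Type*) [Group G] (n : ℤ) : (ℤ → G) ≃* (ℤ → G) where
  toFun f := fun x => f (x - n)
  invFun f := fun x => f (x + n)
  left_inv f := funext fun x => by simp
  right_inv f := funext fun x => by simp
  map_mul' f g := rfl

/-- `ℤ` acting on `ℤ → G` by shifts, as a homomorphism to the automorphism group. -/
def shiftHom (G : Type*) [Group G] : Multiplicative ℤ →* MulAut (ℤ → G) where
  toFun n := shiftAut G n.toAdd
  map_one' := by
    ext f x
    simp [shiftAut]
  map_mul' m n := by
    ext f x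
    simp only [shiftAut, toAdd_mul, MulAut.mul_apply, MulEquiv.coe_mk, Equiv.coe_fn_mk]
    congr 1
    ring

/-- The (unrestricted) wreath-type product `(ℤ → G) ⋊ ℤ`. -/
abbrev WrZ (G : Type*) [Group G] := (ℤ → G) ⋊[shiftHom G] Multiplicative ℤ

/-- The function `ℤ → G` equal to `a` at `0` and to the identity elsewhere. -/
def delta {G : Type*} [Group G] (a : G) : ℤ → G := fun x => if x = 0 then a else 1

namespace PalProof

variable {G : Type*} [Group G]

/-- convenient constructor -/
def mkW (f : ℤ → G) (m : ℤ) : WrZ G := ⟨f, Multiplicative.ofAdd m⟩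

@[simp] lemma mkW_left (f : ℤ → G) (m : ℤ) : (mkW f m).left = f := rfl
@[simp] lemma mkW_right (f : ℤ → G) (m : ℤ) : (mkW f m).right = Multiplicative.ofAdd m := rfl

lemma mkW_mul (f g : ℤ → G) (m n : ℤ) :
    mkW f m * mkW g n = mkW (fun x => f x * g (x - m)) (m + n) := by
  refine SemidirectProduct.ext ?_ ?_
  · rfl
  · show Multiplicative.ofAdd m * Multiplicative.ofAdd n = _
    rw [← ofAdd_add]
    rfl

lemma mkW_one : (mkW (fun _ => (1:G)) 0) = 1 := by
  refine SemidirectProduct.ext ?_ ?_ <;> rfl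

lemma mkW_inv (f : ℤ → G) (m : ℤ) :
    (mkW f m)⁻¹ = mkW (fun x => (f (x + m))⁻¹) (-m) := by
  rw [eq_comm, eq_inv_iff_mul_eq_one, mkW_mul]
  rw [← mkW_one]
  congr 1
  · funext x
    simp
  · ring

def tau : WrZ G := ⟨1, Multiplicative.ofAdd 1⟩

lemma tau_eq : (tau : WrZ G) = mkW 1 1 := rfl

lemma tau_inv : (tau : WrZ G)⁻¹ = mkW 1 (-1) := by
  rw [tau_eq]
  show (mkW (fun _ => (1:G)) 1)⁻¹ = _
  rw [mkW_inv]
  congr 1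
  funext x
  simp

lemma one_eq_mkW : (1 : WrZ G) = mkW 1 0 := mkW_one.symm

lemma mkW_exp_pow (c : ℤ) (j : ℕ) : (mkW (1 : ℤ → G) c) ^ j = mkW 1 (j * c) := by
  induction j with
  | zero => simp [one_eq_mkW]
  | succ n ih =>
    rw [pow_succ, ih, mkW_mul]
    congr 1
    · funext x; simp [Pi.one_apply]
    · push_cast; ring

/-- run of t's realizing exponent n -/
def trun (n : ℤ) : List (WrZ G) :=
  if 0 ≤ n then List.replicate n.toNat tau else List.replicate (-n).toNat tau⁻¹

lemma trun_prod (n : ℤ) : (trun (G := G) n).prod = mkW 1 n := by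
  unfold trun
  split
  · rw [List.prod_replicate, tau_eq, mkW_exp_pow]
    congr 1
    omega
  · rw [List.prod_replicate, tau_inv, mkW_exp_pow]
    congr 1
    omega

lemma trun_reverse (n : ℤ) : (trun (G := G) n).reverse = trun n := by
  unfold trun
  split <;> rw [List.reverse_replicate]


/-- the generating set -/
def SS (A : Set G) : Set (WrZ G) :=
  {w : WrZ G | ∃ a ∈ A, w = ⟨delta a, 1⟩} ∪ {(⟨1, Multiplicative.ofAdd 1⟩ : WrZ G)}

lemma tau_mem (A : Set G) : (tau : WrZ G) ∈ SS A := Or.inr rfl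

lemma delta_mul (a b : G) : delta a * delta b = delta (a * b) := by
  funext x
  by_cases h : x = 0 <;> simp [delta, h]

lemma delta_one : delta (1 : G) = 1 := by
  funext x
  by_cases h : x = 0 <;> simp [delta, h]

lemma delta_inv (a : G) : (delta a)⁻¹ = delta a⁻¹ := by
  funext x
  by_cases h : x = 0 <;> simp [delta, h]

/-- letter for a ∈ A -/
def dl (a : G) : WrZ G := ⟨delta a, 1⟩

lemma dl_eq (a : G) : dl a = mkW (delta a) 0 := by
  refine SemidirectProduct.ext rfl rfl

lemma dl_inv (a : G) : (dl a)⁻¹ = dl a⁻¹ := by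
  rw [dl_eq, dl_eq, mkW_inv]
  congr 1
  funext x
  rw [← delta_inv]
  simp

lemma dl_mem {A : Set G} {a : G} (ha : a ∈ A) : dl a ∈ SS A := Or.inl ⟨a, ha, rfl⟩

def mapd (u : List G) : List (WrZ G) := u.map dl

lemma mapd_prod (u : List G) : (mapd u).prod = mkW (delta u.prod) 0 := by
  induction u with
  | nil => simp [mapd, one_eq_mkW, delta_one]
  | cons a u ih =>
    rw [mapd, List.map_cons, List.prod_cons, ← mapd, ih, dl_eq, mkW_mul]
    congr 1
    funext x
    rw [List.prod_cons, ← delta_mul]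
    simp

lemma mapd_reverse (u : List G) : (mapd u).reverse = mapd u.reverse := by
  simp [mapd, List.map_reverse]

lemma mapd_letters {A : Set G} {u : List G} (hu : ∀ x ∈ u, x ∈ A ∨ x⁻¹ ∈ A) :
    ∀ g ∈ mapd u, g ∈ SS A ∨ g⁻¹ ∈ SS A := by
  intro g hg
  rcases List.mem_map.mp hg with ⟨x, hx, rfl⟩
  rcases hu x hx with h | h
  · exact Or.inl (dl_mem h)
  · right
    rw [dl_inv]
    exact dl_mem h

lemma trun_letters (A : Set G) (n : ℤ) : ∀ g ∈ trun (G := G) n, g ∈ SS A ∨ g⁻¹ ∈ SS A := by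
  intro g hg
  unfold trun at hg
  split at hg
  · rw [List.eq_of_mem_replicate hg]
    exact Or.inl (tau_mem A)
  · rw [List.eq_of_mem_replicate hg]
    right
    rw [inv_inv]
    exact tau_mem A

/-- every element of G has a word over A ∪ A⁻¹ -/
lemma exists_word {A : Set G} (hgen : Subgroup.closure A = ⊤) (g : G) :
    ∃ u : List G, (∀ x ∈ u, x ∈ A ∨ x⁻¹ ∈ A) ∧ u.prod = g := by
  have hg : g ∈ Subgroup.closure A := by rw [hgen]; trivial
  refine Subgroup.closure_induction ?_ ?_ ?_ ?_ hg
  · intro x hx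
    exact ⟨[x], by simpa using Or.inl hx, by simp⟩
  · exact ⟨[], by simp, by simp⟩
  · rintro x y - - ⟨u, hu, hup⟩ ⟨v, hv, hvp⟩
    refine ⟨u ++ v, ?_, by simp [hup, hvp]⟩
    intro z hz
    rcases List.mem_append.mp hz with h | h
    · exact hu z h
    · exact hv z h
  · rintro x - ⟨u, hu, hup⟩
    refine ⟨(u.map (fun y => y⁻¹)).reverse, ?_, ?_⟩
    · intro z hz
      rw [List.mem_reverse, List.mem_map] at hz
      rcases hz with ⟨y, hy, rfl⟩
      rcases hu y hy with h | h
      · exact Or.inr (by simpa using h)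
      · exact Or.inl h
    · rw [← List.prod_inv_reverse, hup]


/-! ### walks -/

def ascF (β : ℕ → List G) : ℕ → ℕ → List (WrZ G)
  | 0, i => trun (-(i:ℤ))
  | fu+1, i => mapd (β i) ++ ([tau] ++ ascF β fu (i+1))

def descF (M : ℤ) (d : ℕ → List G) : ℕ → ℕ → List (WrZ G)
  | 0, i => trun (M + i - 1)
  | fu+1, i => [tau⁻¹] ++ (mapd (d i) ++ descF M d fu (i+1))

lemma ascF_prod (β : ℕ → List G) (fu : ℕ) : ∀ i : ℕ,
    (ascF β fu i).prod =
      mkW (fun x => if 0 ≤ x ∧ x < (fu:ℤ) then (β (i + x.toNat)).prod else 1) (-(i:ℤ)) := by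
  induction fu with
  | zero =>
    intro i
    show (trun (-(i:ℤ))).prod = _
    rw [trun_prod]
    congr 1
    funext x
    rw [if_neg (by push_cast; omega)]
    rfl
  | succ fu ih =>
    intro i
    show (mapd (β i) ++ ([tau] ++ ascF β fu (i+1))).prod = _
    rw [List.prod_append, List.prod_append, mapd_prod, List.prod_singleton, tau_eq,
      ih (i+1), mkW_mul, mkW_mul]
    congr 1
    · funext x
      simp only [Pi.one_apply, one_mul, sub_zero, delta]
      split_ifs <;>
        first
          | (exfalso; omega)
          | rfl
          | ((rw [mul_one]) <;> (congr 2 <;> omega))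
          | ((rw [one_mul]) <;> (congr 2 <;> omega))
          | (congr 2 <;> omega)
          | (rw [mul_one]; congr 2 <;> omega)
          | (rw [one_mul]; congr 2 <;> omega)
    · push_cast; ring

lemma ascF_rev_prod (β : ℕ → List G) (fu : ℕ) : ∀ i : ℕ,
    (ascF β fu i).reverse.prod =
      mkW (fun x => if (i:ℤ) ≤ -x ∧ -x < (i:ℤ) + fu then (β (-x).toNat).reverse.prod else 1)
        (-(i:ℤ)) := by
  induction fu with
  | zero =>
    intro i
    show (trun (-(i:ℤ))).reverse.prod = _
    rw [trun_reverse, trun_prod]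
    congr 1
    funext x
    rw [if_neg (by push_cast; omega)]
    rfl
  | succ fu ih =>
    intro i
    show (mapd (β i) ++ ([tau] ++ ascF β fu (i+1))).reverse.prod = _
    rw [List.reverse_append, List.reverse_append, List.reverse_singleton, mapd_reverse,
      List.prod_append, List.prod_append, List.prod_singleton, tau_eq, ih (i+1), mapd_prod,
      mkW_mul, mkW_mul]
    congr 1
    · funext x
      simp only [Pi.one_apply, one_mul, mul_one, delta]
      split_ifs <;>
        first
          | (exfalso; push_cast at *; omega)
          | rfl
          | ((rw [mul_one]) <;> (congr 3 <;> omega))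
          | ((rw [one_mul]) <;> (congr 3 <;> omega))
          | (congr 3 <;> omega)
          | (rw [mul_one]; congr 3 <;> omega)
          | (rw [one_mul]; congr 3 <;> omega)
    · push_cast; ring


lemma descF_prod (M : ℤ) (d : ℕ → List G) (fu : ℕ) : ∀ i : ℕ,
    (descF M d fu i).prod =
      mkW (fun y => if 1 ≤ -y ∧ -y ≤ (fu:ℤ) then (d (i + (-y).toNat - 1)).prod else 1)
        (M + i - 1) := by
  induction fu with
  | zero =>
    intro i
    show (trun (M + i - 1)).prod = _
    rw [trun_prod]
    congr 1
    funext y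
    rw [if_neg (by push_cast; omega)]
    rfl
  | succ fu ih =>
    intro i
    show ([tau⁻¹] ++ (mapd (d i) ++ descF M d fu (i+1))).prod = _
    rw [List.prod_append, List.prod_append, List.prod_singleton, tau_inv, mapd_prod,
      ih (i+1), mkW_mul, mkW_mul]
    congr 1
    · funext y
      simp only [Pi.one_apply, one_mul, mul_one, sub_zero, delta]
      split_ifs <;>
        first
          | (exfalso; omega)
          | rfl
          | ((rw [mul_one]) <;> (congr 2 <;> omega))
          | ((rw [one_mul]) <;> (congr 2 <;> omega))
          | (congr 2 <;> omega)
    · push_cast; ring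

lemma descF_rev_prod (M : ℤ) (d : ℕ → List G) (fu : ℕ) : ∀ i : ℕ,
    (descF M d fu i).reverse.prod =
      mkW (fun y => if (i:ℤ) ≤ y - M ∧ y - M < (i:ℤ) + fu then (d (y - M).toNat).reverse.prod
        else 1) (M + i - 1) := by
  induction fu with
  | zero =>
    intro i
    show (trun (M + i - 1)).reverse.prod = _
    rw [trun_reverse, trun_prod]
    congr 1
    funext y
    rw [if_neg (by push_cast; omega)]
    rfl
  | succ fu ih =>
    intro i
    show ([tau⁻¹] ++ (mapd (d i) ++ descF M d fu (i+1))).reverse.prod = _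
    rw [List.reverse_append, List.reverse_append, List.reverse_singleton, mapd_reverse,
      List.prod_append, List.prod_append, List.prod_singleton, tau_inv, mapd_prod,
      ih (i+1), mkW_mul, mkW_mul]
    congr 1
    · funext y
      simp only [Pi.one_apply, one_mul, mul_one, sub_zero, delta]
      split_ifs <;>
        first
          | (exfalso; push_cast at *; omega)
          | rfl
          | ((rw [mul_one]) <;> (congr 3 <;> omega))
          | ((rw [one_mul]) <;> (congr 3 <;> omega))
          | (congr 3 <;> omega)
    · push_cast; ring

/-! ### the middle region -/

def buildMid (M : ℤ) : ℤ → List (List G) → List (List (WrZ G))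
  | cur, [] => [trun (-M - cur)]
  | cur, P :: Ps => (trun (-cur) ++ (mapd P ++ trun (-cur))) :: buildMid M (-cur) Ps

lemma buildMid_length (M : ℤ) : ∀ (cur : ℤ) (Ps : List (List G)),
    (buildMid (G := G) M cur Ps).length = Ps.length + 1 := by
  intro cur Ps
  induction Ps generalizing cur with
  | nil => rfl
  | cons P Ps ih => simp [buildMid, ih]

lemma buildMid_prod (M : ℤ) : ∀ (cur : ℤ) (Ps : List (List G)),
    ((buildMid M cur Ps).map List.prod).prod =
      mkW (fun x => delta ((Ps.map List.prod).prod) (x + cur)) (-cur + -M) := by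
  intro cur Ps
  induction Ps generalizing cur with
  | nil =>
    show ([trun (-M - cur)].map List.prod).prod = _
    rw [List.map_singleton, List.prod_singleton, trun_prod]
    congr 1
    · funext x
      simp [delta_one]
    · ring
  | cons P Ps ih =>
    show (((trun (-cur) ++ (mapd P ++ trun (-cur))) :: buildMid M (-cur) Ps).map List.prod).prod = _
    rw [List.map_cons, List.prod_cons, ih (-cur), List.prod_append, List.prod_append,
      trun_prod, mapd_prod, mkW_mul, mkW_mul, mkW_mul]
    congr 1
    · funext x
      simp only [Pi.one_apply, one_mul, mul_one, delta, List.map_cons, List.prod_cons]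
      split_ifs <;>
        first
          | (exfalso; omega)
          | rfl
          | ((rw [mul_one]) <;> rfl)
          | ((rw [one_mul]) <;> rfl)
    · ring


/-! ### the chain recursion -/

def chainA (w : G → List G) (f : ℤ → G) (N : ℕ) : ℕ → List G × List G
  | 0 => ([], [])
  | j+1 =>
    let b := (chainA w f N j).1
    let d := w ((b.reverse.prod)⁻¹ * f (-((N:ℤ) - j)))
    (w (f ((N:ℤ) - j) * (d.reverse.prod)⁻¹), d)

section Chain

variable (A : Set G) (w : G → List G) (f : ℤ → G) (N : ℕ)

def betaW (i : ℕ) : List G := if i ≤ N then (chainA w f N (N - i)).1 else []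

def deltaW (i : ℕ) : List G := if 1 ≤ i ∧ i ≤ N then (chainA w f N (N - i + 1)).2 else []

lemma betaW_ge {i : ℕ} (h : N ≤ i) : betaW w f N i = [] := by
  unfold betaW
  split
  · have : N - i = 0 := by omega
    rw [this]
    rfl
  · rfl

lemma deltaW_out {i : ℕ} (h : i = 0 ∨ N < i) : deltaW w f N i = [] := by
  unfold deltaW
  rw [if_neg (by omega)]

lemma deltaW_eq {i : ℕ} (h1 : 1 ≤ i) (h2 : i ≤ N) :
    deltaW w f N i = w (((betaW w f N i).reverse.prod)⁻¹ * f (-(i:ℤ))) := by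
  unfold deltaW betaW
  rw [if_pos ⟨h1, h2⟩, if_pos h2]
  have e1 : N - i + 1 = (N - i) + 1 := rfl
  rw [e1]
  show (chainA w f N ((N-i)+1)).2 = _
  simp only [chainA]
  have e2 : -((N:ℤ) - ((N - i : ℕ) : ℤ)) = -(i:ℤ) := by omega
  rw [e2]

lemma betaW_eq {i : ℕ} (h1 : 1 ≤ i) (h2 : i ≤ N) :
    betaW w f N (i-1) = w (f (i:ℤ) * (((deltaW w f N i).reverse.prod))⁻¹) := by
  unfold betaW deltaW
  rw [if_pos (by omega), if_pos ⟨h1, h2⟩]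
  have e1 : N - (i-1) = (N - i) + 1 := by omega
  rw [e1]
  show (chainA w f N ((N-i)+1)).1 = _
  simp only [chainA]
  have e2 : ((N:ℤ) - ((N - i : ℕ) : ℤ)) = (i:ℤ) := by omega
  rw [e2]

lemma chainA_letters {A : Set G} (hw : ∀ g x, x ∈ w g → x ∈ A ∨ x⁻¹ ∈ A) :
    ∀ j, (∀ x ∈ (chainA w f N j).1, x ∈ A ∨ x⁻¹ ∈ A) ∧
         (∀ x ∈ (chainA w f N j).2, x ∈ A ∨ x⁻¹ ∈ A) := by
  intro j
  cases j with
  | zero => exact ⟨by intro x hx; simp [chainA] at hx, by intro x hx; simp [chainA] at hx⟩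
  | succ j =>
    constructor
    · intro x hx
      exact hw _ x hx
    · intro x hx
      exact hw _ x hx

lemma betaW_letters (hw : ∀ g x, x ∈ w g → x ∈ A ∨ x⁻¹ ∈ A) :
    ∀ i, ∀ x ∈ betaW w f N i, x ∈ A ∨ x⁻¹ ∈ A := by
  intro i x hx
  unfold betaW at hx
  split at hx
  · exact (chainA_letters (A := A) w f N hw _).1 x hx
  · simp at hx

lemma deltaW_letters (hw : ∀ g x, x ∈ w g → x ∈ A ∨ x⁻¹ ∈ A) :
    ∀ i, ∀ x ∈ deltaW w f N i, x ∈ A ∨ x⁻¹ ∈ A := by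
  intro i x hx
  unfold deltaW at hx
  split at hx
  · exact (chainA_letters (A := A) w f N hw _).2 x hx
  · simp at hx

end Chain


/-! ### letters and palindromicity of pieces -/

lemma ascF_letters (A : Set G) (β : ℕ → List G)
    (hβ : ∀ i, ∀ x ∈ β i, x ∈ A ∨ x⁻¹ ∈ A) :
    ∀ fu i, ∀ g ∈ ascF β fu i, g ∈ SS A ∨ g⁻¹ ∈ SS A := by
  intro fu
  induction fu with
  | zero => intro i g hg; exact trun_letters A _ g hg
  | succ fu ih =>
    intro i g hg
    rcases List.mem_append.mp hg with h | h
    · exact mapd_letters (hβ i) g h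
    · rcases List.mem_append.mp h with h' | h'
      · rw [List.mem_singleton.mp h']
        exact Or.inl (tau_mem A)
      · exact ih (i+1) g h'

lemma descF_letters (A : Set G) (M : ℤ) (d : ℕ → List G)
    (hd : ∀ i, ∀ x ∈ d i, x ∈ A ∨ x⁻¹ ∈ A) :
    ∀ fu i, ∀ g ∈ descF M d fu i, g ∈ SS A ∨ g⁻¹ ∈ SS A := by
  intro fu
  induction fu with
  | zero => intro i g hg; exact trun_letters A _ g hg
  | succ fu ih =>
    intro i g hg
    rcases List.mem_append.mp hg with h | h
    · rw [List.mem_singleton.mp h]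
      right
      rw [inv_inv]
      exact tau_mem A
    · rcases List.mem_append.mp h with h' | h'
      · exact mapd_letters (hd i) g h'
      · exact ih (i+1) g h'

lemma buildMid_pal (A : Set G) (M : ℤ) :
    ∀ (Ps : List (List G)) (cur : ℤ), (∀ P ∈ Ps, IsPalindromicWord A P) →
      ∀ q ∈ buildMid M cur Ps, IsPalindromicWord (SS A) q := by
  intro Ps
  induction Ps with
  | nil =>
    intro cur _ q hq
    rw [List.mem_singleton.mp hq]
    exact ⟨trun_letters A _, trun_reverse _⟩
  | cons P Ps ih =>
    intro cur hP q hq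
    rcases List.mem_cons.mp hq with h | h
    · subst h
      constructor
      · intro g hg
        rcases List.mem_append.mp hg with h | h
        · exact trun_letters A _ g h
        · rcases List.mem_append.mp h with h' | h'
          · exact mapd_letters (hP P (by simp)).1 g h'
          · exact trun_letters A _ g h'
      · rw [List.reverse_append, List.reverse_append, trun_reverse, mapd_reverse,
          (hP P (by simp)).2, List.append_assoc]
    · exact ih (-cur) (fun P' hP' => hP P' (by simp [hP'])) q h

/-! ### equations -/

lemma eqMinus (w : G → List G) (hwp : ∀ g, (w g).prod = g) (f : ℤ → G) (N : ℕ)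
    {i : ℕ} (h1 : 1 ≤ i) (h2 : i ≤ N) :
    (betaW w f N i).reverse.prod * (deltaW w f N i).prod = f (-(i:ℤ)) := by
  rw [deltaW_eq w f N h1 h2, hwp, mul_inv_cancel_left]

lemma eqPlus (w : G → List G) (hwp : ∀ g, (w g).prod = g) (f : ℤ → G) (N : ℕ)
    {i : ℕ} (h1 : 1 ≤ i) (h2 : i ≤ N) :
    (betaW w f N (i-1)).prod * (deltaW w f N i).reverse.prod = f (i:ℤ) := by
  rw [betaW_eq w f N h1 h2, hwp, inv_mul_cancel_right]


/-! ### master construction -/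

noncomputable def wfn {A : Set G} (hgen : Subgroup.closure A = ⊤) : G → List G :=
  fun g => (exists_word hgen g).choose

lemma wfn_letters {A : Set G} (hgen : Subgroup.closure A = ⊤) (g : G) :
    ∀ x ∈ wfn hgen g, x ∈ A ∨ x⁻¹ ∈ A := (exists_word hgen g).choose_spec.1

lemma wfn_prod {A : Set G} (hgen : Subgroup.closure A = ⊤) (g : G) :
    (wfn hgen g).prod = g := (exists_word hgen g).choose_spec.2

lemma construct {A : Set G} (hgen : Subgroup.closure A = ⊤) (k : ℕ)
    (hA : ∀ g : G, IsProdOfPalindromes A k g) (f : ℤ → G) (M : ℤ) (N : ℕ) (hN : 1 ≤ N)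
    (hf : ∀ x : ℤ, (N:ℤ) < |x| → f x = 1) :
    IsProdOfPalindromes (SS A) (2 + k) (mkW f M) := by
  classical
  cases k with
  | zero =>
    have hG : ∀ g : G, g = 1 := by
      intro g
      obtain ⟨ws, hl, -, hp⟩ := hA g
      rw [List.length_eq_zero_iff] at hl
      subst hl
      simpa using hp.symm
    refine ⟨[trun M, []], rfl, ?_, ?_⟩
    · intro u hu
      rcases List.mem_cons.mp hu with h | h
      · subst h; exact ⟨trun_letters A M, trun_reverse M⟩
      · rw [List.mem_singleton.mp h]
        exact ⟨by simp, rfl⟩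
    · simp only [List.map_cons, List.map_nil, List.prod_cons, List.prod_nil, trun_prod, mul_one]
      congr 1
      funext x
      exact (hG (f x)).symm
  | succ k' =>
    set w : G → List G := wfn hgen with hw
    have hwl : ∀ g, ∀ x ∈ w g, x ∈ A ∨ x⁻¹ ∈ A := fun g => wfn_letters hgen g
    have hwp : ∀ g, (w g).prod = g := fun g => wfn_prod hgen g
    set bW : ℕ → List G := betaW w f N with hbW
    set dW : ℕ → List G := deltaW w f N with hdW
    obtain ⟨ws0, hl0, hpal0, hprod0⟩ := hA (((bW 0).reverse.prod)⁻¹ * f 0)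
    have hws0ne : ws0 ≠ [] := by
      intro h
      rw [h] at hl0
      simp at hl0
    set Ps := ws0.dropLast with hPs
    set Pk := ws0.getLast hws0ne with hPk
    have hsplit : Ps ++ [Pk] = ws0 := List.dropLast_append_getLast hws0ne
    have hPs_len : Ps.length = k' := by
      rw [hPs, List.length_dropLast, hl0]
      omega
    have hs : (Ps.map List.prod).prod * Pk.prod = ((bW 0).reverse.prod)⁻¹ * f 0 := by
      rw [← hprod0, ← hsplit]
      simp
    set L1 := ascF bW N 0 with hL1def
    set L2 := descF M dW N 1 with hL2def
    set p1 := L1.reverse ++ ([tau] ++ L1) with hp1def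
    set p2 := L2.reverse ++ (mapd Pk ++ L2) with hp2def
    have hPkpal : IsPalindromicWord A Pk := hpal0 Pk (by rw [hPk]; exact List.getLast_mem hws0ne)
    refine ⟨p1 :: (buildMid M 1 Ps ++ [p2]), ?_, ?_, ?_⟩
    · rw [List.length_cons, List.length_append, buildMid_length, hPs_len]
      simp only [List.length_singleton]
      omega
    · intro q hq
      rcases List.mem_cons.mp hq with h | h
      · subst h
        constructor
        · intro g hg
          rcases List.mem_append.mp hg with h | h
          · exact ascF_letters A bW (fun i => betaW_letters A w f N hwl i) N 0 g
              (List.mem_reverse.mp h)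
          · rcases List.mem_append.mp h with h' | h'
            · rw [List.mem_singleton.mp h']
              exact Or.inl (tau_mem A)
            · exact ascF_letters A bW (fun i => betaW_letters A w f N hwl i) N 0 g h'
        · rw [hp1def]
          simp [List.reverse_append]
      · rcases List.mem_append.mp h with h' | h'
        · refine buildMid_pal A M Ps 1 ?_ q h'
          intro P hP
          exact hpal0 P (by rw [hPs] at hP; exact List.dropLast_subset ws0 hP)
        · rw [List.mem_singleton.mp h']
          constructor
          · intro g hg
            rcases List.mem_append.mp hg with h | h
            · exact descF_letters A M dW (fun i => deltaW_letters A w f N hwl i) N 1 g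
                (List.mem_reverse.mp h)
            · rcases List.mem_append.mp h with h'' | h''
              · exact mapd_letters hPkpal.1 g h''
              · exact descF_letters A M dW (fun i => deltaW_letters A w f N hwl i) N 1
                  g h''
          · rw [hp2def]
            simp only [List.reverse_append, List.reverse_reverse, mapd_reverse, hPkpal.2,
              List.append_assoc]
    · have hp1 : p1.prod = L1.reverse.prod * ((tau : WrZ G) * L1.prod) := by
        rw [hp1def, List.prod_append, List.prod_append, List.prod_singleton]
      have hp2 : p2.prod = L2.reverse.prod * ((mapd Pk).prod * L2.prod) := by
        rw [hp2def, List.prod_append, List.prod_append]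
      have hL1 := ascF_prod bW N 0
      have hL1r := ascF_rev_prod bW N 0
      have hL2 := descF_prod M dW N 1
      have hL2r := descF_rev_prod M dW N 1
      have hmid := buildMid_prod (G := G) M 1 Ps
      simp only [List.map_cons, List.map_append, List.map_singleton, List.prod_cons,
        List.prod_append, List.prod_singleton, List.map_nil, List.prod_nil, mul_one]
      rw [hp1, hp2, hL1, hL1r, hL2, hL2r, mapd_prod, hmid, tau_eq]
      simp only [mkW_mul]
      congr 1
      · funext x
        simp only [Pi.one_apply, delta]
        push_cast
        ring_nf
        rcases lt_trichotomy x 0 with hneg | hzero | hpos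
        · obtain ⟨i, rfl⟩ := Int.exists_eq_neg_ofNat (le_of_lt hneg)
          have hi1 : 1 ≤ i := by omega
          simp only [neg_neg, Int.toNat_natCast]
          by_cases hiN : i ≤ N
          · by_cases hiNlt : i < N
            · have heq := eqMinus w hwp f N hi1 hiN
              split_ifs <;> try (exfalso; omega)
              simp only [one_mul, mul_one]
              have e6 : 1 + i - 1 = i := by omega
              rw [e6]
              exact heq
            · have heq := eqMinus w hwp f N hi1 hiN
              rw [betaW_ge w f N (by omega)] at heq
              simp only [List.reverse_nil, List.prod_nil, one_mul] at heq
              split_ifs <;> try (exfalso; omega)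
              simp only [one_mul, mul_one]
              have e6 : 1 + i - 1 = i := by omega
              rw [e6]
              exact heq
          · split_ifs <;> try (exfalso; omega)
            simp only [one_mul, mul_one]
            refine (hf _ ?_).symm
            rw [abs_neg, Int.abs_natCast]
            omega
        · subst hzero
          split_ifs <;> try (exfalso; omega)
          simp only [one_mul, mul_one, neg_zero, Int.toNat_zero]
          rw [hs, mul_inv_cancel_left]
        · obtain ⟨i, rfl⟩ := Int.eq_ofNat_of_zero_le (le_of_lt hpos)
          have hi1 : 1 ≤ i := by omega
          simp only [Int.toNat_natCast]
          by_cases hiN : i ≤ N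
          · have heq := eqPlus w hwp f N hi1 hiN
            split_ifs <;> try (exfalso; omega)
            simp only [one_mul, mul_one]
            have e2 : ((-1 + (i:ℤ)).toNat) = i - 1 := by omega
            rw [e2]
            exact heq
          · split_ifs <;> try (exfalso; omega)
            simp only [one_mul, mul_one]
            refine (hf _ ?_).symm
            rw [Int.abs_natCast]
            omega
      · push_cast
        ring_nf


lemma shift_apply (m : Multiplicative ℤ) (g : ℤ → G) (x : ℤ) :
    (shiftHom G m) g x = g (x - m.toAdd) := rfl

lemma bounded_support {A : Set G} :
    ∀ w ∈ Subgroup.closure (SS A), ∃ N : ℕ, ∀ x : ℤ, (N:ℤ) < |x| → w.left x = 1 := by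
  intro w hw
  refine Subgroup.closure_induction ?_ ?_ ?_ ?_ hw
  · rintro u (⟨a, -, rfl⟩ | hu)
    · refine ⟨0, fun x hx => ?_⟩
      show delta a x = 1
      rw [delta]
      rw [if_neg (by simp only [Int.abs_eq_natAbs] at hx; omega)]
    · rw [Set.mem_singleton_iff] at hu
      subst hu
      exact ⟨0, fun x _ => rfl⟩
  · exact ⟨0, fun x _ => rfl⟩
  · rintro u v - - ⟨Nu, hNu⟩ ⟨Nv, hNv⟩
    refine ⟨Nu + Nv + (u.right.toAdd).natAbs, fun x hx => ?_⟩
    rw [SemidirectProduct.mul_left, Pi.mul_apply, shift_apply,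
      hNu x (by simp only [Int.abs_eq_natAbs] at hx ⊢; omega),
      hNv _ (by simp only [Int.abs_eq_natAbs] at hx ⊢; omega), one_mul]
  · rintro u - ⟨Nu, hNu⟩
    refine ⟨Nu + (u.right.toAdd).natAbs, fun x hx => ?_⟩
    rw [SemidirectProduct.inv_left, shift_apply, Pi.inv_apply,
      hNu _ (by simp only [toAdd_inv, Int.abs_eq_natAbs] at hx ⊢; omega),
      inv_one]

end PalProof

theorem pal_width_wreath_Z {G : Type*} [Group G] (A : Set G) (k : ℕ)
    (hgen : Subgroup.closure A = ⊤)
    (hA : ∀ g : G, IsProdOfPalindromes A k g) :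
    ∀ w ∈ Subgroup.closure
        ({w : WrZ G | ∃ a ∈ A, w = ⟨delta a, 1⟩} ∪
          {(⟨1, Multiplicative.ofAdd 1⟩ : WrZ G)}),
      IsProdOfPalindromes
        ({w : WrZ G | ∃ a ∈ A, w = ⟨delta a, 1⟩} ∪
          {(⟨1, Multiplicative.ofAdd 1⟩ : WrZ G)}) (2 + k) w := by
  intro w hw
  obtain ⟨N, hN⟩ := PalProof.bounded_support w hw
  have hw' : w = PalProof.mkW w.left w.right.toAdd := by
    refine SemidirectProduct.ext rfl rfl
  rw [hw']
  exact PalProof.construct hgen k hA w.left w.right.toAdd (N + 1) (by omega)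
    (fun x hx => hN x (by omega))
end

section
/- In the lamplighter group L = ℤ ≀ ℤ with standard generators a and t, every element of L is a product of 3 palindromes over {a, t}, and there exists an element of L that is not a product of 2 palindromes over {a, t}; that is, the palindromic width of ℤ ≀ ℤ with respect to {a, t} is exactly 3. -/
/-- The shift automorphism of `⨁_ℤ ℤ` (written multiplicatively): `(n • f) x = f (x - n)`. -/
noncomputable def lampShiftAut (n : ℤ) : Multiplicative (ℤ →₀ ℤ) ≃* Multiplicative (ℤ →₀ ℤ) :=
  AddEquiv.toMultiplicative (Finsupp.domCongr (Equiv.addRight n))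

lemma lampShiftAut_apply (n : ℤ) (f : Multiplicative (ℤ →₀ ℤ)) (x : ℤ) :
    Multiplicative.toAdd (lampShiftAut n f) x = Multiplicative.toAdd f (x - n) := by
  simp [lampShiftAut, Finsupp.domCongr_apply, sub_eq_add_neg]

/-- `ℤ` acting on `⨁_ℤ ℤ` by shifts. -/
noncomputable def lampShift : Multiplicative ℤ →* MulAut (Multiplicative (ℤ →₀ ℤ)) where
  toFun n := lampShiftAut n.toAdd
  map_one' := by
    refine MulEquiv.ext fun f => ?_
    apply (Multiplicative.toAdd).injective
    refine Finsupp.ext fun x => ?_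
    rw [MulAut.one_apply, lampShiftAut_apply]
    norm_num
  map_mul' m n := by
    refine MulEquiv.ext fun f => ?_
    apply (Multiplicative.toAdd).injective
    refine Finsupp.ext fun x => ?_
    rw [MulAut.mul_apply, lampShiftAut_apply, lampShiftAut_apply, lampShiftAut_apply,
      toAdd_mul]
    ring_nf

/-- The lamplighter group `ℤ ≀ ℤ = (⨁_ℤ ℤ) ⋊ ℤ`. -/
abbrev Lamplighter := Multiplicative (ℤ →₀ ℤ) ⋊[lampShift] Multiplicative ℤ

/-- The standard generator `a = (Δ₁, 0)` of `ℤ ≀ ℤ`. -/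
noncomputable def genA : Lamplighter := ⟨Multiplicative.ofAdd (Finsupp.single 0 1), 1⟩

/-- The standard generator `t = (0, 1)` of `ℤ ≀ ℤ`. -/
noncomputable def genT : Lamplighter := ⟨1, Multiplicative.ofAdd 1⟩

namespace LampAux

/-- lamp configuration value at `x` -/
def fval (g : Lamplighter) (x : ℤ) : ℤ := Multiplicative.toAdd g.left x
/-- t-exponent -/
def tex (g : Lamplighter) : ℤ := Multiplicative.toAdd g.right

noncomputable def el (f : ℤ →₀ ℤ) (n : ℤ) : Lamplighter :=
  ⟨Multiplicative.ofAdd f, Multiplicative.ofAdd n⟩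

lemma fval_el (f : ℤ →₀ ℤ) (n : ℤ) (x : ℤ) : fval (el f n) x = f x := rfl
lemma tex_el (f : ℤ →₀ ℤ) (n : ℤ) : tex (el f n) = n := rfl

lemma el_eq (g : Lamplighter) : el (Multiplicative.toAdd g.left) (Multiplicative.toAdd g.right) = g := rfl

lemma tex_mul (g h : Lamplighter) : tex (g * h) = tex g + tex h := by
  simp [tex, SemidirectProduct.mul_right]

lemma fval_mul (g h : Lamplighter) (x : ℤ) :
    fval (g * h) x = fval g x + fval h (x - tex g) := by
  show Multiplicative.toAdd ((g*h).left) x = _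
  rw [SemidirectProduct.mul_left, toAdd_mul, Finsupp.add_apply]
  congr 1

lemma ext_of {g h : Lamplighter} (hf : ∀ x, fval g x = fval h x) (ht : tex g = tex h) :
    g = h := by
  apply SemidirectProduct.ext
  · apply Multiplicative.toAdd.injective
    exact Finsupp.ext hf
  · exact Multiplicative.toAdd.injective ht

lemma fval_one (x : ℤ) : fval 1 x = 0 := rfl
lemma tex_one : tex (1 : Lamplighter) = 0 := rfl

lemma tex_inv (g : Lamplighter) : tex g⁻¹ = - tex g := by
  have := tex_mul g g⁻¹
  simp only [mul_inv_cancel, tex_one] at this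
  omega

lemma fval_inv (g : Lamplighter) (x : ℤ) : fval g⁻¹ x = - fval g (x + tex g) := by
  have := fval_mul g g⁻¹ (x + tex g)
  simp only [mul_inv_cancel, fval_one, add_sub_cancel_right] at this
  omega

lemma fval_genA (x : ℤ) : fval genA x = if 0 = x then 1 else 0 := Finsupp.single_apply
lemma tex_genA : tex genA = 0 := rfl
lemma fval_genT (x : ℤ) : fval genT x = 0 := rfl
lemma tex_genT : tex genT = 1 := rfl

end LampAux

namespace LampAux2
open LampAux

/-- reflection `x ↦ k - x` -/
def reflE (k : ℤ) : ℤ ≃ ℤ where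
  toFun x := k - x
  invFun x := k - x
  left_inv x := by ring
  right_inv x := by ring

/-- The reversal anti-automorphism. -/
noncomputable def sigma (g : Lamplighter) : Lamplighter :=
  el (Finsupp.equivMapDomain (reflE (tex g)) (Multiplicative.toAdd g.left)) (tex g)

lemma tex_sigma (g : Lamplighter) : tex (sigma g) = tex g := rfl

lemma fval_sigma (g : Lamplighter) (x : ℤ) : fval (sigma g) x = fval g (tex g - x) := by
  show (Finsupp.equivMapDomain (reflE (tex g)) (Multiplicative.toAdd g.left)) x = _
  rw [Finsupp.equivMapDomain_apply]
  rfl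

lemma sigma_mul (g h : Lamplighter) : sigma (g * h) = sigma h * sigma g := by
  apply ext_of
  · intro x
    rw [fval_sigma, fval_mul, fval_mul, fval_sigma, fval_sigma, tex_sigma, tex_mul]
    ring_nf
  · rw [tex_sigma, tex_mul, tex_mul, tex_sigma, tex_sigma, add_comm]

lemma sigma_one : sigma (1 : Lamplighter) = 1 := by
  apply ext_of
  · intro x; rw [fval_sigma]; rfl
  · rfl

lemma sigma_inv (g : Lamplighter) : sigma g⁻¹ = (sigma g)⁻¹ := by
  have h := sigma_mul g g⁻¹
  rw [mul_inv_cancel, sigma_one] at h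
  exact eq_inv_of_mul_eq_one_left h.symm

lemma sigma_genA : sigma genA = genA := by
  apply ext_of
  · intro x
    rw [fval_sigma, tex_genA, fval_genA, fval_genA]
    split_ifs <;> omega
  · rfl

lemma sigma_genT : sigma genT = genT := by
  apply ext_of
  · intro x; rw [fval_sigma, fval_genT, fval_genT]
  · rfl

/-- The letters: generators and their inverses. -/
def S : Set Lamplighter := {genA, genT, genA⁻¹, genT⁻¹}

lemma sigma_letter {s : Lamplighter} (hs : s ∈ S) : sigma s = s := by
  rcases hs with h | h | h | h
  · rw [h, sigma_genA]
  · rw [h, sigma_genT]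
  · rw [h, sigma_inv, sigma_genA]
  · rw [Set.mem_singleton_iff.mp h, sigma_inv, sigma_genT]

lemma reverse_prod {w : List Lamplighter} (hw : ∀ s ∈ w, s ∈ S) :
    w.reverse.prod = sigma w.prod := by
  induction w with
  | nil => simpa using sigma_one.symm
  | cons s w ih =>
    rw [List.reverse_cons, List.prod_append, List.prod_cons, List.prod_nil, mul_one,
      ih (fun x hx => hw x (List.mem_cons_of_mem s hx)), List.prod_cons, sigma_mul,
      sigma_letter (hw s (List.mem_cons_self))]

lemma mem_S_of_letter {s : Lamplighter} (hs : s ∈ ({genA, genT} : Set Lamplighter) ∨ s⁻¹ ∈ ({genA, genT} : Set Lamplighter)) : s ∈ S := by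
  rcases hs with (h | h) | (h | h)
  · exact Or.inl h
  · exact Or.inr (Or.inl h)
  · rw [← inv_inv s, h]; exact Or.inr (Or.inr (Or.inl rfl))
  · rw [← inv_inv s, Set.mem_singleton_iff.mp h]
    exact Or.inr (Or.inr (Or.inr rfl))

/-- A palindromic word evaluates to a `sigma`-fixed element. -/
lemma sigma_fixed_of_palindromic {w : List Lamplighter}
    (hw : IsPalindromicWord {genA, genT} w) : sigma w.prod = w.prod := by
  obtain ⟨h1, h2⟩ := hw
  rw [← reverse_prod (fun s hs => mem_S_of_letter (h1 s hs)), h2]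

lemma sym_of_fixed {g : Lamplighter} (hg : sigma g = g) (x : ℤ) :
    fval g (tex g - x) = fval g x := by
  conv_rhs => rw [← hg]
  rw [fval_sigma]

end LampAux2

namespace LampLower
open LampAux LampAux2

noncomputable def Fwit : Lamplighter :=
  el (Finsupp.single 0 1 + Finsupp.single 1 1 + Finsupp.single 3 1) 0

lemma fval_Fwit (y : ℤ) : fval Fwit y =
    (if 0 = y then 1 else 0) + (if 1 = y then 1 else 0) + (if 3 = y then 1 else 0) := by
  show ((Finsupp.single (0:ℤ) (1:ℤ) + Finsupp.single 1 1 + Finsupp.single 3 1 : ℤ →₀ ℤ)) y = _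
  rw [Finsupp.add_apply, Finsupp.add_apply, Finsupp.single_apply, Finsupp.single_apply,
    Finsupp.single_apply]

lemma tex_Fwit : tex Fwit = 0 := rfl

lemma lower : ¬ IsProdOfPalindromes {genA, genT} 2 Fwit := by
  rintro ⟨ws, hlen, hpal, hprod⟩
  obtain ⟨w1, w2, rfl⟩ := List.length_eq_two.mp hlen
  set p := w1.prod with hp
  set q := w2.prod with hq
  have hps : sigma p = p := sigma_fixed_of_palindromic (hpal w1 (by simp))
  have hqs : sigma q = q := sigma_fixed_of_palindromic (hpal w2 (by simp))
  have hprod' : p * q = Fwit := by simpa using hprod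
  set k := tex p with hk
  have htq : tex q = -k := by
    have := tex_mul p q
    rw [hprod', tex_Fwit] at this
    omega
  have hF : ∀ x, fval Fwit x = fval p x + fval q (x - k) := by
    intro x
    rw [← hprod', fval_mul]
  have hsymF : ∀ x, fval Fwit (k - x) = fval Fwit x := by
    intro x
    rw [hF, hF]
    have h1 : fval p (k - x) = fval p x := sym_of_fixed hps x
    have h2 : fval q (k - x - k) = fval q (x - k) := by
      have := sym_of_fixed hqs (x - k)
      rw [htq] at this
      rw [show k - x - k = -k - (x - k) by ring, this]
    rw [h1, h2]
  have hk0 : k = 0 ∨ k = 1 ∨ k = 3 := by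
    have h := hsymF 0
    rw [fval_Fwit, fval_Fwit] at h
    split_ifs at h <;> omega
  have hk1 : k = 1 ∨ k = 2 ∨ k = 4 := by
    have h := hsymF 1
    rw [fval_Fwit, fval_Fwit] at h
    split_ifs at h <;> omega
  have hk3 : k = 3 ∨ k = 4 ∨ k = 6 := by
    have h := hsymF 3
    rw [fval_Fwit, fval_Fwit] at h
    split_ifs at h <;> omega
  omega

end LampLower

namespace LampWords
open LampAux LampAux2

lemma fval_genT_pow (k : ℕ) (x : ℤ) : fval (genT ^ k) x = 0 := by
  induction k with
  | zero => exact fval_one x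
  | succ n ih => rw [pow_succ, fval_mul, ih, fval_genT, add_zero]

lemma tex_genT_pow (k : ℕ) : tex (genT ^ k) = k := by
  induction k with
  | zero => exact tex_one
  | succ n ih => rw [pow_succ, tex_mul, ih, tex_genT]; push_cast; ring

lemma fval_genT_inv_pow (k : ℕ) (x : ℤ) : fval (genT⁻¹ ^ k) x = 0 := by
  induction k with
  | zero => exact fval_one x
  | succ n ih =>
    rw [pow_succ, fval_mul, ih, fval_inv, fval_genT, neg_zero, add_zero]

lemma tex_genT_inv_pow (k : ℕ) : tex (genT⁻¹ ^ k) = -k := by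
  induction k with
  | zero => exact tex_one
  | succ n ih => rw [pow_succ, tex_mul, ih, tex_inv, tex_genT]; push_cast; ring

lemma tex_genA_pow (k : ℕ) : tex (genA ^ k) = 0 := by
  induction k with
  | zero => exact tex_one
  | succ n ih => rw [pow_succ, tex_mul, ih, tex_genA]; ring

lemma fval_genA_pow (k : ℕ) (x : ℤ) :
    fval (genA ^ k) x = if 0 = x then (k : ℤ) else 0 := by
  induction k with
  | zero => rw [pow_zero, fval_one]; split_ifs <;> simp
  | succ n ih =>
    rw [pow_succ, fval_mul, ih, tex_genA_pow, sub_zero, fval_genA]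
    push_cast
    split_ifs <;> ring

lemma tex_genA_inv_pow (k : ℕ) : tex (genA⁻¹ ^ k) = 0 := by
  induction k with
  | zero => exact tex_one
  | succ n ih => rw [pow_succ, tex_mul, ih, tex_inv, tex_genA]; ring

lemma fval_genA_inv_pow (k : ℕ) (x : ℤ) :
    fval (genA⁻¹ ^ k) x = if 0 = x then -(k : ℤ) else 0 := by
  induction k with
  | zero => rw [pow_zero, fval_one]; split_ifs <;> simp
  | succ n ih =>
    rw [pow_succ, fval_mul, ih, tex_genA_inv_pow, sub_zero, fval_inv, tex_genA,
      add_zero, fval_genA]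
    push_cast
    split_ifs <;> ring

noncomputable def tWord (m : ℤ) : List Lamplighter :=
  if 0 ≤ m then List.replicate m.toNat genT else List.replicate (-m).toNat genT⁻¹

noncomputable def aWord (c : ℤ) : List Lamplighter :=
  if 0 ≤ c then List.replicate c.toNat genA else List.replicate (-c).toNat genA⁻¹

lemma tWord_letters (m : ℤ) : ∀ s ∈ tWord m, s ∈ S := by
  intro s hs
  unfold tWord at hs
  split_ifs at hs <;> rw [List.eq_of_mem_replicate hs]
  · exact Or.inr (Or.inl rfl)
  · exact Or.inr (Or.inr (Or.inr rfl))

lemma aWord_letters (c : ℤ) : ∀ s ∈ aWord c, s ∈ S := by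
  intro s hs
  unfold aWord at hs
  split_ifs at hs <;> rw [List.eq_of_mem_replicate hs]
  · exact Or.inl rfl
  · exact Or.inr (Or.inr (Or.inl rfl))

lemma tWord_reverse (m : ℤ) : (tWord m).reverse = tWord m := by
  unfold tWord; split_ifs <;> exact List.reverse_replicate

lemma tWord_prod (m : ℤ) : (tWord m).prod = el 0 m := by
  unfold tWord
  split_ifs with h
  · rw [List.prod_replicate]
    apply ext_of
    · intro x; rw [fval_genT_pow, fval_el]; rfl
    · rw [tex_genT_pow, tex_el]; omega
  · rw [List.prod_replicate]
    apply ext_of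
    · intro x; rw [fval_genT_inv_pow, fval_el]; rfl
    · rw [tex_genT_inv_pow, tex_el]; omega

lemma aWord_prod (c : ℤ) : (aWord c).prod = el (Finsupp.single 0 c) 0 := by
  unfold aWord
  split_ifs with h
  · rw [List.prod_replicate]
    apply ext_of
    · intro x
      rw [fval_genA_pow, fval_el, Finsupp.single_apply]
      split_ifs <;> omega
    · rw [tex_genA_pow, tex_el]
  · rw [List.prod_replicate]
    apply ext_of
    · intro x
      rw [fval_genA_inv_pow, fval_el, Finsupp.single_apply]
      split_ifs <;> omega
    · rw [tex_genA_inv_pow, tex_el]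

lemma el_mul_zero (f1 f2 : ℤ →₀ ℤ) (n : ℤ) : el f1 0 * el f2 n = el (f1 + f2) n := by
  apply ext_of
  · intro x
    rw [fval_mul, tex_el, sub_zero, fval_el, fval_el, fval_el, Finsupp.add_apply]
  · rw [tex_mul, tex_el, tex_el, tex_el, zero_add]

lemma single_word (p c : ℤ) :
    (tWord p ++ aWord c ++ tWord (-p)).prod = el (Finsupp.single p c) 0 := by
  rw [List.prod_append, List.prod_append, tWord_prod, aWord_prod, tWord_prod]
  apply ext_of
  · intro x
    simp only [fval_mul, tex_mul, tex_el, fval_el, Finsupp.single_apply,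
      Finsupp.coe_zero, Pi.zero_apply]
    split_ifs <;> omega
  · simp only [tex_mul, tex_el]; ring

lemma exists_word (f : ℤ →₀ ℤ) (n : ℤ) :
    ∃ u : List Lamplighter, (∀ s ∈ u, s ∈ S) ∧ u.prod = el f n := by
  induction f using Finsupp.induction with
  | zero => exact ⟨tWord n, tWord_letters n, tWord_prod n⟩
  | single_add p c f _ _ ih =>
    obtain ⟨u, hu, hup⟩ := ih
    refine ⟨tWord p ++ aWord c ++ tWord (-p) ++ u, ?_, ?_⟩
    · intro s hs
      rcases List.mem_append.mp hs with hs | hs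
      · rcases List.mem_append.mp hs with hs | hs
        · rcases List.mem_append.mp hs with hs | hs
          · exact tWord_letters p s hs
          · exact aWord_letters c s hs
        · exact tWord_letters (-p) s hs
      · exact hu s hs
    · rw [List.prod_append, single_word, hup, el_mul_zero]

end LampWords

namespace LampDecomp
open LampAux

/-- even (symmetric about 0) -/
def Ev (f : ℤ →₀ ℤ) : Prop := ∀ x, f (-x) = f x
/-- symmetric about 1/2 -/
def Hs (f : ℤ →₀ ℤ) : Prop := ∀ x, f (1 - x) = f x

lemma decomp_single : ∀ (N : ℕ) (p c : ℤ), (if 1 ≤ p then 2*p-1 else -2*p).toNat ≤ N →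
    ∃ g1 g2 : ℤ →₀ ℤ, Ev g1 ∧ Hs g2 ∧ g1 + g2 = Finsupp.single p c := by
  intro N
  induction N with
  | zero =>
    intro p c hp
    have hp0 : p = 0 := by split_ifs at hp <;> omega
    subst hp0
    refine ⟨Finsupp.single 0 c, 0, ?_, ?_, by simp⟩
    · intro x
      rw [Finsupp.single_apply, Finsupp.single_apply]
      split_ifs <;> first | rfl | omega
    · intro x; rfl
  | succ N ih =>
    intro p c hp
    rcases lt_trichotomy p 0 with h | h | h
    · -- p ≤ -1 : reflect about 0, recurse on -p ≥ 1
      obtain ⟨g1, g2, h1, h2, h3⟩ := ih (-p) (-c) (by split_ifs at hp ⊢ <;> omega)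
      refine ⟨g1 + (Finsupp.single p c + Finsupp.single (-p) c), g2, ?_, h2, ?_⟩
      · intro x
        simp only [Finsupp.add_apply, Finsupp.single_apply]
        rw [h1 x]
        split_ifs <;> omega
      · ext x
        have h3x := DFunLike.congr_fun h3 x
        simp only [Finsupp.add_apply, Finsupp.single_apply] at h3x ⊢
        split_ifs at h3x ⊢ <;> omega
    · subst h
      refine ⟨Finsupp.single 0 c, 0, ?_, ?_, by simp⟩
      · intro x
        rw [Finsupp.single_apply, Finsupp.single_apply]
        split_ifs <;> first | rfl | omega
      · intro x; rfl
    · -- p ≥ 1 : reflect about 1/2, recurse on 1 - p ≤ 0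
      obtain ⟨g1, g2, h1, h2, h3⟩ := ih (1-p) (-c) (by split_ifs at hp ⊢ <;> omega)
      refine ⟨g1, g2 + (Finsupp.single p c + Finsupp.single (1-p) c), h1, ?_, ?_⟩
      · intro x
        simp only [Finsupp.add_apply, Finsupp.single_apply]
        rw [h2 x]
        split_ifs <;> omega
      · ext x
        have h3x := DFunLike.congr_fun h3 x
        simp only [Finsupp.add_apply, Finsupp.single_apply] at h3x ⊢
        split_ifs at h3x ⊢ <;> omega

lemma decomp (f : ℤ →₀ ℤ) : ∃ g1 g2 : ℤ →₀ ℤ, Ev g1 ∧ Hs g2 ∧ g1 + g2 = f := by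
  induction f using Finsupp.induction with
  | zero => exact ⟨0, 0, fun x => rfl, fun x => rfl, by simp⟩
  | single_add p c f _ _ ih =>
    obtain ⟨g1, g2, h1, h2, h3⟩ := ih
    obtain ⟨s1, s2, hs1, hs2, hs3⟩ := decomp_single _ p c le_rfl
    refine ⟨g1 + s1, g2 + s2, ?_, ?_, ?_⟩
    · intro x
      simp only [Finsupp.add_apply, h1 x, hs1 x]
    · intro x
      simp only [Finsupp.add_apply, h2 x, hs2 x]
    · rw [show g1 + s1 + (g2 + s2) = (s1 + s2) + (g1 + g2) by abel, h3, hs3]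

end LampDecomp

namespace LampUpper
open LampAux LampAux2 LampWords LampDecomp

lemma letter_of_S {s : Lamplighter} (hs : s ∈ S) :
    s ∈ ({genA, genT} : Set Lamplighter) ∨ s⁻¹ ∈ ({genA, genT} : Set Lamplighter) := by
  rcases hs with h | h | h | h
  · exact Or.inl (Or.inl h)
  · exact Or.inl (Or.inr h)
  · right; rw [h, inv_inv]; exact Or.inl rfl
  · right; rw [Set.mem_singleton_iff.mp h, inv_inv]; exact Or.inr rfl

lemma pal_of (u m : List Lamplighter) (hu : ∀ s ∈ u, s ∈ S) (hm : ∀ s ∈ m, s ∈ S)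
    (hmr : m.reverse = m) : IsPalindromicWord {genA, genT} (u ++ m ++ u.reverse) := by
  constructor
  · intro s hs
    rcases List.mem_append.mp hs with hs | hs
    · rcases List.mem_append.mp hs with hs | hs
      · exact letter_of_S (hu s hs)
      · exact letter_of_S (hm s hs)
    · exact letter_of_S (hu s (List.mem_reverse.mp hs))
  · rw [List.reverse_append, List.reverse_append, List.reverse_reverse, hmr,
      List.append_assoc]

lemma pal_tWord (m : ℤ) : IsPalindromicWord {genA, genT} (tWord m) :=
  ⟨fun s hs => letter_of_S (tWord_letters m s hs), tWord_reverse m⟩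

lemma upper (g : Lamplighter) : IsProdOfPalindromes {genA, genT} 3 g := by
  set f := Multiplicative.toAdd g.left with hfd
  set n := Multiplicative.toAdd g.right with hnd
  have hg : el f n = g := el_eq g
  obtain ⟨g1, g2, hEv, hHs, hsum⟩ := decomp f
  classical
  set q1 : ℤ →₀ ℤ := Finsupp.filter (fun x => 0 < x) g1 + Finsupp.single 0 (g1 0 / 2)
    with hq1d
  set q2 : ℤ →₀ ℤ := Finsupp.filter (fun x => 1 ≤ x) g2 with hq2d
  have hq1 : ∀ y, q1 y = (if 0 < y then g1 y else 0) + (if 0 = y then g1 0 / 2 else 0) := by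
    intro y
    rw [hq1d, Finsupp.add_apply, Finsupp.filter_apply, Finsupp.single_apply]
  have hq2 : ∀ y, q2 y = if 1 ≤ y then g2 y else 0 := by
    intro y
    rw [hq2d, Finsupp.filter_apply]
  obtain ⟨u1, hu1, hu1p⟩ := exists_word q1 0
  obtain ⟨u2, hu2, hu2p⟩ := exists_word q2 0
  set m1 : List Lamplighter := if g1 0 % 2 = 0 then [] else [genA] with hm1d
  have hm1 : (∀ s ∈ m1, s ∈ S) ∧ m1.reverse = m1 ∧ tex m1.prod = 0 ∧
      ∀ y, fval m1.prod y = if 0 = y then g1 0 % 2 else 0 := by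
    by_cases hpar : g1 0 % 2 = 0
    · rw [hm1d, if_pos hpar]
      refine ⟨by simp, rfl, tex_one, ?_⟩
      intro y
      rw [List.prod_nil, fval_one, hpar]
      split_ifs <;> rfl
    · have hpar1 : g1 0 % 2 = 1 := by omega
      rw [hm1d, if_neg hpar]
      refine ⟨?_, rfl, ?_, ?_⟩
      · intro s hs
        rw [List.mem_singleton.mp hs]
        exact Or.inl rfl
      · show tex (genA * 1) = 0
        rw [mul_one]; exact tex_genA
      · intro y
        show fval (genA * 1) y = _
        rw [mul_one, fval_genA, hpar1]
  obtain ⟨hm1S, hm1r, hm1t, hm1f⟩ := hm1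
  set w1 := u1 ++ m1 ++ u1.reverse with hw1d
  set w2 := u2 ++ [genT] ++ u2.reverse with hw2d
  set w3 := tWord (n - 1) with hw3d
  have hw1p : w1.prod = el g1 0 := by
    rw [hw1d, List.prod_append, List.prod_append, hu1p, reverse_prod hu1, hu1p]
    apply ext_of
    · intro x
      simp only [fval_mul, tex_mul, fval_sigma, tex_sigma, tex_el, fval_el, hm1f, hm1t,
        hq1]
      have hx := hEv x
      have hdiv := Int.mul_ediv_add_emod (g1 0) 2
      ring_nf
      ring_nf at hx
      rcases lt_trichotomy 0 x with h | h | h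
      · split_ifs <;> omega
      · subst h
        norm_num
        omega
      · split_ifs <;> omega
    · simp only [tex_mul, tex_sigma, tex_el, hm1t]; ring
  have hw2p : w2.prod = el g2 1 := by
    rw [hw2d, List.prod_append, List.prod_append, hu2p, reverse_prod hu2, hu2p]
    have hgt : ([genT] : List Lamplighter).prod = genT := by
      rw [List.prod_cons, List.prod_nil, mul_one]
    rw [hgt]
    apply ext_of
    · intro x
      simp only [fval_mul, tex_mul, fval_sigma, tex_sigma, tex_el, fval_el, fval_genT,
        tex_genT, hq2]
      have hx := hHs x
      ring_nf
      ring_nf at hx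
      split_ifs <;> omega
    · simp only [tex_mul, tex_sigma, tex_el, tex_genT]; ring
  refine ⟨[w1, w2, w3], rfl, ?_, ?_⟩
  · intro w hw
    rcases List.mem_cons.mp hw with h | hw
    · rw [h]; exact pal_of u1 m1 hu1 hm1S hm1r
    rcases List.mem_cons.mp hw with h | hw
    · rw [h]
      refine pal_of u2 [genT] hu2 ?_ rfl
      intro s hs
      rw [List.mem_singleton.mp hs]
      exact Or.inr (Or.inl rfl)
    rcases List.mem_cons.mp hw with h | hw
    · rw [h]; exact pal_tWord (n - 1)
    · exact absurd hw List.not_mem_nil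
  · show w1.prod * (w2.prod * (w3.prod * 1)) = g
    rw [mul_one, hw1p, hw2p, hw3d, tWord_prod, ← hg]
    apply ext_of
    · intro x
      rw [fval_mul, fval_mul, tex_el, tex_el, fval_el, fval_el, fval_el, fval_el]
      have := DFunLike.congr_fun hsum x
      rw [Finsupp.add_apply] at this
      have h0 : (0 : ℤ →₀ ℤ) (x - 0 - 1) = 0 := rfl
      rw [h0, sub_zero, add_zero, this]
    · rw [tex_mul, tex_mul, tex_el, tex_el, tex_el, tex_el]; ring

end LampUpper

theorem lamplighter_palindromic_width_eq_three :
    (∀ g : Lamplighter, IsProdOfPalindromes {genA, genT} 3 g) ∧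
    (∃ g : Lamplighter, ¬ IsProdOfPalindromes {genA, genT} 2 g) :=
  ⟨LampUpper.upper, LampLower.Fwit, LampLower.lower⟩
end

section
/- Let f : ℤ → ℤ have support exactly {0, 1} with f(0) ≠ f(1). Then there do not exist integers p, q with p + q = 3 together with finitely supported functions g, h : ℤ → ℤ satisfying g(x) = g(p − x) for all x ∈ ℤ, h(x) = h(q − x) for all x ∈ ℤ, and f(x) = g(x) + h(x − p) for all x ∈ ℤ. -/
/-- Telescoping sum for steps of 3. -/
private lemma tele_sum (g : ℤ → ℤ) (s : ℤ) (n : ℕ) :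
    ∑ k ∈ Finset.range n, (g (s + 3*k) - g (s + 3*k - 3)) =
      g (s + 3*n - 3) - g (s - 3) := by
  have h := Finset.sum_range_sub (fun k : ℕ => g (s + 3*k - 3)) n
  calc ∑ k ∈ Finset.range n, (g (s + 3*k) - g (s + 3*k - 3))
      = ∑ k ∈ Finset.range n, (g (s + 3*(k+1 : ℕ) - 3) - g (s + 3*k - 3)) := by
        apply Finset.sum_congr rfl
        intro k _
        congr 2
        push_cast
        ring
    _ = g (s + 3*n - 3) - g (s + 3*(0:ℕ) - 3) := h
    _ = g (s + 3*n - 3) - g (s - 3) := by norm_num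

/-- One special point version: if `g x - g (x-3) = F x`, `g` vanishes far out,
and `F` vanishes on the residue class of `a` except possibly at `a`, then `F a = 0`. -/
private lemma crux1 (g F : ℤ → ℤ) (key : ∀ x, g x - g (x - 3) = F x)
    (A B : ℤ) (hA : ∀ x, x < A → g x = 0) (hB : ∀ x, B < x → g x = 0)
    (a : ℤ) (hFa : ∀ x, x ≠ a → (3 ∣ x - a) → F x = 0) : F a = 0 := by
  set t : ℕ := A.natAbs + B.natAbs + a.natAbs + 10 with ht
  have htz : (t : ℤ) = A.natAbs + B.natAbs + a.natAbs + 10 := by exact_mod_cast rfl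
  set s : ℤ := a - 3 * t with hs
  set n : ℕ := 2 * t + 1 with hn
  have tel : ∑ k ∈ Finset.range n, F (s + 3*k) = g (s + 3*n - 3) - g (s - 3) := by
    rw [← tele_sum g s n]
    apply Finset.sum_congr rfl
    intro k _
    exact (key (s + 3*k)).symm
  have e1 : g (s + 3*n - 3) = 0 := by
    apply hB
    have : (n : ℤ) = 2 * t + 1 := by exact_mod_cast rfl
    omega
  have e2 : g (s - 3) = 0 := by
    apply hA
    omega
  have single : ∑ k ∈ Finset.range n, F (s + 3*k) = F (s + 3*t) := by
    apply Finset.sum_eq_single_of_mem t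
    · simp [hn]; omega
    · intro k _ hk
      apply hFa
      · intro hcon
        apply hk
        have hk3 : (3:ℤ) * k = 3 * t := by omega
        have : (k : ℤ) = t := by omega
        exact_mod_cast this
      · have : s + 3*(k:ℤ) - a = 3 * ((k:ℤ) - t) := by omega
        exact ⟨(k:ℤ) - t, this⟩
  have hsa : s + 3*(t:ℤ) = a := by omega
  rw [tel, e1, e2] at single
  rw [hsa] at single
  omega

/-- Two special point version. -/
private lemma crux2 (g F : ℤ → ℤ) (key : ∀ x, g x - g (x - 3) = F x)
    (A B : ℤ) (hA : ∀ x, x < A → g x = 0) (hB : ∀ x, B < x → g x = 0)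
    (a b : ℤ) (hab : a ≠ b) (hdvd : 3 ∣ b - a)
    (hFab : ∀ x, x ≠ a → x ≠ b → (3 ∣ x - a) → F x = 0) : F a + F b = 0 := by
  set t : ℕ := A.natAbs + B.natAbs + a.natAbs + b.natAbs + 10 with ht
  have htz : (t : ℤ) = A.natAbs + B.natAbs + a.natAbs + b.natAbs + 10 := by
    exact_mod_cast rfl
  set s : ℤ := a - 3 * t with hs
  set n : ℕ := 2 * t + 1 with hn
  have hnz : (n : ℤ) = 2 * t + 1 := by exact_mod_cast rfl
  have tel : ∑ k ∈ Finset.range n, F (s + 3*k) = g (s + 3*n - 3) - g (s - 3) := by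
    rw [← tele_sum g s n]
    apply Finset.sum_congr rfl
    intro k _
    exact (key (s + 3*k)).symm
  have e1 : g (s + 3*n - 3) = 0 := by apply hB; omega
  have e2 : g (s - 3) = 0 := by apply hA; omega
  obtain ⟨c, hc⟩ := hdvd
  -- index of b in the window
  have hkb_exists : ∃ kb : ℕ, (kb : ℤ) = t + c := by
    refine ⟨(t + c).toNat, ?_⟩
    omega
  obtain ⟨kb, hkb⟩ := hkb_exists
  have hka_mem : t ∈ Finset.range n := by simp [hn]; omega
  have hkb_mem : kb ∈ Finset.range n := by
    simp only [Finset.mem_range]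
    omega
  have hne' : t ≠ kb := by
    intro hcon
    apply hab
    have : (t : ℤ) = kb := by exact_mod_cast hcon
    omega
  have pair : ∑ k ∈ Finset.range n, F (s + 3*k) = F (s + 3*t) + F (s + 3*kb) := by
    apply Finset.sum_eq_add_of_mem t kb hka_mem hkb_mem hne'
    intro k _ hk
    apply hFab
    · intro hcon
      apply hk.1
      have : (k : ℤ) = t := by omega
      exact_mod_cast this
    · intro hcon
      apply hk.2
      have : (k : ℤ) = kb := by omega
      exact_mod_cast this
    · exact ⟨(k:ℤ) - t, by omega⟩
  have hsa : s + 3*(t:ℤ) = a := by omega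
  have hsb : s + 3*(kb:ℤ) = b := by omega
  rw [tel, e1, e2, hsa, hsb] at pair
  omega

theorem no_two_symmetric_decomposition (f : ℤ → ℤ)
    (hsupp : Function.support f = {0, 1}) (hne : f 0 ≠ f 1) :
    ¬ ∃ (p q : ℤ) (g h : ℤ → ℤ), p + q = 3 ∧
      (Function.support g).Finite ∧ (Function.support h).Finite ∧
      (∀ x : ℤ, g x = g (p - x)) ∧ (∀ x : ℤ, h x = h (q - x)) ∧
      (∀ x : ℤ, f x = g x + h (x - p)) := by
  rintro ⟨p, q, g, h, hpq, hgfin, hhfin, hg, hh, hf⟩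
  -- support facts
  have hfs : ∀ x : ℤ, f x ≠ 0 ↔ x = 0 ∨ x = 1 := by
    intro x
    have := Set.ext_iff.mp hsupp x
    simpa [Function.support] using this
  have hf0 : f 0 ≠ 0 := (hfs 0).mpr (Or.inl rfl)
  have hf1 : f 1 ≠ 0 := (hfs 1).mpr (Or.inr rfl)
  have fz : ∀ x : ℤ, x ≠ 0 → x ≠ 1 → f x = 0 := by
    intro x h0 h1
    by_contra hx
    rcases (hfs x).mp hx with h | h <;> [exact h0 h; exact h1 h]
  -- the key identity
  have key : ∀ x : ℤ, g x - g (x - 3) = f x - f (p + 3 - x) := by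
    intro x
    have e1 := hf x
    have e2 := hf (p + 3 - x)
    have e3 := hg (p + 3 - x)
    rw [show p - (p + 3 - x) = x - 3 by ring] at e3
    have e4 := hh (x - p)
    rw [show q - (x - p) = p + 3 - x - p by omega] at e4
    rw [e3, ← e4] at e2
    linarith
  -- bounds on the support of g
  obtain ⟨A, hA'⟩ := hgfin.bddBelow
  have hA : ∀ x, x < A → g x = 0 := by
    intro x hx
    by_contra hgx
    exact absurd (hA' (show x ∈ Function.support g from hgx)) (by omega)
  obtain ⟨B, hB'⟩ := hgfin.bddAbove
  have hB : ∀ x, B < x → g x = 0 := by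
    intro x hx
    by_contra hgx
    exact absurd (hB' (show x ∈ Function.support g from hgx)) (by omega)
  set F : ℤ → ℤ := fun x => f x - f (p + 3 - x) with hF
  have key' : ∀ x, g x - g (x - 3) = F x := key
  have hp3 : p % 3 = 0 ∨ p % 3 = 1 ∨ p % 3 = 2 := by omega
  rcases hp3 with hp | hp | hp
  · -- p ≡ 0 : residue class of 1, only special point is 1, sum = f 1 ≠ 0
    have hz : F 1 = 0 := by
      apply crux1 g F key' A B hA hB 1
      intro x hx hdvd
      obtain ⟨c, hc⟩ := hdvd
      have h1 : f x = 0 := fz x (by omega) hx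
      have h2 : f (p + 3 - x) = 0 := fz _ (by omega) (by omega)
      simp [hF, h1, h2]
    have h2 : f (p + 3 - 1) = 0 := fz _ (by omega) (by omega)
    simp only [hF] at hz
    rw [h2] at hz
    exact hf1 (by omega)
  · -- p ≡ 1
    by_cases hp2 : p = -2
    · -- single point 0, F 0 = f 0 - f 1
      have hz : F 0 = 0 := by
        apply crux1 g F key' A B hA hB 0
        intro x hx hdvd
        obtain ⟨c, hc⟩ := hdvd
        have h1 : f x = 0 := fz x hx (by omega)
        have h2 : f (p + 3 - x) = 0 := fz _ (by omega) (by omega)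
        simp [hF, h1, h2]
      simp only [hF] at hz
      rw [show p + 3 - 0 = 1 by omega] at hz
      exact hne (by omega)
    · -- two points 0 and p + 2
      have hz : F 0 + F (p + 2) = 0 := by
        apply crux2 g F key' A B hA hB 0 (p + 2) (by omega) ⟨(p+2)/3, by omega⟩
        intro x hx0 hxb hdvd
        obtain ⟨c, hc⟩ := hdvd
        have h1 : f x = 0 := fz x hx0 (by omega)
        have h2 : f (p + 3 - x) = 0 := fz _ (by omega) (by omega)
        simp [hF, h1, h2]
      have h2 : f (p + 3 - 0) = 0 := fz _ (by omega) (by omega)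
      have h3 : f (p + 2) = 0 := fz _ (by omega) (by omega)
      simp only [hF] at hz
      rw [h2, h3, show p + 3 - (p + 2) = 1 by ring] at hz
      exact hne (by omega)
  · -- p ≡ 2 : residue class of 0, only special point 0, sum = f 0 ≠ 0
    have hz : F 0 = 0 := by
      apply crux1 g F key' A B hA hB 0
      intro x hx hdvd
      obtain ⟨c, hc⟩ := hdvd
      have h1 : f x = 0 := fz x hx (by omega)
      have h2 : f (p + 3 - x) = 0 := fz _ (by omega) (by omega)
      simp [hF, h1, h2]
    have h2 : f (p + 3 - 0) = 0 := fz _ (by omega) (by omega)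
    simp only [hF] at hz
    rw [h2] at hz
    exact hf0 (by omega)
end

section
/- Let G be a group, A ⊆ G, and r ≥ 1. Suppose f : ℤ^r → Words(A) is finitely supported (f(x) is the empty word for all but finitely many x). Then there exist γ ∈ G and finitely supported functions f₀, f₁, …, f_r : ℤ^r → Words(A) such that: (i) for every x ∈ ℤ^r, eval(f(x)) = δ(x) · eval(f₀(x)) · eval(f₁(x)) ⋯ eval(f_r(x)) in G, where δ(0) = γ and δ(x) = 1 for x ≠ 0; (ii) f₀(x) equals the reverse of f₀(−x) for all x ∈ ℤ^r; and (iii) for each i = 1,…,r, f_i(x) equals the reverse of f_i(e_i − x) for all x ∈ ℤ^r, where e_i is the i-th standard basis vector of ℤ^r. -/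
namespace SymWordDecomp

variable {G : Type*} [Group G]

def wInv (w : List G) : List G := (w.map fun g => g⁻¹).reverse

@[simp] lemma wInv_nil : wInv ([] : List G) = [] := rfl

lemma wInv_prod (w : List G) : (wInv w).prod = w.prod⁻¹ := by
  rw [wInv, List.prod_reverse_noncomm]
  simp

lemma wInv_reverse (w : List G) : (wInv w).reverse = w.map fun g => g⁻¹ := by
  simp [wInv]

lemma mapinv_prod (w : List G) : (w.map fun g => g⁻¹).prod = w.reverse.prod⁻¹ := by
  rw [List.prod_reverse_noncomm]; simp

/-- the letter condition -/
def OK (A : Set G) (w : List G) : Prop := ∀ g ∈ w, g ∈ A ∨ g⁻¹ ∈ A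

lemma OK.nil (A : Set G) : OK A ([] : List G) := by intro g hg; simp at hg

lemma OK.append {A : Set G} {u v : List G} (hu : OK A u) (hv : OK A v) : OK A (u ++ v) := by
  intro g hg; rcases List.mem_append.mp hg with h | h
  · exact hu g h
  · exact hv g h

lemma OK.reverse {A : Set G} {u : List G} (hu : OK A u) : OK A u.reverse := by
  intro g hg; exact hu g (List.mem_reverse.mp hg)

lemma OK.wInv {A : Set G} {u : List G} (hu : OK A u) : OK A (wInv u) := by
  intro g hg
  rw [SymWordDecomp.wInv, List.mem_reverse, List.mem_map] at hg
  obtain ⟨a, ha, rfl⟩ := hg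
  rcases hu a ha with h | h
  · right; simpa using h
  · left; exact h

lemma prod_ofFn_eq {M : Type*} [Monoid M] : ∀ {n : ℕ} (g h : Fin n → M) (i : Fin n),
    (∀ j, j ≠ i → g j = h j) → (∀ j, i ≤ j → h j = 1) →
    (List.ofFn g).prod = (List.ofFn h).prod * g i := by
  intro n
  induction n with
  | zero => exact fun g h i _ _ => i.elim0
  | succ n ih =>
    intro g h i hne hge
    rcases Fin.eq_zero_or_eq_succ i with rfl | ⟨i', rfl⟩
    · have hall : ∀ j, h j = 1 := fun j => hge j (Fin.zero_le j)
      have htail : ∀ j : Fin n, g j.succ = 1 :=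
        fun j => (hne _ (Fin.succ_ne_zero j)).trans (hall _)
      rw [List.ofFn_succ, List.ofFn_succ, List.prod_cons, List.prod_cons]
      have h1 : (List.ofFn fun j : Fin n => g j.succ).prod = 1 := by
        apply List.prod_eq_one
        intro a ha
        rw [List.mem_ofFn] at ha
        obtain ⟨j, rfl⟩ := ha
        exact htail j
      have h2 : (List.ofFn fun j : Fin n => h j.succ).prod = 1 := by
        apply List.prod_eq_one
        intro a ha
        rw [List.mem_ofFn] at ha
        obtain ⟨j, rfl⟩ := ha
        exact hall _
      rw [h1, h2, hall 0]
      simp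
    · rw [List.ofFn_succ, List.ofFn_succ, List.prod_cons, List.prod_cons]
      have h0 : g 0 = h 0 := hne 0 (Fin.succ_ne_zero i').symm
      have := ih (fun j => g j.succ) (fun j => h j.succ) i'
        (fun j hj => hne _ (fun hcon => hj (Fin.succ_injective _ hcon)))
        (fun j hj => hge _ (Fin.succ_le_succ_iff.mpr hj))
      rw [this, h0, mul_assoc]

lemma prod_ofFn_one {M : Type*} [Monoid M] {n : ℕ} :
    (List.ofFn fun _ : Fin n => (1 : M)).prod = 1 := by
  simp

lemma box_finite (r M : ℕ) : {x : Fin r → ℤ | ∀ j, (x j).natAbs ≤ M}.Finite := by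
  apply Set.Finite.subset (Set.Finite.pi (fun _ : Fin r => Set.finite_Icc (-(M : ℤ)) M))
  intro x hx
  rw [Set.mem_pi]
  intro j _
  have := hx j
  simp only [Set.mem_Icc]
  omega

lemma exists_bound {r : ℕ} (f : (Fin r → ℤ) → List G) (hfin : {x | f x ≠ []}.Finite) :
    ∃ N : ℕ, ∀ x, f x ≠ [] → ∀ j, (x j).natAbs < N := by
  classical
  refine ⟨(hfin.toFinset.sup fun x => Finset.univ.sup fun j => (x j).natAbs) + 1, ?_⟩
  intro x hx j
  have hmem : x ∈ hfin.toFinset := by simpa using hx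
  have h1 : (Finset.univ.sup fun j => (x j).natAbs) ≤
      hfin.toFinset.sup fun x => Finset.univ.sup fun j => (x j).natAbs :=
    Finset.le_sup (f := fun x => Finset.univ.sup fun j => (x j).natAbs) hmem
  have h2 : (x j).natAbs ≤ Finset.univ.sup fun j => (x j).natAbs :=
    Finset.le_sup (f := fun j => (x j).natAbs) (Finset.mem_univ j)
  exact Nat.lt_succ_of_le (h2.trans h1)


section Stage

variable {r : ℕ}

def Hrec (r : ℕ) (f : (Fin r → ℤ) → List G) (i : Fin r) : ℕ → (Fin r → ℤ) → List G
  | 0, _ => []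
  | m + 1, x =>
      wInv (wInv (Hrec r f i m (x + Pi.single i 1)) ++ (f (-x)).reverse) ++ f x

def Hpos (f : (Fin r → ℤ) → List G) (i : Fin r) (N : ℕ) (x : Fin r → ℤ) : List G :=
  Hrec r f i ((N + 1 - x i).toNat) x

def Hfull (f : (Fin r → ℤ) → List G) (i : Fin r) (N : ℕ) (x : Fin r → ℤ) : List G :=
  if 1 ≤ x i then Hpos f i N x else (Hpos f i N (Pi.single i 1 - x)).reverse

def Gpos (f : (Fin r → ℤ) → List G) (i : Fin r) (N : ℕ) (x : Fin r → ℤ) : List G :=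
  wInv (Hpos f i N (x + Pi.single i 1)) ++ (f (-x)).reverse

def Gfull (f : (Fin r → ℤ) → List G) (i : Fin r) (N : ℕ) (x : Fin r → ℤ) : List G :=
  if 1 ≤ x i then Gpos f i N x
  else if x i ≤ -1 then (Gpos f i N (-x)).reverse else []

variable (f : (Fin r → ℤ) → List G) (i : Fin r) (N : ℕ)

lemma single_apply_self (x : Fin r → ℤ) : (x + Pi.single i 1 : Fin r → ℤ) i = x i + 1 := by
  simp

lemma Hpos_spec (hN : ∀ x, f x ≠ [] → ∀ j, (x j).natAbs < N)
    (x : Fin r → ℤ) (hx : 1 ≤ x i) :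
    Hpos f i N x = wInv (Gpos f i N x) ++ f x := by
  by_cases hle : x i ≤ N
  · have h1 : ((N : ℤ) + 1 - x i).toNat = ((N : ℤ) + 1 - (x i + 1)).toNat + 1 := by omega
    have h2 : (x + Pi.single i 1 : Fin r → ℤ) i = x i + 1 := single_apply_self i x
    rw [Hpos, h1, Hrec, Gpos, Hpos, h2]
  · have hfx : f x = [] := by
      by_contra h
      have := hN x h i
      omega
    have hfnx : f (-x) = [] := by
      by_contra h
      have := hN (-x) h i
      simp only [Pi.neg_apply] at this
      omega
    have h1 : ((N : ℤ) + 1 - x i).toNat = 0 := by omega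
    have h2 : ((N : ℤ) + 1 - (x + Pi.single i 1 : Fin r → ℤ) i).toNat = 0 := by
      rw [single_apply_self]; omega
    rw [Hpos, h1, Hrec, Gpos, Hpos, h2, Hrec, hfx, hfnx]
    simp

lemma Hrec_nil (m : ℕ) :
    ∀ (x : Fin r → ℤ),
      (∀ y : Fin r → ℤ, (∀ j, j ≠ i → y j = x j) → f y = [] ∧ f (-y) = []) →
      Hrec r f i m x = [] := by
  induction m with
  | zero => intro x _; rfl
  | succ m ihm =>
    intro x hv
    have hfx : f x = [] := (hv x (fun _ _ => rfl)).1
    have hfnx : f (-x) = [] := (hv x (fun _ _ => rfl)).2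
    have htail : Hrec r f i m (x + Pi.single i 1) = [] := by
      apply ihm
      intro y hy
      apply hv
      intro j hj
      have := hy j hj
      rw [this, Pi.add_apply, Pi.single_eq_of_ne hj]
      ring
    rw [Hrec, hfx, hfnx, htail]
    simp

lemma Hpos_nil (x : Fin r → ℤ)
    (hv : ∀ y : Fin r → ℤ, (∀ j, j ≠ i → y j = x j) → f y = [] ∧ f (-y) = []) :
    Hpos f i N x = [] :=
  Hrec_nil f i _ x hv

lemma Hfull_nil (x : Fin r → ℤ)
    (hv : ∀ y : Fin r → ℤ, (∀ j, j ≠ i → y j = x j) → f y = [] ∧ f (-y) = []) :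
    Hfull f i N x = [] := by
  rw [Hfull]
  split
  · exact Hpos_nil f i N x hv
  · rw [Hpos_nil f i N _ ?_]
    · simp
    · intro y hy
      have hy' : ∀ j, j ≠ i → (-y) j = x j := by
        intro j hj
        have := hy j hj
        rw [Pi.sub_apply, Pi.single_eq_of_ne hj] at this
        simp [this]
      have := hv (-y) hy'
      refine ⟨?_, this.1⟩
      have h2 := this.2
      rwa [neg_neg] at h2

lemma Hrec_OK {A : Set G} (hword : ∀ x, OK A (f x)) (m : ℕ) :
    ∀ x, OK A (Hrec r f i m x) := by
  induction m with
  | zero => intro x; exact OK.nil A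
  | succ m ihm =>
    intro x
    rw [Hrec]
    exact ((((ihm _).wInv).append ((hword _).reverse)).wInv).append (hword x)

lemma Hfull_OK {A : Set G} (hword : ∀ x, OK A (f x)) (x : Fin r → ℤ) :
    OK A (Hfull f i N x) := by
  rw [Hfull]
  split
  · exact Hrec_OK f i hword _ x
  · exact (Hrec_OK f i hword _ _).reverse

lemma Gfull_OK {A : Set G} (hword : ∀ x, OK A (f x)) (x : Fin r → ℤ) :
    OK A (Gfull f i N x) := by
  have hg : ∀ y, OK A (Gpos f i N y) := by
    intro y
    exact ((Hrec_OK f i hword _ _).wInv).append ((hword _).reverse)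
  rw [Gfull]
  split
  · exact hg x
  · split
    · exact (hg _).reverse
    · exact OK.nil A

end Stage


section Stage2

variable {r : ℕ} (f : (Fin r → ℤ) → List G) (i : Fin r) (N : ℕ)

lemma sub_sub_self' (x : Fin r → ℤ) :
    (Pi.single i 1 - (Pi.single i 1 - x) : Fin r → ℤ) = x := by
  abel

lemma Hfull_refl (x : Fin r → ℤ) :
    Hfull f i N x = (Hfull f i N (Pi.single i 1 - x)).reverse := by
  by_cases hx : 1 ≤ x i
  · have h2 : ¬ (1 ≤ (Pi.single i 1 - x : Fin r → ℤ) i) := by simp; omega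
    rw [Hfull, if_pos hx, Hfull, if_neg h2, sub_sub_self', List.reverse_reverse]
  · have h2 : 1 ≤ (Pi.single i 1 - x : Fin r → ℤ) i := by simp; omega
    rw [Hfull, if_neg hx, Hfull, if_pos h2]

lemma Hfull_pos_eq (x : Fin r → ℤ) (hx : 1 ≤ x i) : Hfull f i N x = Hpos f i N x :=
  if_pos hx

lemma Hfull_neg_eq (x : Fin r → ℤ) (hx : ¬ 1 ≤ x i) :
    Hfull f i N x = (Hpos f i N (Pi.single i 1 - x)).reverse :=
  if_neg hx

lemma Gfull_refl (x : Fin r → ℤ) :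
    Gfull f i N x = (Gfull f i N (-x)).reverse := by
  rcases lt_trichotomy (x i) 0 with h | h | h
  · have h1 : ¬ (1 ≤ x i) := by omega
    have h2 : x i ≤ -1 := by omega
    have h3 : 1 ≤ (-x : Fin r → ℤ) i := by simp; omega
    rw [Gfull, if_neg h1, if_pos h2, Gfull, if_pos h3]
  · have h1 : ¬ (1 ≤ x i) := by omega
    have h2 : ¬ (x i ≤ -1) := by omega
    have h3 : ¬ (1 ≤ (-x : Fin r → ℤ) i) := by simp; omega
    have h4 : ¬ ((-x : Fin r → ℤ) i ≤ -1) := by simp; omega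
    rw [Gfull, if_neg h1, if_neg h2, Gfull, if_neg h3, if_neg h4]
    rfl
  · have h3 : ¬ (1 ≤ (-x : Fin r → ℤ) i) := by simp; omega
    have h4 : (-x : Fin r → ℤ) i ≤ -1 := by simp; omega
    rw [Gfull, if_pos (by omega : 1 ≤ x i), Gfull, if_neg h3, if_pos h4,
      List.reverse_reverse, neg_neg]

lemma GH_prod (hN : ∀ x, f x ≠ [] → ∀ j, (x j).natAbs < N)
    (x : Fin r → ℤ) (hx : x i ≠ 0) :
    (f x).prod = (Gfull f i N x).prod * (Hfull f i N x).prod := by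
  rcases lt_or_gt_of_ne hx with h | h
  · -- x i ≤ -1
    have h1 : ¬ (1 ≤ x i) := by omega
    have h2 : x i ≤ -1 := by omega
    rw [Gfull, if_neg h1, if_pos h2, Hfull_neg_eq f i N x h1]
    have hgp : Gpos f i N (-x) = wInv (Hpos f i N (Pi.single i 1 - x)) ++ (f x).reverse := by
      rw [Gpos, neg_neg]
      congr 1
      congr 1
      abel
    rw [hgp]
    set w := Hpos f i N (Pi.single i 1 - x) with hw
    rw [List.reverse_append, List.reverse_reverse, wInv_reverse, List.prod_append,
      mapinv_prod]
    group
  · have h1 : 1 ≤ x i := by omega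
    rw [Gfull, if_pos h1, Hfull_pos_eq f i N x h1, Hpos_spec f i N hN x h1,
      List.prod_append, wInv_prod]
    group

end Stage2


section Stage3

variable {r : ℕ} (f : (Fin r → ℤ) → List G) (i : Fin r) (N : ℕ)

lemma Hpos_nil_big (x : Fin r → ℤ) (hx : (N : ℤ) + 1 ≤ x i) : Hpos f i N x = [] := by
  have h1 : ((N : ℤ) + 1 - x i).toNat = 0 := by omega
  rw [Hpos, h1, Hrec]

lemma nil_of_big (hN : ∀ x, f x ≠ [] → ∀ j, (x j).natAbs < N)
    (x : Fin r → ℤ) (j : Fin r) (hj : N ≤ (x j).natAbs) : f x = [] := by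
  by_contra h
  exact absurd (hN x h j) (by omega)

lemma Hfull_bound (hN : ∀ x, f x ≠ [] → ∀ j, (x j).natAbs < N)
    (x : Fin r → ℤ) (hx : Hfull f i N x ≠ []) (j : Fin r) : (x j).natAbs ≤ N + 1 := by
  by_contra hbig
  push_neg at hbig
  apply hx
  by_cases hj : j = i
  · subst hj
    by_cases h1 : 1 ≤ x j
    · rw [Hfull_pos_eq f j N x h1]
      exact Hpos_nil_big f j N x (by omega)
    · rw [Hfull_neg_eq f j N x h1]
      rw [Hpos_nil_big f j N _ (by simp; omega)]
      rfl
  · apply Hfull_nil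
    intro y hy
    have hyj : (y j).natAbs = (x j).natAbs := by rw [hy j hj]
    constructor
    · exact nil_of_big f N hN y j (by omega)
    · refine nil_of_big f N hN (-y) j ?_
      simp only [Pi.neg_apply, Int.natAbs_neg]
      omega

lemma Gfull_bound (hN : ∀ x, f x ≠ [] → ∀ j, (x j).natAbs < N)
    (x : Fin r → ℤ) (hx : Gfull f i N x ≠ []) (j : Fin r) : (x j).natAbs ≤ N + 2 := by
  have key : ∀ y : Fin r → ℤ, 1 ≤ y i → Gpos f i N y ≠ [] → (y j).natAbs ≤ N + 2 := by
    intro y hy hne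
    by_contra hbig
    push_neg at hbig
    apply hne
    have h1 : Hpos f i N (y + Pi.single i 1) = [] := by
      rw [← Hfull_pos_eq f i N (y + Pi.single i 1) (by simp; omega)]
      by_contra hcon
      have hb := Hfull_bound f i N hN _ hcon j
      by_cases hj : j = i
      · subst hj
        simp only [Pi.add_apply, Pi.single_eq_same] at hb
        omega
      · rw [Pi.add_apply, Pi.single_eq_of_ne hj, add_zero] at hb
        omega
    have h2 : f (-y) = [] := by
      refine nil_of_big f N hN (-y) j ?_
      simp only [Pi.neg_apply, Int.natAbs_neg]
      omega
    rw [Gpos, h1, h2]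
    rfl
  rw [Gfull] at hx
  split at hx
  · exact key x (by assumption) hx
  · split at hx
    · have h3 : 1 ≤ (-x : Fin r → ℤ) i := by simp; omega
      have := key (-x) h3 (fun hcon => hx (by rw [hcon]; rfl))
      simpa using this
    · exact absurd rfl hx

end Stage3


section Stage4

variable {r : ℕ} (f : (Fin r → ℤ) → List G) (i : Fin r) (N : ℕ)

lemma hv_neg {x : Fin r → ℤ}
    (hv : ∀ y : Fin r → ℤ, (∀ j, j ≠ i → y j = x j) → f y = [] ∧ f (-y) = []) :
    ∀ y : Fin r → ℤ, (∀ j, j ≠ i → y j = -(x j)) → f y = [] ∧ f (-y) = [] := by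
  intro y hy
  have hy' : ∀ j, j ≠ i → (-y : Fin r → ℤ) j = x j := by
    intro j hj
    rw [Pi.neg_apply, hy j hj, neg_neg]
  have h := hv (-y) hy'
  refine ⟨?_, h.1⟩
  have h2 := h.2
  rwa [neg_neg] at h2

lemma Gpos_nil (x : Fin r → ℤ)
    (hv : ∀ y : Fin r → ℤ, (∀ j, j ≠ i → y j = x j) → f y = [] ∧ f (-y) = []) :
    Gpos f i N x = [] := by
  have h1 : Hpos f i N (x + Pi.single i 1) = [] := by
    apply Hpos_nil
    intro y hy
    apply hv
    intro j hj
    rw [hy j hj, Pi.add_apply, Pi.single_eq_of_ne hj, add_zero]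
  have h2 : f (-x) = [] := (hv x (fun _ _ => rfl)).2
  rw [Gpos, h1, h2]
  rfl

lemma Gfull_nil (x : Fin r → ℤ)
    (hv : ∀ y : Fin r → ℤ, (∀ j, j ≠ i → y j = x j) → f y = [] ∧ f (-y) = []) :
    Gfull f i N x = [] := by
  rw [Gfull]
  split
  · exact Gpos_nil f i N x hv
  · split
    · rw [Gpos_nil f i N (-x) ?_]
      · rfl
      · intro y hy
        apply hv_neg f i hv
        intro j hj
        rw [hy j hj, Pi.neg_apply]
    · rfl

lemma Hfull_nil' (x : Fin r → ℤ)
    (hv : ∀ y : Fin r → ℤ, (∀ j, j ≠ i → y j = x j) → f y = [] ∧ f (-y) = []) :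
    Hfull f i N x = [] := Hfull_nil f i N x hv

end Stage4


theorem main_aux (A : Set G) (r : ℕ) (k : ℕ) :
    ∀ f : (Fin r → ℤ) → List G,
      (∀ x, OK A (f x)) →
      {x | f x ≠ []}.Finite →
      (∀ x : Fin r → ℤ, ∀ j : Fin r, k ≤ (j : ℕ) → x j ≠ 0 → f x = []) →
      ∃ (γ : G) (f₀ : (Fin r → ℤ) → List G) (fs : Fin r → (Fin r → ℤ) → List G),
        {x | f₀ x ≠ []}.Finite ∧
        (∀ i, {x | fs i x ≠ []}.Finite) ∧
        (∀ x, OK A (f₀ x)) ∧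
        (∀ i x, OK A (fs i x)) ∧
        (∀ x, (f x).prod = (if x = 0 then γ else 1) * (f₀ x).prod *
          (List.ofFn fun i : Fin r => (fs i x).prod).prod) ∧
        (∀ x, f₀ x = (f₀ (-x)).reverse) ∧
        (∀ i x, fs i x = (fs i (Pi.single i 1 - x)).reverse) ∧
        (∀ x, ∀ j : Fin r, k ≤ (j : ℕ) → x j ≠ 0 → f₀ x = []) ∧
        (∀ j : Fin r, k ≤ (j : ℕ) → ∀ x, fs j x = []) ∧
        (∀ j j' : Fin r, (j : ℕ) < (j' : ℕ) → ∀ x, x j' ≠ 0 → fs j x = []) := by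
  induction k with
  | zero =>
    intro f hword hfin hsupp
    have hf0 : ∀ x : Fin r → ℤ, x ≠ 0 → f x = [] := by
      intro x hx
      obtain ⟨j, hj⟩ := Function.ne_iff.mp hx
      exact hsupp x j (Nat.zero_le _) (by simpa using hj)
    refine ⟨(f 0).prod, fun _ => [], fun _ _ => [], ?_, ?_, ?_, ?_, ?_, ?_, ?_, ?_, ?_, ?_⟩
    · apply Set.Finite.subset Set.finite_empty
      intro x hx
      simp at hx
    · intro _
      apply Set.Finite.subset Set.finite_empty
      intro x hx
      simp at hx
    · intro x
      exact OK.nil A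
    · intro _ x
      exact OK.nil A
    · intro x
      by_cases hx : x = 0
      · subst hx
        rw [if_pos rfl]
        simp
      · rw [if_neg hx, hf0 x hx]
        simp
    · intro x
      rfl
    · intro i x
      rfl
    · intro x j _ _
      rfl
    · intro j _ x
      rfl
    · intro j j' _ x _
      rfl
  | succ k ih =>
    intro f hword hfin hsupp
    by_cases hk : k < r
    case neg =>
      obtain ⟨γ, f₀, fs, c1, c2, c3, c4, c5, c6, c7, c8, c9, c10⟩ :=
        ih f hword hfin (fun x j hj hx => absurd j.isLt (by omega))
      exact ⟨γ, f₀, fs, c1, c2, c3, c4, c5, c6, c7,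
        fun x j hj hx => c8 x j (by omega) hx, fun j hj x => c9 j (by omega) x, c10⟩
    case pos =>
    classical
    set i : Fin r := ⟨k, hk⟩ with hi
    have hival : (i : ℕ) = k := rfl
    obtain ⟨N, hN⟩ := exists_bound f hfin
    set H : (Fin r → ℤ) → List G := Hfull f i N with hH
    set Gf : (Fin r → ℤ) → List G := Gfull f i N with hGf
    have hline : ∀ x : Fin r → ℤ, ∀ j : Fin r, k < (j : ℕ) → x j ≠ 0 →
        (∀ y : Fin r → ℤ, (∀ j', j' ≠ i → y j' = x j') → f y = [] ∧ f (-y) = []) := by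
      intro x j hj hxj y hy
      have hji : j ≠ i := by
        intro hcon
        rw [hcon, hival] at hj
        omega
      have h1 : y j = x j := hy j hji
      constructor
      · exact hsupp y j (by omega) (by rw [h1]; exact hxj)
      · exact hsupp (-y) j (by omega)
          (by rw [Pi.neg_apply, h1]; exact neg_ne_zero.mpr hxj)
    have hHnil : ∀ x : Fin r → ℤ, ∀ j : Fin r, k < (j : ℕ) → x j ≠ 0 → H x = [] :=
      fun x j hj hxj => Hfull_nil f i N x (hline x j hj hxj)
    have hGnil : ∀ x : Fin r → ℤ, ∀ j : Fin r, k < (j : ℕ) → x j ≠ 0 → Gf x = [] :=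
      fun x j hj hxj => Gfull_nil f i N x (hline x j hj hxj)
    have hHfin : {x | H x ≠ []}.Finite := by
      apply Set.Finite.subset (box_finite r (N + 1))
      intro x hx
      exact Hfull_bound f i N hN x hx
    have hGfin : {x | Gf x ≠ []}.Finite := by
      apply Set.Finite.subset (box_finite r (N + 2))
      intro x hx
      exact Gfull_bound f i N hN x hx
    set f' : (Fin r → ℤ) → List G :=
      fun x => if x i = 0 then f x ++ wInv (H x) else [] with hf'
    have hword' : ∀ x, OK A (f' x) := by
      intro x
      rw [hf']
      dsimp only
      split
      · exact (hword x).append (Hfull_OK f i N hword x).wInv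
      · exact OK.nil A
    have hfin' : {x | f' x ≠ []}.Finite := by
      apply Set.Finite.subset (hfin.union hHfin)
      intro x hx
      simp only [Set.mem_setOf_eq, hf'] at hx
      by_contra hcon
      simp only [Set.mem_union, Set.mem_setOf_eq, not_or, not_not] at hcon
      apply hx
      split
      · rw [hcon.1, hcon.2]
        rfl
      · rfl
    have hsupp' : ∀ x : Fin r → ℤ, ∀ j : Fin r, k ≤ (j : ℕ) → x j ≠ 0 → f' x = [] := by
      intro x j hj hxj
      rw [hf']
      dsimp only
      by_cases hji : j = i
      · rw [if_neg]
        rw [hji] at hxj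
        exact hxj
      · have hjk : k < (j : ℕ) := by
          rcases Nat.lt_or_ge k (j : ℕ) with h | h
          · exact h
          · exfalso
            apply hji
            apply Fin.ext
            rw [hival]
            omega
        rw [hsupp x j (by omega) hxj, hHnil x j hjk hxj]
        split <;> rfl
    obtain ⟨γ, f₀', fs', d1, d2, d3, d4, d5, d6, d7, d8, d9, d10⟩ :=
      ih f' hword' hfin' hsupp'
    refine ⟨γ, fun x => if x i = 0 then f₀' x else Gf x, Function.update fs' i H,
      ?_, ?_, ?_, ?_, ?_, ?_, ?_, ?_, ?_, ?_⟩
    · apply Set.Finite.subset (d1.union hGfin)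
      intro x hx
      simp only [Set.mem_setOf_eq] at hx
      simp only [Set.mem_union, Set.mem_setOf_eq]
      by_contra hcon
      simp only [not_or, not_not] at hcon
      apply hx
      split
      · exact hcon.1
      · exact hcon.2
    · intro j
      by_cases hji : j = i
      · subst hji
        rw [Function.update_self]
        exact hHfin
      · rw [Function.update_of_ne hji]
        exact d2 j
    · intro x
      dsimp only
      split
      · exact d3 x
      · exact Gfull_OK f i N hword x
    · intro j x
      by_cases hji : j = i
      · subst hji
        rw [Function.update_self]
        exact Hfull_OK f i N hword x
      · rw [Function.update_of_ne hji]
        exact d4 j x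
    · intro x
      have hupd_ne : ∀ j : Fin r, j ≠ i → Function.update fs' i H j = fs' j :=
        fun j hj => Function.update_of_ne hj _ _
      by_cases hx : x i = 0
      · have hofn : (List.ofFn fun j : Fin r => (Function.update fs' i H j x).prod).prod =
            (List.ofFn fun j : Fin r => (fs' j x).prod).prod * (H x).prod := by
          have := prod_ofFn_eq (fun j : Fin r => (Function.update fs' i H j x).prod)
            (fun j : Fin r => (fs' j x).prod) i
            (fun j hj => by rw [hupd_ne j hj])
            (fun j hj => by
              rw [d9 j (by rw [← hival]; exact hj) x]
              rfl)
          rw [this, Function.update_self]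
        have hfp : (f' x).prod = (f x).prod * (H x).prod⁻¹ := by
          rw [hf']
          dsimp only
          rw [if_pos hx, List.prod_append, wInv_prod]
        have e5 := d5 x
        rw [hfp] at e5
        have hfx : (f x).prod = ((if x = 0 then γ else 1) * (f₀' x).prod *
            (List.ofFn fun j : Fin r => (fs' j x).prod).prod) * (H x).prod := by
          rw [← e5]
          group
        rw [hfx, hofn]
        dsimp only
        rw [if_pos hx]
        group
      · have hx0 : x ≠ 0 := by
          intro hcon
          apply hx
          rw [hcon]
          rfl
        have hfs'nil : ∀ j : Fin r, j ≠ i → fs' j x = [] := by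
          intro j hj
          rcases Nat.lt_or_ge (j : ℕ) k with h | h
          · exact d10 j i (by rw [hival]; exact h) x hx
          · exact d9 j h x
        have hofn : (List.ofFn fun j : Fin r => (Function.update fs' i H j x).prod).prod =
            (List.ofFn fun _ : Fin r => (1 : G)).prod * (H x).prod := by
          have := prod_ofFn_eq (fun j : Fin r => (Function.update fs' i H j x).prod)
            (fun _ : Fin r => (1 : G)) i
            (fun j hj => by rw [hupd_ne j hj, hfs'nil j hj]; rfl)
            (fun _ _ => rfl)
          rw [this, Function.update_self]
        rw [hofn, prod_ofFn_one]
        dsimp only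
        rw [if_neg hx, if_neg hx0, GH_prod f i N hN x hx]
        group
        rfl
    · intro x
      have hnx : (-x : Fin r → ℤ) i = -(x i) := rfl
      dsimp only
      by_cases hx : x i = 0
      · rw [if_pos hx, if_pos (by rw [hnx, hx]; ring), d6 x]
      · rw [if_neg hx, if_neg (by rw [hnx]; exact neg_ne_zero.mpr hx)]
        exact Gfull_refl f i N x
    · intro j x
      by_cases hji : j = i
      · subst hji
        simp only [Function.update_self]
        exact Hfull_refl f i N x
      · simp only [Function.update_of_ne hji]
        exact d7 j x
    · intro x j hj hxj
      have hji : j ≠ i := by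
        intro hcon
        rw [hcon, hival] at hj
        omega
      dsimp only
      by_cases hx : x i = 0
      · rw [if_pos hx]
        exact d8 x j (by omega) hxj
      · rw [if_neg hx]
        exact hGnil x j (by omega) hxj
    · intro j hj x
      have hji : j ≠ i := by
        intro hcon
        rw [hcon, hival] at hj
        omega
      rw [Function.update_of_ne hji]
      exact d9 j (by omega) x
    · intro j j' hjj' x hxj'
      by_cases hji : j = i
      · subst hji
        rw [Function.update_self]
        exact hHnil x j' (by rw [← hival]; exact hjj') hxj'
      · rw [Function.update_of_ne hji]
        exact d10 j j' hjj' x hxj'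

end SymWordDecomp


theorem symmetric_word_decomposition {G : Type*} [Group G] (A : Set G)
    (r : ℕ) (hr : 1 ≤ r) (f : (Fin r → ℤ) → List G)
    (hword : ∀ x : Fin r → ℤ, ∀ g ∈ f x, g ∈ A ∨ g⁻¹ ∈ A)
    (hfin : {x : Fin r → ℤ | f x ≠ []}.Finite) :
    ∃ (γ : G) (f₀ : (Fin r → ℤ) → List G) (fs : Fin r → (Fin r → ℤ) → List G),
      {x : Fin r → ℤ | f₀ x ≠ []}.Finite ∧
      (∀ i, {x : Fin r → ℤ | fs i x ≠ []}.Finite) ∧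
      (∀ x : Fin r → ℤ, ∀ g ∈ f₀ x, g ∈ A ∨ g⁻¹ ∈ A) ∧
      (∀ i, ∀ x : Fin r → ℤ, ∀ g ∈ fs i x, g ∈ A ∨ g⁻¹ ∈ A) ∧
      (∀ x : Fin r → ℤ,
        (f x).prod =
          (if x = 0 then γ else 1) * (f₀ x).prod *
            (List.ofFn (fun i : Fin r => (fs i x).prod)).prod) ∧
      (∀ x : Fin r → ℤ, f₀ x = (f₀ (-x)).reverse) ∧
      (∀ i, ∀ x : Fin r → ℤ, fs i x = (fs i (Pi.single i 1 - x)).reverse) := by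
  obtain ⟨γ, f₀, fs, c1, c2, c3, c4, c5, c6, c7, _, _, _⟩ :=
    SymWordDecomp.main_aux A r r f (fun x => hword x) hfin
      (fun x j hj hx => absurd j.isLt (by omega))
  exact ⟨γ, f₀, fs, c1, c2, c3, c4, c5, c6, c7⟩
end

section
/- Let R be a ring, r ≥ 1, and p ∈ ℤ^r. Suppose f : ℤ^r → R is finitely supported and satisfies Σ_{x ∈ 2ℤ^r + v} f(x) = 0 for every v ∈ {0,1}^r (i.e., for each of the 2^r vectors v = ε₁e₁ + … + ε_r e_r with each ε_i ∈ {0,1}). Then f = g₀ + g₁ + … + g_r, where each g_i : ℤ^r → R is finitely supported, g₀(x) + g₀(2p − x) = 0 for all x ∈ ℤ^r, and for each i = 1,…,r, g_i(x) + g_i(2(p + e_i) − x) = 0 for all x ∈ ℤ^r, where e_i is the i-th standard basis vector of ℤ^r. -/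
open Function Finset

section Aux

variable {R : Type*} [Ring R] {r : ℕ}

private def D (a : Fin r → ℤ) (c : R) : (Fin r → ℤ) → R := fun x => if x = a then c else 0

private def Good (p : Fin r → ℤ) (f : (Fin r → ℤ) → R) : Prop :=
  ∃ (g₀ : (Fin r → ℤ) → R) (g : Fin r → (Fin r → ℤ) → R),
    (Function.support g₀).Finite ∧ (∀ i, (Function.support (g i)).Finite) ∧
    (∀ x, f x = g₀ x + ∑ i, g i x) ∧
    (∀ x, g₀ x + g₀ (2 • p - x) = 0) ∧
    (∀ i, ∀ x, g i x + g i (2 • (p + Pi.single i 1) - x) = 0)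

private lemma good_congr {p : Fin r → ℤ} {f f' : (Fin r → ℤ) → R}
    (h : ∀ x, f x = f' x) (hf : Good p f) : Good p f' := by
  obtain ⟨g₀, g, h1, h2, h3, h4, h5⟩ := hf
  exact ⟨g₀, g, h1, h2, fun x => (h x).symm.trans (h3 x), h4, h5⟩

private lemma good_zero (p : Fin r → ℤ) : Good p (fun _ => (0 : R)) :=
  ⟨0, 0, by simp, by simp, by simp, by simp, by simp⟩

private lemma Good.add {p : Fin r → ℤ} {f f' : (Fin r → ℤ) → R}
    (hf : Good p f) (hf' : Good p f') : Good p (fun x => f x + f' x) := by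
  obtain ⟨g₀, g, h1, h2, h3, h4, h5⟩ := hf
  obtain ⟨g₀', g', h1', h2', h3', h4', h5'⟩ := hf'
  refine ⟨fun x => g₀ x + g₀' x, fun i x => g i x + g' i x, ?_, ?_, ?_, ?_, ?_⟩
  · apply (h1.union h1').subset
    intro x hx
    rw [Function.mem_support] at hx
    by_contra hc
    simp only [Set.mem_union, Function.mem_support, not_or, not_not] at hc
    exact hx (by rw [hc.1, hc.2, add_zero])
  · intro i
    apply ((h2 i).union (h2' i)).subset
    intro x hx
    rw [Function.mem_support] at hx
    by_contra hc
    simp only [Set.mem_union, Function.mem_support, not_or, not_not] at hc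
    dsimp only at hx
    exact hx (by rw [hc.1, hc.2, add_zero])
  · intro x
    dsimp only
    rw [h3 x, h3' x, Finset.sum_add_distrib]
    abel
  · intro x
    dsimp only
    rw [add_add_add_comm, h4 x, h4' x, add_zero]
  · intro i x
    dsimp only
    rw [add_add_add_comm, h5 i x, h5' i x, add_zero]

private lemma Good.neg {p : Fin r → ℤ} {f : (Fin r → ℤ) → R}
    (hf : Good p f) : Good p (fun x => -f x) := by
  obtain ⟨g₀, g, h1, h2, h3, h4, h5⟩ := hf
  refine ⟨fun x => -g₀ x, fun i x => -g i x, ?_, ?_, ?_, ?_, ?_⟩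
  · apply h1.subset
    intro x hx
    rw [Function.mem_support] at hx ⊢
    intro hc; exact hx (by rw [hc, neg_zero])
  · intro i
    apply (h2 i).subset
    intro x hx
    rw [Function.mem_support] at hx ⊢
    dsimp only at hx
    intro hc; exact hx (by rw [hc, neg_zero])
  · intro x
    dsimp only
    rw [h3 x, Finset.sum_neg_distrib]
    abel
  · intro x
    dsimp only
    rw [← neg_add, h4 x, neg_zero]
  · intro i x
    dsimp only
    rw [← neg_add, h5 i x, neg_zero]

private lemma good_sum {p : Fin r → ℤ} {ι : Type*} (s : Finset ι) (F : ι → (Fin r → ℤ) → R)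
    (h : ∀ a ∈ s, Good p (F a)) : Good p (fun x => ∑ a ∈ s, F a x) := by
  classical
  induction s using Finset.induction_on with
  | empty => exact good_congr (by simp) (good_zero p)
  | insert j t hj ih =>
    refine good_congr (fun x => ?_) ((h j (Finset.mem_insert_self j t)).add
      (ih (fun a ha => h a (Finset.mem_insert_of_mem ha))))
    rw [Finset.sum_insert hj]

private lemma good_skew0 (p a : Fin r → ℤ) (c : R) :
    Good p (fun x => D a c x - D (2 • p - a) c x) := by
  classical
  refine ⟨fun x => D a c x - D (2 • p - a) c x, 0, ?_, ?_, ?_, ?_, ?_⟩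
  · apply Set.Finite.subset ((Set.finite_singleton (2 • p - a)).insert a)
    intro x hx
    rw [Function.mem_support] at hx
    by_contra hc
    simp only [Set.mem_insert_iff, Set.mem_singleton_iff, not_or] at hc
    exact hx (by simp only [D, if_neg hc.1, if_neg hc.2, sub_zero])
  · intro i; simp
  · intro x; simp
  · intro x
    have e1 : (2 • p - x = a) ↔ (x = 2 • p - a) := by
      constructor <;> (rintro rfl; rw [sub_sub_cancel])
    have e2 : (2 • p - x = 2 • p - a) ↔ (x = a) := by
      constructor <;> intro h
      · have := congrArg (fun y => 2 • p - y) h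
        simpa [sub_sub_cancel] using this
      · rw [h]
    simp only [D, e1, e2]
    abel
  · intro i x; simp

private lemma good_skewi (p : Fin r → ℤ) (i : Fin r) (a : Fin r → ℤ) (c : R) :
    Good p (fun x => D a c x - D (2 • (p + Pi.single i 1) - a) c x) := by
  classical
  refine ⟨0, Pi.single i (fun x => D a c x - D (2 • (p + Pi.single i 1) - a) c x),
    by simp, ?_, ?_, by simp, ?_⟩
  · intro j
    by_cases hj : j = i
    · subst hj
      rw [Pi.single_eq_same]
      apply Set.Finite.subset ((Set.finite_singleton (2 • (p + Pi.single j 1) - a)).insert a)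
      intro x hx
      rw [Function.mem_support] at hx
      by_contra hc
      simp only [Set.mem_insert_iff, Set.mem_singleton_iff, not_or] at hc
      exact hx (by simp only [D, if_neg hc.1, if_neg hc.2, sub_zero])
    · rw [Pi.single_eq_of_ne hj]; simp
  · intro x
    rw [Finset.sum_eq_single i (fun j _ hj => by rw [Pi.single_eq_of_ne hj]; rfl)
      (fun h => absurd (Finset.mem_univ i) h), Pi.single_eq_same, Pi.zero_apply, zero_add]
  · intro j x
    by_cases hj : j = i
    · subst hj
      rw [Pi.single_eq_same]
      have e1 : (2 • (p + Pi.single j 1) - x = a) ↔ (x = 2 • (p + Pi.single j 1) - a) := by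
        constructor <;> (rintro rfl; rw [sub_sub_cancel])
      have e2 : (2 • (p + Pi.single j 1) - x = 2 • (p + Pi.single j 1) - a) ↔ (x = a) := by
        constructor <;> intro h
        · have := congrArg (fun y => 2 • (p + Pi.single j 1) - y) h
          simpa [sub_sub_cancel] using this
        · rw [h]
      simp only [D, e1, e2]
      abel
    · rw [Pi.single_eq_of_ne hj]; simp

private lemma good_step (p a : Fin r → ℤ) (c : R) (i : Fin r) :
    Good p (fun x => D a c x - D (a + 2 • Pi.single i 1) c x) := by
  have h := (good_skew0 p a c).add
    ((good_skewi p i (a + 2 • Pi.single i 1) c).neg)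
  refine good_congr (fun x => ?_) h
  have key : 2 • (p + Pi.single i 1) - (a + 2 • Pi.single i 1) = 2 • p - a := by
    module
  rw [key]
  abel

private lemma good_line (p a : Fin r → ℤ) (c : R) (i : Fin r) (n : ℤ) :
    Good p (fun x => D a c x - D (a + n • (2 • Pi.single i 1)) c x) := by
  induction n using Int.induction_on with
  | zero => exact good_congr (fun x => by simp) (good_zero p)
  | succ n ih =>
    refine good_congr (fun x => ?_)
      (ih.add (good_step p (a + (n : ℤ) • (2 • Pi.single i 1)) c i))
    have key : a + ((n : ℤ) + 1) • (2 • Pi.single i 1)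
        = a + (n : ℤ) • (2 • Pi.single i 1) + 2 • Pi.single i 1 := by
      module
    rw [key]
    abel
  | pred n ih =>
    refine good_congr (fun x => ?_)
      (ih.add ((good_step p (a + (-(n : ℤ) - 1) • (2 • Pi.single i 1)) c i).neg))
    have key : a + (-(n : ℤ) - 1) • (2 • Pi.single i 1) + 2 • Pi.single i 1
        = a + (-(n : ℤ)) • (2 • Pi.single i 1) := by
      module
    rw [key]
    abel

private lemma good_pair (p a : Fin r → ℤ) (c : R) (k : Fin r → ℤ) :
    Good p (fun x => D a c x - D (a + 2 • k) c x) := by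
  classical
  suffices h : ∀ s : Finset (Fin r),
      Good p (fun x => D a c x - D (a + 2 • ∑ i ∈ s, Pi.single i (k i)) c x) by
    refine good_congr (fun x => ?_) (h Finset.univ)
    rw [Finset.univ_sum_single]
  intro s
  induction s using Finset.induction_on with
  | empty => exact good_congr (fun x => by simp) (good_zero p)
  | insert j t hj ih =>
    refine good_congr (fun x => ?_) (ih.add (good_line p
      (a + 2 • ∑ i ∈ t, Pi.single i (k i)) c j (k j)))
    have single_eq : Pi.single j (k j) = (k j) • (Pi.single j 1 : Fin r → ℤ) := by
      funext m
      by_cases hm : m = j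
      · subst hm; simp
      · simp [Pi.single_eq_of_ne hm]
    have key : a + 2 • ∑ i ∈ insert j t, Pi.single i (k i)
        = a + 2 • ∑ i ∈ t, Pi.single i (k i) + (k j) • (2 • (Pi.single j 1 : Fin r → ℤ)) := by
      rw [Finset.sum_insert hj, single_eq]
      module
    rw [key]
    abel

end Aux

theorem sum_of_skew_symmetric_integral_centres (R : Type*) [Ring R] (r : ℕ) (hr : 1 ≤ r)
    (p : Fin r → ℤ) (f : (Fin r → ℤ) → R)
    (hfin : (Function.support f).Finite)
    (hsum : ∀ v : Fin r → ℤ, (∀ i, v i = 0 ∨ v i = 1) →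
      ∑ᶠ x ∈ {x : Fin r → ℤ | ∃ y : Fin r → ℤ, x = v + 2 • y}, f x = 0) :
    ∃ (g₀ : (Fin r → ℤ) → R) (g : Fin r → (Fin r → ℤ) → R),
      (Function.support g₀).Finite ∧ (∀ i, (Function.support (g i)).Finite) ∧
      (∀ x, f x = g₀ x + ∑ i, g i x) ∧
      (∀ x, g₀ x + g₀ (2 • p - x) = 0) ∧
      (∀ i, ∀ x, g i x + g i (2 • (p + Pi.single i 1) - x) = 0) := by
  classical
  set s : Finset (Fin r → ℤ) := hfin.toFinset with hs
  set v : (Fin r → ℤ) → (Fin r → ℤ) := fun a j => a j % 2 with hv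
  have hgood : Good p (fun x => ∑ a ∈ s, (D a (f a) x - D (v a) (f a) x)) := by
    apply good_sum
    intro a _
    have hva : v a = a + 2 • (fun j => -(a j / 2)) := by
      funext j
      have := Int.mul_ediv_add_emod (a j) 2
      simp only [hv, Pi.add_apply, Pi.smul_apply, two_nsmul]
      omega
    refine good_congr (fun x => ?_) (good_pair p a (f a) (fun j => -(a j / 2)))
    rw [← hva]
  have hmain : ∀ x, (∑ a ∈ s, (D a (f a) x - D (v a) (f a) x)) = f x := by
    intro x
    have h1 : ∑ a ∈ s, D a (f a) x = f x := by
      simp only [D]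
      rw [Finset.sum_ite_eq]
      by_cases hxs : x ∈ s
      · simp [hxs]
      · have : f x = 0 := by
          by_contra hc
          exact hxs (by rw [hs, Set.Finite.mem_toFinset]; exact hc)
        simp [hxs, this]
    have h2 : ∑ a ∈ s, D (v a) (f a) x = 0 := by
      by_cases hx : ∃ a ∈ s, x = v a
      · obtain ⟨a₀, _, ha₀⟩ := hx
        have hx01 : ∀ j, x j = 0 ∨ x j = 1 := by
          intro j
          rw [ha₀]
          simp only [hv]
          omega
        have hSeq : {y : Fin r → ℤ | ∃ z : Fin r → ℤ, y = x + 2 • z}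
            = {y : Fin r → ℤ | v y = x} := by
          ext y
          simp only [Set.mem_setOf_eq]
          constructor
          · rintro ⟨z, rfl⟩
            funext j
            have hj := hx01 j
            simp only [hv, Pi.add_apply, Pi.smul_apply, two_nsmul]
            omega
          · intro h
            refine ⟨fun j => y j / 2, funext fun j => ?_⟩
            have hj := congrFun h j
            simp only [hv] at hj
            simp only [Pi.add_apply, Pi.smul_apply, two_nsmul]
            omega
        have hfin2 : ({y : Fin r → ℤ | v y = x} ∩ Function.support f).Finite :=
          hfin.subset Set.inter_subset_right
        have h0 : ∑ a ∈ hfin2.toFinset, f a = 0 := by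
          rw [← finsum_mem_eq_sum f hfin2, ← hSeq]
          exact hsum x hx01
        have hfilter : s.filter (fun a => x = v a) = hfin2.toFinset := by
          ext y
          simp only [Finset.mem_filter, Set.Finite.mem_toFinset, hs, Set.mem_inter_iff,
            Set.mem_setOf_eq, Function.mem_support]
          constructor
          · rintro ⟨hy1, hy2⟩; exact ⟨hy2.symm, hy1⟩
          · rintro ⟨hy1, hy2⟩; exact ⟨hy2, hy1.symm⟩
        calc ∑ a ∈ s, D (v a) (f a) x = ∑ a ∈ s.filter (fun a => x = v a), f a := by
              rw [Finset.sum_filter]; rfl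
          _ = 0 := by rw [hfilter]; exact h0
      · apply Finset.sum_eq_zero
        intro a ha
        have : x ≠ v a := fun hc => hx ⟨a, ha, hc⟩
        simp [D, this]
    rw [Finset.sum_sub_distrib, h1, h2, sub_zero]
  exact good_congr hmain hgood
end

section
/- Let G be a group generated by a finite set X and suppose G is metabelian, i.e., the commutator subgroup of G is abelian (equivalently, the second derived subgroup of G is trivial). Then there exists n ∈ ℕ such that every element of G is a product of n palindromes over X. -/
open scoped commutatorElement

namespace MetabelianPW

variable {G : Type*} [Group G] {X : Set G}

/-! ### Basic facts about products of palindromes -/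

theorem palWord_nil : IsPalindromicWord X ([] : List G) :=
  ⟨fun g hg => absurd hg List.not_mem_nil, rfl⟩

theorem pal_one (n : ℕ) : IsProdOfPalindromes X n (1 : G) := by
  refine ⟨List.replicate n [], by simp, fun w hw => ?_, by simp⟩
  rw [List.eq_of_mem_replicate hw]
  exact palWord_nil

theorem pal_mul {m n : ℕ} {a b : G} (ha : IsProdOfPalindromes X m a)
    (hb : IsProdOfPalindromes X n b) : IsProdOfPalindromes X (m + n) (a * b) := by
  obtain ⟨ws, hl, hw, hp⟩ := ha
  obtain ⟨vs, hl', hw', hp'⟩ := hb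
  refine ⟨ws ++ vs, by simp [hl, hl'], fun w hw'' => ?_, by simp [hp, hp']⟩
  rcases List.mem_append.1 hw'' with h | h
  exacts [hw w h, hw' w h]

theorem pal_mono {m n : ℕ} {a : G} (hmn : m ≤ n) (ha : IsProdOfPalindromes X m a) :
    IsProdOfPalindromes X n a := by
  have := pal_mul ha (pal_one (X := X) (n - m))
  rwa [mul_one, Nat.add_sub_cancel' hmn] at this

theorem pal_of_word {w : List G} (hw : IsPalindromicWord X w) :
    IsProdOfPalindromes X 1 w.prod :=
  ⟨[w], rfl, by simpa using hw, by simp⟩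

theorem palWord_inv {w : List G} (hw : IsPalindromicWord X w) :
    IsPalindromicWord X (w.map fun x => x⁻¹) := by
  constructor
  · intro g hg
    obtain ⟨y, hy, rfl⟩ := List.mem_map.1 hg
    rcases hw.1 y hy with h | h
    · exact Or.inr (by simpa using h)
    · exact Or.inl h
  · rw [← List.map_reverse, hw.2]

theorem palWord_inv_prod {w : List G} (hw : IsPalindromicWord X w) :
    (w.map fun x => x⁻¹).prod = w.prod⁻¹ := by
  rw [List.prod_inv_reverse, ← List.map_reverse, hw.2]

theorem pal_inv_aux : ∀ ws : List (List G), (∀ w ∈ ws, IsPalindromicWord X w) →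
    IsProdOfPalindromes X ws.length ((ws.map List.prod).prod)⁻¹ := by
  intro ws
  induction ws with
  | nil => intro _; simpa using pal_one 0
  | cons w ws ih =>
    intro h
    have h1 : IsProdOfPalindromes X 1 (w.prod)⁻¹ := by
      have := pal_of_word (palWord_inv (h w (List.mem_cons_self)))
      rwa [palWord_inv_prod (h w (List.mem_cons_self))] at this
    have h2 := ih (fun v hv => h v (List.mem_cons_of_mem _ hv))
    have := pal_mul h2 h1
    rw [List.map_cons, List.prod_cons, mul_inv_rev, List.length_cons]
    exact pal_mono (by omega) this

theorem pal_inv {n : ℕ} {a : G} (ha : IsProdOfPalindromes X n a) :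
    IsProdOfPalindromes X n a⁻¹ := by
  obtain ⟨ws, hl, hw, hp⟩ := ha
  have := pal_inv_aux ws hw
  rwa [hp, hl] at this

theorem pal_letter {x : G} (hx : x ∈ X ∨ x⁻¹ ∈ X) (n : ℕ) :
    IsProdOfPalindromes X 1 (x ^ n) := by
  have hword : IsPalindromicWord X (List.replicate n x) :=
    ⟨fun g hg => by rw [List.eq_of_mem_replicate hg]; exact hx, List.reverse_replicate⟩
  have := pal_of_word hword
  rwa [List.prod_replicate] at this

theorem pal_letter_zpow {x : G} (hx : x ∈ X ∨ x⁻¹ ∈ X) (n : ℤ) :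
    IsProdOfPalindromes X 1 (x ^ n) := by
  rcases le_or_gt 0 n with h | h
  · have := pal_letter hx n.toNat
    rwa [← zpow_natCast, Int.toNat_of_nonneg h] at this
  · have hx' : x⁻¹ ∈ X ∨ (x⁻¹)⁻¹ ∈ X := by
      rcases hx with h' | h'
      · exact Or.inr (by simpa using h')
      · exact Or.inl h'
    have := pal_letter hx' (-n).toNat
    have hm : (((-n).toNat : ℤ)) = -n := Int.toNat_of_nonneg (by omega)
    rwa [inv_pow, ← zpow_natCast, hm, zpow_neg, inv_inv] at this

theorem pal_list_prod {B : ℕ} : ∀ {l : List G}, (∀ e ∈ l, IsProdOfPalindromes X B e) →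
    IsProdOfPalindromes X (B * l.length) l.prod := by
  intro l
  induction l with
  | nil => intro _; simpa using pal_one 0
  | cons a l ih =>
    intro h
    have h1 := h a (List.mem_cons_self)
    have h2 := ih (fun e he => h e (List.mem_cons_of_mem _ he))
    have := pal_mul h1 h2
    rw [List.prod_cons, List.length_cons]
    exact pal_mono (le_of_eq (by ring)) this

/-! ### Words for group elements -/

theorem exists_word (hgen : Subgroup.closure X = ⊤) (g : G) :
    ∃ w : List G, (∀ y ∈ w, y ∈ X ∨ y⁻¹ ∈ X) ∧ w.prod = g := by
  have hg : g ∈ Subgroup.closure X := hgen ▸ Subgroup.mem_top g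
  have hg' : g ∈ Submonoid.closure (X ∪ X⁻¹) := by
    rw [← Subgroup.closure_toSubmonoid]
    exact hg
  obtain ⟨l, hl, hp⟩ := Submonoid.exists_list_of_mem_closure hg'
  refine ⟨l, fun y hy => ?_, hp⟩
  rcases hl y hy with h | h
  · exact Or.inl h
  · exact Or.inr (Set.mem_inv.mp h)

theorem reverse_defect (w : List G) : w.reverse.prod * w.prod⁻¹ ∈ commutator G := by
  have h : Abelianization.of (w.reverse.prod * w.prod⁻¹) = 1 := by
    rw [map_mul, map_inv, map_list_prod, map_list_prod, List.map_reverse, List.prod_reverse,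
      mul_inv_cancel]
  exact (QuotientGroup.eq_one_iff _).mp h

theorem conjL {h : G} (hh : h ∈ commutator G) (g : G) : g * h * g⁻¹ ∈ commutator G :=
  (Subgroup.commutator_normal ⊤ ⊤).conj_mem h hh g

theorem conjR {h : G} (hh : h ∈ commutator G) (g : G) : g⁻¹ * h * g ∈ commutator G := by
  simpa using conjL hh g⁻¹

theorem comm_mem_commutator (g₁ g₂ : G) : ⁅g₁, g₂⁆ ∈ commutator G :=
  Subgroup.commutator_mem_commutator (Subgroup.mem_top g₁) (Subgroup.mem_top g₂)

/-! ### The core palindrome lemma: `h * (x⁻¹ * h⁻¹ * x)` is a product of 4 palindromes -/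

theorem kel_pal (hgen : Subgroup.closure X = ⊤)
    (hmeta : ∀ a b : G, a ∈ commutator G → b ∈ commutator G → a * b = b * a)
    {x h : G} (hx : x ∈ X) (hh : h ∈ commutator G) :
    IsProdOfPalindromes X 4 (h * (x⁻¹ * h⁻¹ * x)) := by
  obtain ⟨u, hu, hup⟩ := exists_word hgen h
  set r := u.reverse.prod with hrdef
  have hrc : r * h⁻¹ ∈ commutator G := by
    have := reverse_defect u
    rwa [hup] at this
  have hrG : r ∈ commutator G := by
    have := mul_mem hrc hh
    simpa [mul_assoc] using this
  have hxhx : x * h * x⁻¹ ∈ commutator G := conjL hh x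
  have hc : r * (x * h * x⁻¹) = (x * h * x⁻¹) * r := hmeta _ _ hrG hxhx
  -- palindromic words
  have w2pal : IsPalindromicWord X (u.reverse ++ [x] ++ u) := by
    constructor
    · intro g hg
      rcases List.mem_append.1 hg with hg | hg
      · rcases List.mem_append.1 hg with hg | hg
        · exact hu g (List.mem_reverse.1 hg)
        · rw [List.mem_singleton.1 hg]; exact Or.inl hx
      · exact hu g hg
    · simp [List.reverse_append, List.append_assoc]
  have w1pal : IsPalindromicWord X ([x] ++ (u ++ u.reverse) ++ [x]) := by
    constructor
    · intro g hg
      rcases List.mem_append.1 hg with hg | hg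
      · rcases List.mem_append.1 hg with hg | hg
        · rw [List.mem_singleton.1 hg]; exact Or.inl hx
        · rcases List.mem_append.1 hg with hg | hg
          · exact hu g hg
          · exact hu g (List.mem_reverse.1 hg)
      · rw [List.mem_singleton.1 hg]; exact Or.inl hx
    · simp [List.reverse_append, List.append_assoc]
  have h2 : IsProdOfPalindromes X 1 (r * (x * h)) := by
    have := pal_of_word w2pal
    rwa [show (u.reverse ++ [x] ++ u).prod = r * (x * h) by
      simp [List.prod_append, hup, hrdef, mul_assoc]] at this
  have h1 : IsProdOfPalindromes X 1 (x * (h * (r * x))) := by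
    have := pal_of_word w1pal
    rwa [show ([x] ++ (u ++ u.reverse) ++ [x]).prod = x * (h * (r * x)) by
      simp [List.prod_append, hup, hrdef, mul_assoc]] at this
  have hxinv : IsProdOfPalindromes X 1 (x⁻¹) := by
    have := pal_letter_zpow (Or.inl hx) (-1)
    rwa [zpow_neg, zpow_one] at this
  have hxx : IsProdOfPalindromes X 1 (x * x) := by
    have := pal_letter (Or.inl hx) 2
    rwa [pow_two] at this
  have key : h * (x⁻¹ * h⁻¹ * x)
      = x⁻¹ * (r * (x * h)) * (x * (h * (r * x)))⁻¹ * (x * x) := by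
    have e1 : x⁻¹ * (r * (x * h)) * (x * (h * (r * x)))⁻¹ * (x * x)
        = x⁻¹ * (r * (x * h * x⁻¹) * r⁻¹ * h⁻¹) * x := by group
    rw [e1, hc]
    group
  rw [key]
  exact pal_mono (by omega) (pal_mul (pal_mul (pal_mul hxinv h2) (pal_inv h1)) hxx)

/-! ### The `Kel` elements and their closure properties -/

def Kel (x h : G) : G := h * (x⁻¹ * h⁻¹ * x)

def KelSet (X : Set G) : Set G := {a | ∃ x ∈ X, ∃ h ∈ commutator G, a = Kel x h}

theorem kel_mem_commutator {x h : G} (hh : h ∈ commutator G) : Kel x h ∈ commutator G :=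
  mul_mem hh (conjR (inv_mem hh) x)

theorem kel_one (x : G) : Kel x (1 : G) = 1 := by simp [Kel]

theorem kel_mul (hmeta : ∀ a b : G, a ∈ commutator G → b ∈ commutator G → a * b = b * a) (x : G) {h₁ h₂ : G} (hh₁ : h₁ ∈ commutator G) (hh₂ : h₂ ∈ commutator G) :
    Kel x h₁ * Kel x h₂ = Kel x (h₁ * h₂) := by
  have c1 : (x⁻¹ * h₁⁻¹ * x) * h₂ = h₂ * (x⁻¹ * h₁⁻¹ * x) :=
    hmeta _ _ (conjR (inv_mem hh₁) x) hh₂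
  have c2 : h₁⁻¹ * h₂⁻¹ = h₂⁻¹ * h₁⁻¹ := hmeta _ _ (inv_mem hh₁) (inv_mem hh₂)
  calc Kel x h₁ * Kel x h₂
      = h₁ * ((x⁻¹ * h₁⁻¹ * x) * h₂) * (x⁻¹ * h₂⁻¹ * x) := by unfold Kel; group
    _ = h₁ * (h₂ * (x⁻¹ * h₁⁻¹ * x)) * (x⁻¹ * h₂⁻¹ * x) := by rw [c1]
    _ = (h₁ * h₂) * (x⁻¹ * (h₁⁻¹ * h₂⁻¹) * x) := by group
    _ = (h₁ * h₂) * (x⁻¹ * (h₂⁻¹ * h₁⁻¹) * x) := by rw [c2]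
    _ = Kel x (h₁ * h₂) := by unfold Kel; group

theorem kel_inv (hmeta : ∀ a b : G, a ∈ commutator G → b ∈ commutator G → a * b = b * a) (x : G) {h : G} (hh : h ∈ commutator G) : (Kel x h)⁻¹ = Kel x h⁻¹ := by
  have c : h⁻¹ * (x⁻¹ * h * x) = (x⁻¹ * h * x) * h⁻¹ := hmeta _ _ (inv_mem hh) (conjR hh x)
  calc (Kel x h)⁻¹ = (x⁻¹ * h * x) * h⁻¹ := by unfold Kel; group
    _ = h⁻¹ * (x⁻¹ * h * x) := c.symm
    _ = Kel x h⁻¹ := by unfold Kel; group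

theorem kel_conj (hmeta : ∀ a b : G, a ∈ commutator G → b ∈ commutator G → a * b = b * a) (x g : G) {h : G} (hh : h ∈ commutator G) :
    g * Kel x h * g⁻¹ = Kel x (g * h * g⁻¹) := by
  have hcomm : x * g⁻¹ * x⁻¹ * g ∈ commutator G := by
    have := comm_mem_commutator x g⁻¹
    rwa [commutatorElement_def, inv_inv] at this
  have hcm : h⁻¹ * (x * g⁻¹ * x⁻¹ * g) = (x * g⁻¹ * x⁻¹ * g) * h⁻¹ :=
    hmeta _ _ (inv_mem hh) hcomm
  calc g * Kel x h * g⁻¹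
      = (g * h) * x⁻¹ * (h⁻¹ * (x * g⁻¹ * x⁻¹ * g)) * g⁻¹ * x := by unfold Kel; group
    _ = (g * h) * x⁻¹ * ((x * g⁻¹ * x⁻¹ * g) * h⁻¹) * g⁻¹ * x := by rw [hcm]
    _ = Kel x (g * h * g⁻¹) := by unfold Kel; group

/-! ### Elements of the form `a⁻¹ g⁻¹ a g` with `a ∈ commutator G` lie in the normal
closure of `KelSet X` -/

theorem conjdiff_mem_aux (hmeta : ∀ a b : G, a ∈ commutator G → b ∈ commutator G → a * b = b * a) :
    ∀ w : List G, (∀ y ∈ w, y ∈ X ∨ y⁻¹ ∈ X) → ∀ {a : G}, a ∈ commutator G →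
      a⁻¹ * w.prod⁻¹ * a * w.prod ∈ Subgroup.normalClosure (KelSet X) := by
  intro w
  induction w with
  | nil => intro _ a _; simpa using one_mem _
  | cons z w ih =>
    intro hw a ha
    have hz := hw z (List.mem_cons_self)
    have hw' := fun y hy => hw y (List.mem_cons_of_mem _ hy)
    have key : a⁻¹ * (z * w.prod)⁻¹ * a * (z * w.prod)
        = (a⁻¹ * w.prod⁻¹ * a * w.prod) * (w.prod⁻¹ * (a⁻¹ * z⁻¹ * a * z) * w.prod) := by
      group
    rw [List.prod_cons, key]
    refine mul_mem (ih hw' ha) ?_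
    have hzmem : a⁻¹ * z⁻¹ * a * z ∈ Subgroup.normalClosure (KelSet X) := by
      rcases hz with hz | hz
      · exact Subgroup.subset_normalClosure ⟨z, hz, a⁻¹, inv_mem ha, by unfold Kel; group⟩
      · have hcd : a⁻¹ * (z⁻¹ * a * z) = (z⁻¹ * a * z) * a⁻¹ :=
          hmeta _ _ (inv_mem ha) (conjR ha z)
        have hgen' : Kel z⁻¹ a ∈ Subgroup.normalClosure (KelSet X) :=
          Subgroup.subset_normalClosure ⟨z⁻¹, hz, a, ha, rfl⟩
        have hconj : z⁻¹ * (Kel z⁻¹ a) * z ∈ Subgroup.normalClosure (KelSet X) := by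
          have := Subgroup.normalClosure_normal.conj_mem _ hgen' z⁻¹
          simpa using this
        have eqn : a⁻¹ * z⁻¹ * a * z = z⁻¹ * (Kel z⁻¹ a) * z := by
          rw [show a⁻¹ * z⁻¹ * a * z = a⁻¹ * (z⁻¹ * a * z) by group, hcd]
          unfold Kel; group
        rw [eqn]
        exact hconj
    have := Subgroup.normalClosure_normal.conj_mem _ hzmem w.prod⁻¹
    simpa using this

theorem conjdiff_mem (hmeta : ∀ a b : G, a ∈ commutator G → b ∈ commutator G → a * b = b * a) (hgen : Subgroup.closure X = ⊤) {a : G} (ha : a ∈ commutator G) (g : G) :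
    a⁻¹ * g⁻¹ * a * g ∈ Subgroup.normalClosure (KelSet X) := by
  obtain ⟨w, hw, rfl⟩ := exists_word hgen g
  exact conjdiff_mem_aux hmeta w hw ha

/-! ### The set of bounded products of `Kel` elements -/

def TSet (L : List G) : Set G :=
  {g | ∃ hs : List G, hs.length = L.length ∧ (∀ h ∈ hs, h ∈ commutator G) ∧
      g = (List.zipWith Kel L hs).prod}

theorem zip_ones : ∀ L : List G, (List.zipWith Kel L (List.replicate L.length 1)).prod = 1 := by
  intro L
  induction L with
  | nil => simp
  | cons x L ih => simpa [List.replicate_succ, kel_one] using ih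

theorem t_one (L : List G) : (1 : G) ∈ TSet L := by
  refine ⟨List.replicate L.length 1, by simp, fun h hh => ?_, (zip_ones L).symm⟩
  rw [List.eq_of_mem_replicate hh]
  exact one_mem _

theorem zipprod_mem_commutator :
    ∀ (L hs : List G), (∀ h ∈ hs, h ∈ commutator G) →
      (List.zipWith Kel L hs).prod ∈ commutator G := by
  intro L
  induction L with
  | nil => intro hs _; simp
  | cons x L ih =>
    intro hs hmem
    cases hs with
    | nil => simp
    | cons h t =>
      rw [List.zipWith_cons_cons, List.prod_cons]
      exact mul_mem (kel_mem_commutator (hmem h (List.mem_cons_self)))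
        (ih t (fun h' hh' => hmem h' (List.mem_cons_of_mem _ hh')))

theorem t_mul (hmeta : ∀ a b : G, a ∈ commutator G → b ∈ commutator G → a * b = b * a) : ∀ {L : List G} {a b : G}, a ∈ TSet L → b ∈ TSet L → a * b ∈ TSet L := by
  intro L
  induction L with
  | nil =>
    rintro a b ⟨hs, hlen, -, rfl⟩ ⟨hs', hlen', -, rfl⟩
    simpa using t_one []
  | cons x L ih =>
    rintro a b ⟨hs, hlen, hmem, rfl⟩ ⟨hs', hlen', hmem', rfl⟩
    obtain ⟨h₁, t₁, rfl⟩ : ∃ h t, hs = h :: t := by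
      cases hs with
      | nil => simp at hlen
      | cons h t => exact ⟨h, t, rfl⟩
    obtain ⟨h₂, t₂, rfl⟩ : ∃ h t, hs' = h :: t := by
      cases hs' with
      | nil => simp at hlen'
      | cons h t => exact ⟨h, t, rfl⟩
    have hh₁ : h₁ ∈ commutator G := hmem _ (List.mem_cons_self)
    have hh₂ : h₂ ∈ commutator G := hmem' _ (List.mem_cons_self)
    have hmem₁ := fun h hh => hmem h (List.mem_cons_of_mem _ hh)
    have hmem₂ := fun h hh => hmem' h (List.mem_cons_of_mem _ hh)
    have hrec : (List.zipWith Kel L t₁).prod * (List.zipWith Kel L t₂).prod ∈ TSet L :=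
      ih ⟨t₁, by simpa using hlen, hmem₁, rfl⟩ ⟨t₂, by simpa using hlen', hmem₂, rfl⟩
    obtain ⟨t₃, hlen₃, hmem₃, hprod₃⟩ := hrec
    refine ⟨(h₁ * h₂) :: t₃, by simpa using hlen₃, fun h hh => ?_, ?_⟩
    · rcases List.mem_cons.1 hh with rfl | hh
      · exact mul_mem hh₁ hh₂
      · exact hmem₃ _ hh
    · rw [List.zipWith_cons_cons, List.prod_cons, List.zipWith_cons_cons, List.prod_cons,
        List.zipWith_cons_cons, List.prod_cons, ← kel_mul hmeta x hh₁ hh₂, ← hprod₃]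
      have hP₁ : (List.zipWith Kel L t₁).prod ∈ commutator G :=
        zipprod_mem_commutator L t₁ hmem₁
      have c : (List.zipWith Kel L t₁).prod * Kel x h₂ = Kel x h₂ * (List.zipWith Kel L t₁).prod :=
        hmeta _ _ hP₁ (kel_mem_commutator hh₂)
      calc Kel x h₁ * (List.zipWith Kel L t₁).prod * (Kel x h₂ * (List.zipWith Kel L t₂).prod)
          = Kel x h₁ * ((List.zipWith Kel L t₁).prod * Kel x h₂) *
            (List.zipWith Kel L t₂).prod := by group
        _ = Kel x h₁ * (Kel x h₂ * (List.zipWith Kel L t₁).prod) *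
            (List.zipWith Kel L t₂).prod := by rw [c]
        _ = Kel x h₁ * Kel x h₂ *
            ((List.zipWith Kel L t₁).prod * (List.zipWith Kel L t₂).prod) := by group

theorem t_inv (hmeta : ∀ a b : G, a ∈ commutator G → b ∈ commutator G → a * b = b * a) : ∀ {L : List G} {a : G}, a ∈ TSet L → a⁻¹ ∈ TSet L := by
  intro L
  induction L with
  | nil =>
    rintro a ⟨hs, hlen, -, rfl⟩
    simpa using t_one []
  | cons x L ih =>
    rintro a ⟨hs, hlen, hmem, rfl⟩
    obtain ⟨h₁, t₁, rfl⟩ : ∃ h t, hs = h :: t := by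
      cases hs with
      | nil => simp at hlen
      | cons h t => exact ⟨h, t, rfl⟩
    have hh₁ : h₁ ∈ commutator G := hmem _ (List.mem_cons_self)
    have hmem₁ := fun h hh => hmem h (List.mem_cons_of_mem _ hh)
    have hrec : ((List.zipWith Kel L t₁).prod)⁻¹ ∈ TSet L :=
      ih ⟨t₁, by simpa using hlen, hmem₁, rfl⟩
    obtain ⟨t₃, hlen₃, hmem₃, hprod₃⟩ := hrec
    refine ⟨h₁⁻¹ :: t₃, by simpa using hlen₃, fun h hh => ?_, ?_⟩
    · rcases List.mem_cons.1 hh with rfl | hh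
      · exact inv_mem hh₁
      · exact hmem₃ _ hh
    · rw [List.zipWith_cons_cons, List.prod_cons, List.zipWith_cons_cons, List.prod_cons,
        mul_inv_rev, ← hprod₃, kel_inv hmeta x hh₁]
      exact hmeta _ _ (inv_mem (zipprod_mem_commutator L t₁ hmem₁))
        (kel_mem_commutator (inv_mem hh₁))

theorem t_conj (hmeta : ∀ a b : G, a ∈ commutator G → b ∈ commutator G → a * b = b * a) : ∀ {L : List G} {a : G}, a ∈ TSet L → ∀ g : G, g * a * g⁻¹ ∈ TSet L := by
  intro L
  induction L with
  | nil =>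
    rintro a ⟨hs, hlen, -, rfl⟩ g
    simpa using t_one []
  | cons x L ih =>
    rintro a ⟨hs, hlen, hmem, rfl⟩ g
    obtain ⟨h₁, t₁, rfl⟩ : ∃ h t, hs = h :: t := by
      cases hs with
      | nil => simp at hlen
      | cons h t => exact ⟨h, t, rfl⟩
    have hh₁ : h₁ ∈ commutator G := hmem _ (List.mem_cons_self)
    have hmem₁ := fun h hh => hmem h (List.mem_cons_of_mem _ hh)
    have hrec : g * (List.zipWith Kel L t₁).prod * g⁻¹ ∈ TSet L :=
      ih ⟨t₁, by simpa using hlen, hmem₁, rfl⟩ g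
    obtain ⟨t₃, hlen₃, hmem₃, hprod₃⟩ := hrec
    refine ⟨(g * h₁ * g⁻¹) :: t₃, by simpa using hlen₃, fun h hh => ?_, ?_⟩
    · rcases List.mem_cons.1 hh with rfl | hh
      · exact conjL hh₁ g
      · exact hmem₃ _ hh
    · rw [List.zipWith_cons_cons, List.prod_cons, List.zipWith_cons_cons, List.prod_cons,
        ← hprod₃, ← kel_conj hmeta x g hh₁]
      group

theorem t_single (hmeta : ∀ a b : G, a ∈ commutator G → b ∈ commutator G → a * b = b * a) {x h : G} (hh : h ∈ commutator G) :
    ∀ {L : List G}, x ∈ L → Kel x h ∈ TSet L := by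
  intro L
  induction L with
  | nil => intro hx; simp at hx
  | cons y L ih =>
    intro hxL
    rcases List.mem_cons.1 hxL with rfl | hxL
    · refine ⟨h :: List.replicate L.length 1, by simp, fun h' hh' => ?_, ?_⟩
      · rcases List.mem_cons.1 hh' with rfl | hh'
        · exact hh
        · rw [List.eq_of_mem_replicate hh']; exact one_mem _
      · rw [List.zipWith_cons_cons, List.prod_cons, zip_ones L, mul_one]
    · obtain ⟨t, hlen, hmemt, hprod⟩ := ih hxL
      refine ⟨1 :: t, by simpa using hlen, fun h' hh' => ?_, ?_⟩
      · rcases List.mem_cons.1 hh' with rfl | hh'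
        · exact one_mem _
        · exact hmemt _ hh'
      · rw [List.zipWith_cons_cons, List.prod_cons, kel_one, one_mul]
        exact hprod

theorem t_pal (hmeta : ∀ a b : G, a ∈ commutator G → b ∈ commutator G → a * b = b * a) (hgen : Subgroup.closure X = ⊤) {L : List G} (hL : ∀ x ∈ L, x ∈ X) :
    ∀ {a : G}, a ∈ TSet L → IsProdOfPalindromes X (4 * L.length) a := by
  induction L with
  | nil =>
    rintro a ⟨hs, hlen, -, rfl⟩
    simpa using pal_one 0
  | cons x L ih =>
    rintro a ⟨hs, hlen, hmem, rfl⟩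
    obtain ⟨h₁, t₁, rfl⟩ : ∃ h t, hs = h :: t := by
      cases hs with
      | nil => simp at hlen
      | cons h t => exact ⟨h, t, rfl⟩
    have hh₁ : h₁ ∈ commutator G := hmem _ (List.mem_cons_self)
    have hmem₁ := fun h hh => hmem h (List.mem_cons_of_mem _ hh)
    have hx : x ∈ X := hL x (List.mem_cons_self)
    have h1 : IsProdOfPalindromes X 4 (Kel x h₁) := kel_pal hgen hmeta hx hh₁
    have h2 := ih (fun y hy => hL y (List.mem_cons_of_mem _ hy))
      ⟨t₁, by simpa using hlen, hmem₁, rfl⟩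
    rw [List.zipWith_cons_cons, List.prod_cons]
    exact pal_mono (by simp [List.length_cons]; omega) (pal_mul h1 h2)

/-! ### Class-2 computations -/

section Class2

variable {N : Type*} [Group N]

theorem c2_mul_left (hcen : ∀ a b c : N, Commute ⁅a, b⁆ c) (a b c : N) : ⁅a * b, c⁆ = ⁅a, c⁆ * ⁅b, c⁆ := by
  have e : ⁅a * b, c⁆ = a * ⁅b, c⁆ * a⁻¹ * ⁅a, c⁆ := by
    simp only [commutatorElement_def]; group
  rw [e, ← (hcen b c a).eq, mul_inv_cancel_right, (hcen b c _).eq]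

theorem c2_mul_right (hcen : ∀ a b c : N, Commute ⁅a, b⁆ c) (a b c : N) : ⁅a, b * c⁆ = ⁅a, b⁆ * ⁅a, c⁆ := by
  have e : ⁅a, b * c⁆ = ⁅a, b⁆ * (b * ⁅a, c⁆ * b⁻¹) := by
    simp only [commutatorElement_def]; group
  rw [e, ← (hcen a c b).eq, mul_inv_cancel_right]

theorem c2_pow_left (hcen : ∀ a b c : N, Commute ⁅a, b⁆ c) (a c : N) : ∀ n : ℕ, ⁅a ^ n, c⁆ = ⁅a, c⁆ ^ n := by
  intro n
  induction n with
  | zero => simp [commutatorElement_def]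
  | succ n ihn => rw [pow_succ, c2_mul_left hcen, ihn, pow_succ]

theorem c2_pow_right (hcen : ∀ a b c : N, Commute ⁅a, b⁆ c) (a c : N) : ∀ n : ℕ, ⁅a, c ^ n⁆ = ⁅a, c⁆ ^ n := by
  intro n
  induction n with
  | zero => simp [commutatorElement_def]
  | succ n ihn => rw [pow_succ, c2_mul_right hcen, ihn, pow_succ]

theorem c2_pow_pow (hcen : ∀ a b c : N, Commute ⁅a, b⁆ c) (a b : N) (n : ℕ) : ⁅a ^ n, b ^ n⁆ = ⁅a, b⁆ ^ (n * n) := by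
  rw [c2_pow_left hcen, c2_pow_right hcen, ← pow_mul]

theorem c2_inv_left (hcen : ∀ a b c : N, Commute ⁅a, b⁆ c) (a c : N) : ⁅a⁻¹, c⁆ = ⁅a, c⁆⁻¹ := by
  have h := c2_mul_left hcen a a⁻¹ c
  rw [mul_inv_cancel] at h
  have h1 : ⁅(1 : N), c⁆ = 1 := by simp [commutatorElement_def]
  rw [h1] at h
  exact eq_inv_of_mul_eq_one_right h.symm

theorem c2_inv_right (hcen : ∀ a b c : N, Commute ⁅a, b⁆ c) (a c : N) : ⁅a, c⁻¹⁆ = ⁅a, c⁆⁻¹ := by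
  have h := c2_mul_right hcen a c c⁻¹
  rw [mul_inv_cancel] at h
  have h1 : ⁅a, (1 : N)⁆ = 1 := by simp [commutatorElement_def]
  rw [h1] at h
  exact eq_inv_of_mul_eq_one_right h.symm

/-- Product manipulation for lists of central elements. -/
theorem central_map_prod_mul {ι : Type*} (l : List ι) (f g : ι → N)
    (hg : ∀ i c, Commute (g i) c) :
    (l.map f).prod * (l.map g).prod = (l.map fun i => f i * g i).prod := by
  induction l with
  | nil => simp
  | cons a l ih =>
    simp only [List.map_cons, List.prod_cons]
    calc f a * (l.map f).prod * (g a * (l.map g).prod)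
        = f a * ((l.map f).prod * g a) * (l.map g).prod := by group
      _ = f a * (g a * (l.map f).prod) * (l.map g).prod := by rw [← (hg a _).eq]
      _ = (f a * g a) * ((l.map f).prod * (l.map g).prod) := by group
      _ = (f a * g a) * (l.map fun i => f i * g i).prod := by rw [ih]

theorem central_map_prod_inv {ι : Type*} (l : List ι) (f : ι → N)
    (hf : ∀ i c, Commute (f i) c) :
    ((l.map f).prod)⁻¹ = (l.map fun i => (f i)⁻¹).prod := by
  induction l with
  | nil => simp
  | cons a l ih =>
    simp only [List.map_cons, List.prod_cons, mul_inv_rev]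
    rw [ih]
    exact ((hf a ((l.map fun i => (f i)⁻¹).prod)).inv_left).eq.symm

end Class2

/-! ### Indicator products -/

theorem prod_map_indicator {ι M : Type*} [DecidableEq ι] [Monoid M] (f : ι → M) :
    ∀ (l : List ι), l.Nodup → ∀ p₀ ∈ l,
      (l.map fun p => if p = p₀ then f p else 1).prod = f p₀ := by
  intro l
  induction l with
  | nil => intro _ p₀ h; simp at h
  | cons a l ih =>
    intro hnd p₀ hmem
    have hnd' := List.nodup_cons.1 hnd
    rcases List.mem_cons.1 hmem with rfl | hmem
    · simp only [List.map_cons, List.prod_cons, if_pos rfl]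
      have h1 : (l.map fun p => if p = p₀ then f p else 1) = l.map fun _ => 1 :=
        List.map_congr_left fun p hp => if_neg (fun h : p = p₀ => hnd'.1 (h ▸ hp))
      rw [h1]
      simp
    · have hne : a ≠ p₀ := fun h : a = p₀ => hnd'.1 (h ▸ hmem)
      simp only [List.map_cons, List.prod_cons, if_neg hne, one_mul]
      exact ih hnd'.2 p₀ hmem

/-! ### Exponents in commutative groups -/

theorem comm_exponents {H : Type*} [CommGroup H] (f : G →* H) (L : List G) (hnd : L.Nodup)
    {t : H} (ht : t ∈ Subgroup.closure (f '' {x | x ∈ L})) :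
    ∃ m : G → ℤ, t = (L.map fun x => f x ^ m x).prod := by
  classical
  refine Subgroup.closure_induction ?_ ?_ ?_ ?_ ht
  · rintro y ⟨x₀, hx₀, rfl⟩
    refine ⟨fun x => if x = x₀ then 1 else 0, ?_⟩
    have h1 : (L.map fun x => f x ^ (if x = x₀ then (1 : ℤ) else 0))
        = L.map fun x => if x = x₀ then f x else 1 :=
      List.map_congr_left fun x _ => by split <;> simp
    rw [h1, prod_map_indicator _ L hnd x₀ hx₀]
  · refine ⟨fun _ => 0, ?_⟩
    simp
  · rintro t₁ t₂ - - ⟨m₁, rfl⟩ ⟨m₂, rfl⟩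
    refine ⟨fun x => m₁ x + m₂ x, ?_⟩
    rw [← List.prod_map_mul]
    exact congrArg List.prod (List.map_congr_left fun x _ => (zpow_add (f x) (m₁ x) (m₂ x)).symm)
  · rintro t₁ - ⟨m₁, rfl⟩
    refine ⟨fun x => -(m₁ x), ?_⟩
    rw [List.prod_inv, List.map_map]
    exact congrArg List.prod (List.map_congr_left fun x _ => by
      simp [zpow_neg])

/-! ### Difference-of-squares decomposition of an integer -/

theorem exists_sq_decomp (n : ℤ) :
    ∃ a b c d : ℕ, n = (a : ℤ) ^ 2 - (b : ℤ) ^ 2 + ((c : ℤ) ^ 2 - (d : ℤ) ^ 2) := by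
  have hodd : ∀ j : ℤ, Odd j → ∃ a b : ℕ, j = (a : ℤ) ^ 2 - (b : ℤ) ^ 2 := by
    rintro j ⟨t, rfl⟩
    rcases le_or_gt 0 t with ht | ht
    · refine ⟨(t + 1).toNat, t.toNat, ?_⟩
      have h1 : (((t + 1).toNat : ℤ)) = t + 1 := Int.toNat_of_nonneg (by omega)
      have h2 : ((t.toNat : ℤ)) = t := Int.toNat_of_nonneg ht
      rw [h1, h2]; ring
    · refine ⟨(-t - 1).toNat, (-t).toNat, ?_⟩
      have h1 : (((-t - 1).toNat : ℤ)) = -t - 1 := Int.toNat_of_nonneg (by omega)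
      have h2 : (((-t).toNat : ℤ)) = -t := Int.toNat_of_nonneg (by omega)
      rw [h1, h2]; ring
  rcases Int.even_or_odd n with ⟨t, ht⟩ | hn
  · obtain ⟨a, b, hab⟩ := hodd (2 * t - 1) ⟨t - 1, by ring⟩
    refine ⟨a, b, 1, 0, ?_⟩
    have : ((1 : ℕ) : ℤ) ^ 2 - ((0 : ℕ) : ℤ) ^ 2 = 1 := by norm_num
    rw [this, ht]
    omega
  · obtain ⟨a, b, hab⟩ := hodd n hn
    refine ⟨a, b, 0, 0, ?_⟩
    rw [← hab]
    norm_num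

end MetabelianPW

open MetabelianPW in
theorem metabelian_finite_palindromic_width {G : Type*} [Group G]
    (X : Set G) (hX : X.Finite) (hgen : Subgroup.closure X = ⊤)
    (hmeta : ∀ a b : G, a ∈ commutator G → b ∈ commutator G → a * b = b * a) :
    ∃ n : ℕ, ∀ g : G, IsProdOfPalindromes X n g := by
  classical
  set L : List G := hX.toFinset.toList with hLdef
  have hLX : ∀ x ∈ L, x ∈ X := fun x hx => by
    rw [hLdef] at hx
    exact (Set.Finite.mem_toFinset hX).1 (Finset.mem_toList.1 hx)
  have hXL : ∀ x ∈ X, x ∈ L := fun x hx => by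
    rw [hLdef]
    exact Finset.mem_toList.2 ((Set.Finite.mem_toFinset hX).2 hx)
  have hLnd : L.Nodup := Finset.nodup_toList _
  set K : Subgroup G := Subgroup.normalClosure (KelSet X) with hKdef
  haveI hKnorm : K.Normal := Subgroup.normalClosure_normal
  set φ : G →* G ⧸ K := QuotientGroup.mk' K with hφdef
  -- class two property of the quotient
  have class2 : ∀ p q r : G ⧸ K, ⁅⁅p, q⁆, r⁆ = 1 := by
    intro p q r
    obtain ⟨g₁, rfl⟩ := QuotientGroup.mk'_surjective K p
    obtain ⟨g₂, rfl⟩ := QuotientGroup.mk'_surjective K q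
    obtain ⟨g₃, rfl⟩ := QuotientGroup.mk'_surjective K r
    rw [← map_commutatorElement, ← map_commutatorElement]
    have hc : ⁅g₁, g₂⁆ ∈ commutator G := comm_mem_commutator g₁ g₂
    have hmem : ⁅⁅g₁, g₂⁆, g₃⁆ ∈ K := by
      have := conjdiff_mem hmeta hgen (inv_mem hc) g₃⁻¹
      simpa [commutatorElement_def] using this
    exact (QuotientGroup.eq_one_iff _).mpr hmem
  have hcen : ∀ p q r : G ⧸ K, Commute ⁅p, q⁆ r := fun p q r =>
    commutatorElement_eq_one_iff_commute.mp (class2 p q r)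
  -- generation of the quotient
  have htop : Subgroup.closure (φ '' X) = ⊤ := by
    rw [← MonoidHom.map_closure, hgen,
      Subgroup.map_top_of_surjective _ (QuotientGroup.mk'_surjective K)]
  -- the bounded-product set Z
  set pairList : List (G × G) := L ×ˢ L with hplDef
  have hplNodup : pairList.Nodup := List.Nodup.product hLnd hLnd
  set Zset : Set (G ⧸ K) :=
    {ζ | ∃ mf : G × G → ℤ, ζ = (pairList.map fun p => ⁅φ p.1, φ p.2⁆ ^ mf p).prod} with hZdef
  have hcenZ : ∀ (mf : G × G → ℤ) (p : G × G) (c : G ⧸ K),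
      Commute (⁅φ p.1, φ p.2⁆ ^ mf p) c := fun mf p c => (hcen _ _ c).zpow_left _
  have hZone : (1 : G ⧸ K) ∈ Zset := ⟨fun _ => 0, by simp⟩
  have hZmul : ∀ a b : G ⧸ K, a ∈ Zset → b ∈ Zset → a * b ∈ Zset := by
    rintro a b ⟨m₁, rfl⟩ ⟨m₂, rfl⟩
    refine ⟨fun p => m₁ p + m₂ p, ?_⟩
    rw [central_map_prod_mul _ _ _ (hcenZ m₂)]
    exact congrArg List.prod (List.map_congr_left fun p _ =>
      (zpow_add ⁅φ p.1, φ p.2⁆ (m₁ p) (m₂ p)).symm)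
  have hZinv : ∀ a : G ⧸ K, a ∈ Zset → a⁻¹ ∈ Zset := by
    rintro a ⟨m₁, rfl⟩
    refine ⟨fun p => -(m₁ p), ?_⟩
    rw [central_map_prod_inv _ _ (hcenZ m₁)]
    exact congrArg List.prod (List.map_congr_left fun p _ => by simp [zpow_neg])
  set Zsub : Subgroup (G ⧸ K) :=
    { carrier := Zset
      one_mem' := hZone
      mul_mem' := fun {a b} ha hb => hZmul a b ha hb
      inv_mem' := fun {a} ha => hZinv a ha } with hZsubDef
  -- every commutator of the quotient lies in Zsub
  have hZ : ∀ u v : G ⧸ K, ⁅u, v⁆ ∈ Zsub := by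
    intro u v
    have hu : u ∈ Subgroup.closure (φ '' X) := htop ▸ Subgroup.mem_top u
    have hv : v ∈ Subgroup.closure (φ '' X) := htop ▸ Subgroup.mem_top v
    refine Subgroup.closure_induction
      (p := fun u _ => ∀ v, v ∈ Subgroup.closure (φ '' X) → ⁅u, v⁆ ∈ Zsub)
      ?_ ?_ ?_ ?_ hu v hv
    · rintro y ⟨p₀, hp₀, rfl⟩ v hv
      refine Subgroup.closure_induction (p := fun v _ => ⁅φ p₀, v⁆ ∈ Zsub) ?_ ?_ ?_ ?_ hv
      · rintro z ⟨q₀, hq₀, rfl⟩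
        show ⁅φ p₀, φ q₀⁆ ∈ Zsub
        have hmempair : (p₀, q₀) ∈ pairList := by
          rw [hplDef]
          exact List.mem_product.2 ⟨hXL _ hp₀, hXL _ hq₀⟩
        refine ⟨fun p => if p = (p₀, q₀) then 1 else 0, ?_⟩
        have h1 : (pairList.map fun p => ⁅φ p.1, φ p.2⁆ ^ (if p = (p₀, q₀) then (1 : ℤ) else 0))
            = pairList.map fun p => if p = (p₀, q₀) then ⁅φ p.1, φ p.2⁆ else 1 :=
          List.map_congr_left fun p _ => by split <;> simp
        rw [h1, prod_map_indicator (fun p : G × G => ⁅φ p.1, φ p.2⁆) pairList hplNodup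
          (p₀, q₀) hmempair]
      · show ⁅φ p₀, (1 : G ⧸ K)⁆ ∈ Zsub
        have h1 : ⁅φ p₀, (1 : G ⧸ K)⁆ = 1 := by simp [commutatorElement_def]
        rw [h1]; exact one_mem _
      · intro v₁ v₂ _ _ ih₁ ih₂
        show ⁅φ p₀, v₁ * v₂⁆ ∈ Zsub
        rw [c2_mul_right hcen]
        exact mul_mem ih₁ ih₂
      · intro v₁ _ ih
        show ⁅φ p₀, v₁⁻¹⁆ ∈ Zsub
        rw [c2_inv_right hcen]
        exact inv_mem ih
    · intro v _
      show ⁅(1 : G ⧸ K), v⁆ ∈ Zsub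
      have h1 : ⁅(1 : G ⧸ K), v⁆ = 1 := by simp [commutatorElement_def]
      rw [h1]; exact one_mem _
    · intro u₁ u₂ _ _ ih₁ ih₂ v hv
      show ⁅u₁ * u₂, v⁆ ∈ Zsub
      rw [c2_mul_left hcen]
      exact mul_mem (ih₁ v hv) (ih₂ v hv)
    · intro u₁ _ ih v hv
      show ⁅u₁⁻¹, v⁆ ∈ Zsub
      rw [c2_inv_left hcen]
      exact inv_mem (ih v hv)
  -- now the main construction
  refine ⟨1 * L.length + (16 * pairList.length + 4 * L.length), fun g => ?_⟩
  -- Step 1: abelianization exponents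
  have hXset : X = {x | x ∈ L} := Set.ext fun x => ⟨hXL x, hLX x⟩
  have hab : Abelianization.of g ∈ Subgroup.closure (Abelianization.of '' {x | x ∈ L}) := by
    rw [← hXset, ← MonoidHom.map_closure, hgen]
    exact Subgroup.mem_map_of_mem _ (Subgroup.mem_top g)
  obtain ⟨m, hm⟩ := comm_exponents Abelianization.of L hLnd hab
  set P0 : G := (L.map fun x => x ^ m x).prod with hP0def
  have hP0of : Abelianization.of P0 = Abelianization.of g := by
    rw [hP0def, map_list_prod, List.map_map, hm]
    exact congrArg List.prod (List.map_congr_left fun x _ => by simp)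
  have ha₀ : P0⁻¹ * g ∈ commutator G := by
    have h1 : Abelianization.of (P0⁻¹ * g) = 1 := by
      rw [map_mul, map_inv, hP0of, inv_mul_cancel]
    exact (QuotientGroup.eq_one_iff _).mp h1
  set a₀ : G := P0⁻¹ * g with ha₀def
  -- Step 2: image of a₀ in the quotient lies in Zsub
  have hmk : φ a₀ ∈ Zsub := by
    have h1 : φ a₀ ∈ Subgroup.map φ (commutator G) := Subgroup.mem_map_of_mem _ ha₀
    rw [commutator_def, Subgroup.map_commutator,
      Subgroup.map_top_of_surjective _ (QuotientGroup.mk'_surjective K)] at h1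
    exact Subgroup.commutator_le.mpr (fun u _ v _ => hZ u v) h1
  obtain ⟨mf, hmf⟩ : ∃ mf : G × G → ℤ,
      φ a₀ = (pairList.map fun p => ⁅φ p.1, φ p.2⁆ ^ mf p).prod := hmk
  -- Step 3: square decompositions and the commutator product Qt
  choose A B C D hsq using fun p : G × G => exists_sq_decomp (mf p)
  set Qc : G × G → G := fun p =>
    ⁅p.1 ^ A p, p.2 ^ A p⁆ * ⁅p.1 ^ B p, p.2 ^ B p⁆⁻¹ *
      (⁅p.1 ^ C p, p.2 ^ C p⁆ * ⁅p.1 ^ D p, p.2 ^ D p⁆⁻¹) with hQcdef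
  have hQmk : ∀ p : G × G, φ (Qc p) = ⁅φ p.1, φ p.2⁆ ^ mf p := by
    intro p
    have hA := c2_pow_pow hcen (φ p.1) (φ p.2) (A p)
    have hB := c2_pow_pow hcen (φ p.1) (φ p.2) (B p)
    have hC := c2_pow_pow hcen (φ p.1) (φ p.2) (C p)
    have hD := c2_pow_pow hcen (φ p.1) (φ p.2) (D p)
    have e1 : φ (Qc p) = ⁅φ p.1, φ p.2⁆ ^ (A p * A p) * (⁅φ p.1, φ p.2⁆ ^ (B p * B p))⁻¹ *
        (⁅φ p.1, φ p.2⁆ ^ (C p * C p) * (⁅φ p.1, φ p.2⁆ ^ (D p * D p))⁻¹) := by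
      rw [hQcdef]
      simp only [map_mul, map_inv, map_commutatorElement, map_pow, hA, hB, hC, hD]
    rw [e1]
    rw [← zpow_natCast ⁅φ p.1, φ p.2⁆ (A p * A p), ← zpow_natCast ⁅φ p.1, φ p.2⁆ (B p * B p),
      ← zpow_natCast ⁅φ p.1, φ p.2⁆ (C p * C p), ← zpow_natCast ⁅φ p.1, φ p.2⁆ (D p * D p),
      ← zpow_neg, ← zpow_neg, ← zpow_add, ← zpow_add, ← zpow_add]
    congr 1
    have := hsq p
    push_cast
    nlinarith [this]
  set Qt : G := (pairList.map Qc).prod with hQtdef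
  have hQtmk : φ Qt = φ a₀ := by
    rw [hQtdef, map_list_prod, List.map_map, hmf]
    exact congrArg List.prod (List.map_congr_left fun p _ => hQmk p)
  have hsK : Qt⁻¹ * a₀ ∈ K := by
    have h1 : ((Qt : G) : G ⧸ K) = ((a₀ : G) : G ⧸ K) := hQtmk
    exact QuotientGroup.eq.mp h1
  -- Step 4: palindromic decomposition
  have hdecomp : g = P0 * Qt * (Qt⁻¹ * a₀) := by
    rw [ha₀def]; group
  have hP0pal : IsProdOfPalindromes X (1 * L.length) P0 := by
    have h1 : ∀ e ∈ L.map fun x => x ^ m x, IsProdOfPalindromes X 1 e := by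
      intro e he
      obtain ⟨x, hx, rfl⟩ := List.mem_map.1 he
      exact pal_letter_zpow (Or.inl (hLX x hx)) (m x)
    have := pal_list_prod h1
    rwa [List.length_map] at this
  have hQtpal : IsProdOfPalindromes X (16 * pairList.length) Qt := by
    have h1 : ∀ e ∈ pairList.map Qc, IsProdOfPalindromes X 16 e := by
      intro e he
      obtain ⟨p, hp, rfl⟩ := List.mem_map.1 he
      have hp1 : p.1 ∈ X := by
        rw [hplDef] at hp
        obtain ⟨x, y⟩ := p
        exact hLX _ (List.mem_product.1 hp).1
      have hp2 : p.2 ∈ X := by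
        rw [hplDef] at hp
        obtain ⟨x, y⟩ := p
        exact hLX _ (List.mem_product.1 hp).2
      have hcommpal : ∀ n : ℕ, IsProdOfPalindromes X 4 ⁅p.1 ^ n, p.2 ^ n⁆ := by
        intro n
        rw [commutatorElement_def]
        have e1 := pal_letter (Or.inl hp1) n
        have e2 := pal_letter (Or.inl hp2) n
        have e3 := pal_inv e1
        have e4 := pal_inv e2
        exact pal_mono (by omega) (pal_mul (pal_mul (pal_mul e1 e2) e3) e4)
      have q1 := hcommpal (A p)
      have q2 := pal_inv (hcommpal (B p))
      have q3 := hcommpal (C p)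
      have q4 := pal_inv (hcommpal (D p))
      rw [hQcdef]
      exact pal_mono (by omega) (pal_mul (pal_mul q1 q2) (pal_mul q3 q4))
    have := pal_list_prod h1
    rwa [List.length_map] at this
  have hspal : IsProdOfPalindromes X (4 * L.length) (Qt⁻¹ * a₀) := by
    -- K is contained in TSet L, whose elements are products of 4 * L.length palindromes
    have hTle : ∀ s ∈ K, s ∈ TSet L := by
      set Tgrp : Subgroup G :=
        { carrier := TSet L
          one_mem' := t_one L
          mul_mem' := fun {a b} ha hb => t_mul hmeta ha hb
          inv_mem' := fun {a} ha => t_inv hmeta ha } with hTdef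
      haveI hTnorm : Tgrp.Normal := ⟨fun n hn g => t_conj hmeta hn g⟩
      have hsub : KelSet X ⊆ Tgrp := by
        rintro a ⟨x, hx, h, hh, rfl⟩
        exact t_single hmeta hh (hXL x hx)
      intro s hs
      exact Subgroup.normalClosure_le_normal hsub hs
    exact t_pal hmeta hgen hLX (hTle _ hsK)
  rw [hdecomp]
  exact pal_mono (by omega) (pal_mul (pal_mul hP0pal hQtpal) hspal)
end

section
/- Let r ≥ 1, let F be the free group on r generators x₁,…,x_r, F' its derived subgroup, F'' its second derived subgroup, and M_r = F/F'' the free metabelian group of rank r with generators x̄₁,…,x̄_r. Then every element of the image of F' in M_r is a product of 2^{r−1}·r·(r+1)·(2r+3) + 3r + 1 palindromes over {x̄₁,…,x̄_r}. -/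
/-- The second derived subgroup `F''` of a group. -/
def secondDerived (F : Type*) [Group F] : Subgroup F :=
  ⁅commutator F, commutator F⁆

instance secondDerived_normal (F : Type*) [Group F] : (secondDerived F).Normal := by
  unfold secondDerived; infer_instance

/-- The free metabelian group of rank `r`. -/
abbrev FreeMetabelian (r : ℕ) := FreeGroup (Fin r) ⧸ secondDerived (FreeGroup (Fin r))

namespace PalAux

open scoped commutatorElement
open scoped IsMulCommutative

variable {G : Type*} [Group G]

lemma comm_mul_left (a b y : G) : ⁅a * b, y⁆ = a * ⁅b, y⁆ * a⁻¹ * ⁅a, y⁆ := by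
  simp only [commutatorElement_def]; group

lemma comm_mul_right (a b c : G) : ⁅a, b * c⁆ = ⁅a, b⁆ * (b * ⁅a, c⁆ * b⁻¹) := by
  simp only [commutatorElement_def]; group

lemma comm_inv_left (a b : G) : ⁅a⁻¹, b⁆ = a⁻¹ * ⁅a, b⁆⁻¹ * a := by
  simp only [commutatorElement_def]; group

lemma comm_inv_right (a b : G) : ⁅a, b⁻¹⁆ = b⁻¹ * ⁅a, b⁆⁻¹ * b := by
  simp only [commutatorElement_def]; group

lemma exists_word {X : Set G} {a : G} (ha : a ∈ Subgroup.closure X) :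
    ∃ w : List G, (∀ g ∈ w, g ∈ X ∨ g⁻¹ ∈ X) ∧ w.prod = a := by
  have h : a ∈ Submonoid.closure (X ∪ X⁻¹) := by
    rw [← Subgroup.closure_toSubmonoid]; exact ha
  obtain ⟨l, hl, hp⟩ := Submonoid.exists_list_of_mem_closure h
  refine ⟨l, fun g hg => ?_, hp⟩
  rcases hl g hg with h | h
  · exact Or.inl h
  · exact Or.inr (Set.mem_inv.mp h)

/-- Core palindromic decomposition: `⁅a, y⁆` is a product of three palindromes. -/
lemma comm_three_pal {X : Set G} {a y : G}
    (ha : a ∈ Subgroup.closure X) (hy : y ∈ X) :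
    ∃ p₁ p₂ p₃ : List G, IsPalindromicWord X p₁ ∧ IsPalindromicWord X p₂ ∧
      IsPalindromicWord X p₃ ∧ p₁.prod * p₂.prod * p₃.prod = ⁅a, y⁆ := by
  obtain ⟨w, hw, hwp⟩ := exists_word ha
  have hwr : ∀ g ∈ w.reverse, g ∈ X ∨ g⁻¹ ∈ X := fun g hg => hw g (List.mem_reverse.mp hg)
  refine ⟨w ++ [y] ++ w.reverse, ((w ++ w.reverse).map fun z => z⁻¹).reverse, [y⁻¹],
    ⟨?_, ?_⟩, ⟨?_, ?_⟩, ⟨?_, ?_⟩, ?_⟩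
  · intro g hg
    simp only [List.mem_append, List.mem_singleton] at hg
    rcases hg with (hg | rfl) | hg
    · exact hw g hg
    · exact Or.inl hy
    · exact hwr g hg
  · simp [List.reverse_append, List.append_assoc]
  · intro g hg
    simp only [List.mem_reverse, List.mem_map, List.mem_append] at hg
    obtain ⟨z, hz, rfl⟩ := hg
    have h3 : z ∈ X ∨ z⁻¹ ∈ X := by
      rcases hz with h | h
      · exact hw z h
      · exact hw z (by simpa using h)
    rcases h3 with h | h
    · exact Or.inr (by simpa using h)
    · exact Or.inl h
  · rw [List.reverse_reverse]
    rw [← List.map_reverse]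
    congr 1
    simp [List.reverse_append]
  · intro g hg
    simp only [List.mem_singleton] at hg
    subst hg
    exact Or.inr (by simpa using hy)
  · rfl
  · have h2 : (((w ++ w.reverse).map fun z => z⁻¹).reverse).prod = (w.prod * w.reverse.prod)⁻¹ := by
      rw [← List.prod_inv_reverse, List.prod_append]
    simp only [List.prod_append, List.prod_cons, List.prod_nil, h2, commutatorElement_def, hwp]
    group




/-- Turning a list of commutators `⁅a, y⁆` (with `y` a generator) into palindromes. -/
lemma prod_comms_pal {X : Set G} (hX : Subgroup.closure X = ⊤) :
    ∀ L : List (G × G), (∀ p ∈ L, p.2 ∈ X) →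
    ∃ ws : List (List G), ws.length = 3 * L.length ∧ (∀ w ∈ ws, IsPalindromicWord X w) ∧
      (ws.map List.prod).prod = (L.map fun p => ⁅p.1, p.2⁆).prod := by
  intro L
  induction L with
  | nil => exact fun _ => ⟨[], by simp, by simp, by simp⟩
  | cons p L ih =>
    intro hL
    obtain ⟨ws, hlen, hpal, hprod⟩ := ih (fun q hq => hL q (List.mem_cons_of_mem _ hq))
    have hp1 : p.1 ∈ Subgroup.closure X := hX ▸ Subgroup.mem_top p.1
    obtain ⟨p₁, p₂, p₃, h₁, h₂, h₃, hcomm⟩ := comm_three_pal hp1 (hL p (List.mem_cons_self (a := p) (l := L)))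
    refine ⟨p₁ :: p₂ :: p₃ :: ws, by simp [hlen]; ring, ?_, ?_⟩
    · intro w hw
      rcases List.mem_cons.mp hw with rfl | hw
      · exact h₁
      rcases List.mem_cons.mp hw with rfl | hw
      · exact h₂
      rcases List.mem_cons.mp hw with rfl | hw
      · exact h₃
      exact hpal w hw
    · simp only [List.map_cons, List.prod_cons, hprod, ← hcomm, mul_assoc]

lemma isProd_mono {X : Set G} {n m : ℕ} (h : n ≤ m) {g : G}
    (hg : IsProdOfPalindromes X n g) : IsProdOfPalindromes X m g := by
  obtain ⟨ws, hlen, hpal, hprod⟩ := hg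
  refine ⟨ws ++ List.replicate (m - n) [], by simp [hlen, Nat.add_sub_cancel' h], ?_, ?_⟩
  · intro w hw
    rcases List.mem_append.mp hw with hw | hw
    · exact hpal w hw
    · rw [List.eq_of_mem_replicate hw]
      exact ⟨by simp, rfl⟩
  · simp [hprod]

/-- prod of a map that is `v` at one position of a nodup list and `1` elsewhere. -/
lemma prod_map_ite_eq {M : Type*} [Monoid M] {ι : Type*} [DecidableEq ι]
    (l : List ι) (hnd : l.Nodup) (i0 : ι) (hi : i0 ∈ l) (f : ι → M) :
    (l.map fun i => if i = i0 then f i else 1).prod = f i0 := by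
  induction l with
  | nil => cases hi
  | cons a l ih =>
    by_cases hai : a = i0
    · subst hai
      have hnot : a ∉ l := (List.nodup_cons.mp hnd).1
      have hmap : (l.map fun i => if i = a then f i else 1) = l.map fun _ => 1 := by
        apply List.map_congr_left
        intro b hb
        exact if_neg (fun hba : b = a => hnot (hba ▸ hb))
      simp [hmap]
    · have hi' : i0 ∈ l := by
        rcases List.mem_cons.mp hi with h | h
        · exact absurd h.symm hai
        · exact h
      simp only [List.map_cons, List.prod_cons, if_neg hai, one_mul]
      exact ih (List.nodup_cons.mp hnd).2 hi'

lemma prod_map_inv {M : Type*} [CommGroup M] {ι : Type*} (l : List ι) (f : ι → M) :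
    (l.map fun i => (f i)⁻¹).prod = ((l.map f).prod)⁻¹ := by
  induction l with
  | nil => simp
  | cons a l ih => simp [ih, mul_comm]




theorem main_abstract {r : ℕ} (x : Fin r → G)
    (hgen : Subgroup.closure (Set.range x) = ⊤)
    (habel : ∀ a ∈ commutator G, ∀ b ∈ commutator G, a * b = b * a)
    {g : G} (hg : g ∈ commutator G) :
    ∃ L : List (G × G), L.length = r + r * r ∧ (∀ p ∈ L, p.2 ∈ Set.range x) ∧
      (L.map fun p => ⁅p.1, p.2⁆).prod = g := by
  have memA : ∀ a b : G, ⁅a, b⁆ ∈ commutator G := fun a b => by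
    rw [commutator_def]
    exact Subgroup.commutator_mem_commutator (Subgroup.mem_top a) (Subgroup.mem_top b)
  have hab1 : ∀ a ∈ commutator G, ∀ b ∈ commutator G, ⁅a, b⁆ = 1 := fun a ha b hb =>
    commutatorElement_eq_one_iff_mul_comm.mpr (habel a ha b hb)
  set S : Set G := {k | ∃ a ∈ commutator G, ∃ i : Fin r, k = ⁅a, x i⁆} with hS
  set D : Subgroup G := Subgroup.closure S with hD
  have hDA : D ≤ commutator G := by
    rw [hD]
    apply Subgroup.closure_le _ |>.mpr
    rintro k ⟨a, ha, i, rfl⟩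
    exact memA a (x i)
  -- D is normal
  have hDnormal : D.Normal := by
    constructor
    intro nn hnn gg
    induction hnn using Subgroup.closure_induction with
    | mem k hk =>
      obtain ⟨a, ha, i, rfl⟩ := hk
      have hconj : gg * ⁅a, x i⁆ * gg⁻¹ = ⁅gg * a * gg⁻¹, gg * x i * gg⁻¹⁆ := by
        simp only [commutatorElement_def]; group
      have hxdec : gg * x i * gg⁻¹ = x i * ⁅(x i)⁻¹, gg⁆ := by
        simp only [commutatorElement_def]; group
      have ha' : gg * a * gg⁻¹ ∈ commutator G :=
        (Subgroup.Normal.conj_mem inferInstance) a ha gg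
      have hzero : ⁅gg * a * gg⁻¹, ⁅(x i)⁻¹, gg⁆⁆ = 1 :=
        hab1 _ ha' _ (memA _ _)
      rw [hconj, hxdec, comm_mul_right, hzero]
      simp only [mul_one, mul_inv_cancel]
      exact Subgroup.subset_closure ⟨_, ha', i, rfl⟩
    | one => simpa using one_mem D
    | mul a b _ _ iha ihb =>
      have h : gg * (a * b) * gg⁻¹ = (gg * a * gg⁻¹) * (gg * b * gg⁻¹) := by group
      rw [h]; exact mul_mem iha ihb
    | inv a _ iha =>
      have h : gg * a⁻¹ * gg⁻¹ = (gg * a * gg⁻¹)⁻¹ := by group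
      rw [h]; exact inv_mem iha
  -- commutators of A with anything are in D
  have commAD : ∀ gg : G, ∀ a ∈ commutator G, ⁅a, gg⁆ ∈ D := by
    intro gg
    have hgg : gg ∈ Subgroup.closure (Set.range x) := hgen ▸ Subgroup.mem_top gg
    induction hgg using Subgroup.closure_induction with
    | mem k hk =>
      obtain ⟨i, rfl⟩ := hk
      intro a ha
      exact Subgroup.subset_closure ⟨a, ha, i, rfl⟩
    | one => intro a _; simp only [commutatorElement_one_right]; exact one_mem D
    | mul b c _ _ ihb ihc =>
      intro a ha
      rw [comm_mul_right]
      exact mul_mem (ihb a ha) (hDnormal.conj_mem _ (ihc a ha) b)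
    | inv b _ ihb =>
      intro a ha
      rw [comm_inv_right]
      have := hDnormal.conj_mem _ (inv_mem (ihb a ha)) b⁻¹
      simpa using this
  haveI := hDnormal
  set π : G →* G ⧸ D := QuotientGroup.mk' D with hπ
  have hker : ∀ {u : G}, u ∈ D → π u = 1 := by
    intro u hu
    rw [← QuotientGroup.ker_mk' D] at hu
    exact hu
  have hkermem : ∀ {u : G}, π u = 1 → u ∈ D := by
    intro u hu
    rw [← QuotientGroup.ker_mk' D]
    exact hu
  have hcent : ∀ a ∈ commutator G, π a ∈ Subgroup.center (G ⧸ D) := by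
    intro a ha
    rw [Subgroup.mem_center_iff]
    intro q
    obtain ⟨gg, rfl⟩ := QuotientGroup.mk'_surjective D q
    have key : π (gg * a) = π (a * gg) := by
      rw [hπ]
      apply (QuotientGroup.mk'_eq_mk' D).mpr
      refine ⟨⁅a⁻¹, gg⁻¹⁆, commAD gg⁻¹ a⁻¹ (inv_mem ha), ?_⟩
      simp only [commutatorElement_def]; group
    rw [map_mul, map_mul] at key; exact key
  have hconjcent : ∀ u w : G, π w ∈ Subgroup.center (G ⧸ D) → π (u * w * u⁻¹) = π w := by
    intro u w hw
    have h := (Subgroup.mem_center_iff.mp hw (π u)).symm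
    simp only [map_mul, map_inv]
    rw [← h]
    group
  -- the subgroup generated by images of basic commutators
  set c : Fin r × Fin r → G := fun p => ⁅x p.1, x p.2⁆ with hc
  have hccent : ∀ p : Fin r × Fin r, π (c p) ∈ Subgroup.center (G ⧸ D) :=
    fun p => hcent _ (memA _ _)
  set C : Subgroup (G ⧸ D) := Subgroup.closure (Set.range fun p => π (c p)) with hC
  have hCZ : C ≤ Subgroup.center (G ⧸ D) := by
    rw [hC]
    apply Subgroup.closure_le _ |>.mpr
    rintro k ⟨p, rfl⟩
    exact hccent p
  have hCnorm : C.Normal := by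
    constructor
    intro n hn gq
    have h := (Subgroup.mem_center_iff.mp (hCZ hn) gq).symm
    have : gq * n * gq⁻¹ = n := by rw [← h]; group
    rwa [this]
  haveI := hCnorm
  set ρ : (G ⧸ D) →* (G ⧸ D) ⧸ C := QuotientGroup.mk' C with hρ
  -- the quotient by C is commutative
  have hQ2gen : Subgroup.closure (Set.range fun i => ρ (π (x i))) = ⊤ := by
    have h1 : (Subgroup.closure (Set.range x)).map (ρ.comp π) = ⊤ := by
      rw [hgen]
      exact Subgroup.map_top_of_surjective _
        ((QuotientGroup.mk'_surjective C).comp (QuotientGroup.mk'_surjective D))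
    rw [MonoidHom.map_closure] at h1
    rw [← h1]
    congr 1
    rw [← Set.range_comp]
    rfl
  have hcomm2 : ∀ q1 q2 : (G ⧸ D) ⧸ C, Commute q1 q2 := by
    intro q1 q2
    have h1 : q1 ∈ Subgroup.closure (Set.range fun i => ρ (π (x i))) :=
      hQ2gen ▸ Subgroup.mem_top q1
    have h2 : q2 ∈ Subgroup.closure (Set.range fun i => ρ (π (x i))) :=
      hQ2gen ▸ Subgroup.mem_top q2
    induction h1, h2 using Subgroup.closure_induction₂ with
    | mem u v hu hv =>
      obtain ⟨i, rfl⟩ := hu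
      obtain ⟨j, rfl⟩ := hv
      apply commutatorElement_eq_one_iff_commute.mp
      have : ⁅ρ (π (x i)), ρ (π (x j))⁆ = ρ (π (c (i, j))) := by
        rw [hc]; simp only [← map_commutatorElement]
      rw [this, hρ]
      have hmem : π (c (i, j)) ∈ C := Subgroup.subset_closure ⟨(i, j), rfl⟩
      rwa [← QuotientGroup.ker_mk' C, MonoidHom.mem_ker] at hmem
    | one_left v _ => exact Commute.one_left v
    | one_right v _ => exact Commute.one_right v
    | mul_left u v w _ _ _ h1 h2 => exact Commute.mul_left h1 h2
    | mul_right u v w _ _ _ h1 h2 => exact Commute.mul_right h1 h2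
    | inv_left u v _ _ h => exact Commute.inv_left h
    | inv_right u v _ _ h => exact Commute.inv_right h
  have hcommC : ∀ a b : G, π ⁅a, b⁆ ∈ C := by
    intro a b
    have h1 : ρ (π ⁅a, b⁆) = 1 := by
      simp only [map_commutatorElement]
      exact commutatorElement_eq_one_iff_commute.mpr (hcomm2 _ _)
    rwa [hρ, ← MonoidHom.mem_ker, QuotientGroup.ker_mk' C] at h1
  have hgC : π g ∈ C := by
    have hle : commutator G ≤ C.comap π := by
      rw [commutator_def]
      apply Subgroup.commutator_le.mpr
      intro g1 _ g2 _
      rw [Subgroup.mem_comap, map_commutatorElement, ← map_commutatorElement]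
      exact hcommC g1 g2
    exact hle hg
  -- exponent extraction in the center
  set Z : Subgroup (G ⧸ D) := Subgroup.center (G ⧸ D) with hZ
  set cz : Fin r × Fin r → ↥Z := fun p => ⟨π (c p), hccent p⟩ with hcz
  have hmapC' : (Subgroup.closure (Set.range cz)).map Z.subtype = C := by
    rw [MonoidHom.map_closure, hC]
    congr 1
    rw [← Set.range_comp]
    rfl
  have hgC' : π g ∈ (Subgroup.closure (Set.range cz)).map Z.subtype := by
    rw [hmapC']; exact hgC
  obtain ⟨z, hzC, hzeq⟩ := Subgroup.mem_map.mp hgC'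
  set pl : List (Fin r × Fin r) := (Finset.univ : Finset (Fin r × Fin r)).toList with hpl
  have hplnd : pl.Nodup := Finset.nodup_toList _
  have hplmem : ∀ p : Fin r × Fin r, p ∈ pl := fun p => Finset.mem_toList.mpr (Finset.mem_univ p)
  have hrep : ∀ z' : ↥Z, z' ∈ Subgroup.closure (Set.range cz) →
      ∃ nn : Fin r × Fin r → ℤ, z' = (pl.map fun p => cz p ^ nn p).prod := by
    intro z' hz'
    induction hz' using Subgroup.closure_induction with
    | mem v hv =>
      obtain ⟨p0, rfl⟩ := hv
      refine ⟨fun p => if p = p0 then 1 else 0, ?_⟩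
      have hmap : (pl.map fun p => cz p ^ (if p = p0 then (1 : ℤ) else 0)) =
          pl.map fun p => if p = p0 then cz p else 1 := by
        apply List.map_congr_left
        intro p _
        by_cases h : p = p0 <;> simp [h]
      rw [hmap, prod_map_ite_eq pl hplnd p0 (hplmem p0) cz]
    | one =>
      refine ⟨fun _ => 0, ?_⟩
      have hmap : (pl.map fun p => cz p ^ (0 : ℤ)) = pl.map fun _ => (1 : ↥Z) := by
        apply List.map_congr_left; intro p _; simp
      simp [hmap]
    | mul z1 z2 _ _ ih1 ih2 =>
      obtain ⟨n1, h1⟩ := ih1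
      obtain ⟨n2, h2⟩ := ih2
      refine ⟨fun p => n1 p + n2 p, ?_⟩
      have hmap : (pl.map fun p => cz p ^ (n1 p + n2 p)) =
          pl.map fun p => cz p ^ n1 p * cz p ^ n2 p := by
        apply List.map_congr_left; intro p _; rw [zpow_add]
      rw [hmap, List.prod_map_mul, h1, h2]
    | inv z1 _ ih =>
      obtain ⟨n1, h1⟩ := ih
      refine ⟨fun p => -n1 p, ?_⟩
      have hmap : (pl.map fun p => cz p ^ (-n1 p)) =
          pl.map fun p => (cz p ^ n1 p)⁻¹ := by
        apply List.map_congr_left; intro p _; rw [zpow_neg]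
      rw [hmap, prod_map_inv, h1]
  obtain ⟨nn, hnn⟩ := hrep z hzC
  have hπg : π g = (pl.map fun p => π (c p) ^ nn p).prod := by
    rw [← hzeq, hnn]
    rw [map_list_prod Z.subtype, List.map_map]
    congr 1
  -- power collection lemma
  have hL6 : ∀ (p : Fin r × Fin r) (m : ℤ), π ⁅x p.1 ^ m, x p.2⁆ = π (c p) ^ m := by
    intro p m
    induction m using Int.induction_on with
    | zero => simp [hc]
    | succ k ih =>
      have hid : ⁅x p.1 ^ ((k : ℤ) + 1), x p.2⁆ =
          x p.1 ^ (k : ℤ) * ⁅x p.1, x p.2⁆ * (x p.1 ^ (k : ℤ))⁻¹ * ⁅x p.1 ^ (k : ℤ), x p.2⁆ := by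
        rw [zpow_add_one]
        exact comm_mul_left _ _ _
      have hstep : π ⁅x p.1 ^ ((k : ℤ) + 1), x p.2⁆ = π (c p) * π (c p) ^ (k : ℤ) := by
        rw [hid, map_mul, map_mul, map_mul, map_inv, ih]
        have hcc : π (x p.1 ^ (k : ℤ)) * π ⁅x p.1, x p.2⁆ * (π (x p.1 ^ (k : ℤ)))⁻¹ = π (c p) := by
          have := hconjcent (x p.1 ^ (k : ℤ)) ⁅x p.1, x p.2⁆ (hccent p)
          simpa [map_mul, map_inv, hc] using this
        rw [hcc]
      rw [hstep, zpow_add_one]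
      exact (((Commute.refl (π (c p))).zpow_left (k : ℤ)).eq).symm
    | pred k ih =>
      have hid : ⁅x p.1 ^ (-(k : ℤ) - 1), x p.2⁆ =
          x p.1 ^ (-(k : ℤ)) * ⁅(x p.1)⁻¹, x p.2⁆ * (x p.1 ^ (-(k : ℤ)))⁻¹ * ⁅x p.1 ^ (-(k : ℤ)), x p.2⁆ := by
        rw [zpow_sub_one]
        exact comm_mul_left _ _ _
      have hinv : π ⁅(x p.1)⁻¹, x p.2⁆ = (π (c p))⁻¹ := by
        rw [comm_inv_left]
        have h1 : (x p.1)⁻¹ * ⁅x p.1, x p.2⁆⁻¹ * x p.1 = (x p.1)⁻¹ * ⁅x p.1, x p.2⁆⁻¹ * ((x p.1)⁻¹)⁻¹ := by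
          rw [inv_inv]
        have h2 : π (⁅x p.1, x p.2⁆⁻¹) ∈ Subgroup.center (G ⧸ D) := by
          rw [map_inv]
          exact inv_mem (hccent p)
        rw [h1, hconjcent _ _ h2, map_inv]
      have hstep : π ⁅x p.1 ^ (-(k : ℤ) - 1), x p.2⁆ = (π (c p))⁻¹ * π (c p) ^ (-(k : ℤ)) := by
        rw [hid, map_mul, map_mul, map_mul, map_inv, ih]
        have hcc : π (x p.1 ^ (-(k : ℤ))) * π ⁅(x p.1)⁻¹, x p.2⁆ * (π (x p.1 ^ (-(k : ℤ))))⁻¹ =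
            π ⁅(x p.1)⁻¹, x p.2⁆ := by
          have := hconjcent (x p.1 ^ (-(k : ℤ))) ⁅(x p.1)⁻¹, x p.2⁆ (hcent _ (memA _ _))
          simpa [map_mul, map_inv] using this
        rw [hcc, hinv]
      rw [hstep, zpow_sub_one]
      exact ((Commute.refl (π (c p))).zpow_left (-(k : ℤ))).inv_right.eq.symm
  set h_el : G := (pl.map fun p => ⁅x p.1 ^ nn p, x p.2⁆).prod with hhel
  have hπh : π h_el = π g := by
    rw [hhel, map_list_prod π, List.map_map]
    rw [hπg]
    congr 1
    apply List.map_congr_left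
    intro p _
    exact hL6 p (nn p)
  have hdmem : g * h_el⁻¹ ∈ D := by
    apply hkermem
    rw [map_mul, map_inv, hπh]
    simp
  -- decompose the D-part
  haveI hAcomm : IsMulCommutative ↥(commutator G) :=
    ⟨⟨fun a b => Subtype.ext (habel _ a.2 _ b.2)⟩⟩
  set ψ : Fin r → ↥(commutator G) → ↥(commutator G) :=
    fun i a => ⟨⁅(a : G), x i⁆, memA _ _⟩ with hψ
  have hψmul : ∀ i (a b : ↥(commutator G)), ψ i (a * b) = ψ i a * ψ i b := by
    intro i a b
    apply Subtype.ext
    show ⁅(a : G) * (b : G), x i⁆ = ⁅(a : G), x i⁆ * ⁅(b : G), x i⁆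
    rw [comm_mul_left]
    have h1 : (a : G) * ⁅(b : G), x i⁆ = ⁅(b : G), x i⁆ * (a : G) :=
      habel _ a.2 _ (memA _ _)
    calc (a:G) * ⁅(b:G), x i⁆ * (a:G)⁻¹ * ⁅(a:G), x i⁆
        = ⁅(b:G), x i⁆ * (a:G) * (a:G)⁻¹ * ⁅(a:G), x i⁆ := by rw [h1]
      _ = ⁅(b:G), x i⁆ * ⁅(a:G), x i⁆ := by group
      _ = ⁅(a:G), x i⁆ * ⁅(b:G), x i⁆ := habel _ (memA _ _) _ (memA _ _)
  have hψone : ∀ i, ψ i 1 = 1 := by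
    intro i
    apply Subtype.ext
    show ⁅((1 : ↥(commutator G)) : G), x i⁆ = 1
    rw [OneMemClass.coe_one, commutatorElement_one_left]
  have hψinv : ∀ i (a : ↥(commutator G)), ψ i a⁻¹ = (ψ i a)⁻¹ := by
    intro i a
    have h := hψmul i a a⁻¹
    rw [mul_inv_cancel, hψone] at h
    exact (inv_eq_of_mul_eq_one_right h.symm).symm
  set fl : List (Fin r) := List.finRange r with hfl
  have hDdec : ∀ d ∈ D, ∃ b : Fin r → ↥(commutator G),
      (((fl.map fun i => ψ i (b i)).prod : ↥(commutator G)) : G) = d := by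
    intro d hd
    induction hd using Subgroup.closure_induction with
    | mem k hk =>
      obtain ⟨a, ha, i0, rfl⟩ := hk
      refine ⟨fun i => if i = i0 then ⟨a, ha⟩ else 1, ?_⟩
      have hmap : (fl.map fun i => ψ i (if i = i0 then ⟨a, ha⟩ else 1)) =
          fl.map fun i => if i = i0 then ψ i0 ⟨a, ha⟩ else 1 := by
        apply List.map_congr_left
        intro i _
        by_cases h : i = i0
        · subst h; simp
        · simp [h, hψone i]
      rw [hmap, prod_map_ite_eq fl (List.nodup_finRange r) i0 (List.mem_finRange i0)
        (fun _ => ψ i0 ⟨a, ha⟩)]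
    | one =>
      refine ⟨fun _ => 1, ?_⟩
      have hmap : (fl.map fun i => ψ i 1) = fl.map fun _ => (1 : ↥(commutator G)) := by
        apply List.map_congr_left
        intro i _
        exact hψone i
      simp [hmap]
    | mul d1 d2 _ _ ih1 ih2 =>
      obtain ⟨b1, h1⟩ := ih1
      obtain ⟨b2, h2⟩ := ih2
      refine ⟨fun i => b1 i * b2 i, ?_⟩
      have hmap : (fl.map fun i => ψ i (b1 i * b2 i)) =
          fl.map fun i => ψ i (b1 i) * ψ i (b2 i) :=
        List.map_congr_left (fun i _ => hψmul i (b1 i) (b2 i))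
      rw [hmap, List.prod_map_mul, Subgroup.coe_mul, h1, h2]
    | inv d1 _ ih =>
      obtain ⟨b1, h1⟩ := ih
      refine ⟨fun i => (b1 i)⁻¹, ?_⟩
      have hmap : (fl.map fun i => ψ i (b1 i)⁻¹) =
          fl.map fun i => (ψ i (b1 i))⁻¹ :=
        List.map_congr_left (fun i _ => hψinv i (b1 i))
      rw [hmap, prod_map_inv, ← h1]
      rfl
  obtain ⟨b, hb⟩ := hDdec _ hdmem
  refine ⟨(fl.map fun i => (((b i) : G), x i)) ++ (pl.map fun p => (x p.1 ^ nn p, x p.2)),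
    ?_, ?_, ?_⟩
  · rw [List.length_append, List.length_map, List.length_map, hfl, List.length_finRange, hpl,
      Finset.length_toList]
    congr 1
    rw [Finset.card_univ, Fintype.card_prod, Fintype.card_fin]
  · intro p hp
    rcases List.mem_append.mp hp with hp | hp
    · obtain ⟨i, _, rfl⟩ := List.mem_map.mp hp
      exact ⟨i, rfl⟩
    · obtain ⟨q, _, rfl⟩ := List.mem_map.mp hp
      exact ⟨q.2, rfl⟩
  · rw [List.map_append, List.prod_append, List.map_map, List.map_map]
    have hfst : ((fl.map ((fun p : G × G => ⁅p.1, p.2⁆) ∘ fun i => (((b i) : G), x i))).prod) =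
        g * h_el⁻¹ := by
      have h3 := map_list_prod ((commutator G).subtype) (fl.map fun i => ψ i (b i))
      rw [List.map_map] at h3
      rw [← hb]
      exact h3.symm
    have hsnd : ((pl.map ((fun p : G × G => ⁅p.1, p.2⁆) ∘ fun p => (x p.1 ^ nn p, x p.2))).prod) = h_el := by
      rw [hhel]
      rfl
    rw [hfst, hsnd]
    group


end PalAux

open scoped commutatorElement in
theorem free_metabelian_derived_palindromic_width (r : ℕ) (hr : 1 ≤ r) :
    ∀ g ∈ (commutator (FreeGroup (Fin r))).map
        (QuotientGroup.mk' (secondDerived (FreeGroup (Fin r)))),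
      IsProdOfPalindromes
        {x : FreeMetabelian r | ∃ i : Fin r, x = QuotientGroup.mk (FreeGroup.of i)}
        (2 ^ (r - 1) * r * (r + 1) * (2 * r + 3) + 3 * r + 1) g := by
  intro g hg
  set F := FreeGroup (Fin r) with hF
  set φ : F →* FreeMetabelian r := QuotientGroup.mk' (secondDerived F) with hφ
  set x : Fin r → FreeMetabelian r := fun i => φ (FreeGroup.of i) with hx
  have hXeq : {y : FreeMetabelian r | ∃ i : Fin r, y = QuotientGroup.mk (FreeGroup.of i)} =
      Set.range x := by
    ext y
    constructor
    · rintro ⟨i, rfl⟩; exact ⟨i, rfl⟩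
    · rintro ⟨i, rfl⟩; exact ⟨i, rfl⟩
  have hsurj : Function.Surjective φ := QuotientGroup.mk'_surjective _
  have hgen : Subgroup.closure (Set.range x) = ⊤ := by
    have h0 : Subgroup.closure (Set.range (FreeGroup.of : Fin r → F)) = ⊤ :=
      FreeGroup.closure_range_of (Fin r)
    have h1 : Set.range x = φ '' Set.range (FreeGroup.of : Fin r → F) := by
      rw [← Set.range_comp]; rfl
    rw [h1, ← MonoidHom.map_closure, h0]
    exact Subgroup.map_top_of_surjective _ hsurj
  have htop : (⊤ : Subgroup F).map φ = ⊤ := Subgroup.map_top_of_surjective _ hsurj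
  have hcommG : commutator (FreeMetabelian r) = (commutator F).map φ := by
    rw [commutator_def, ← htop, ← Subgroup.map_commutator, ← commutator_def]
  have hbot : (⁅commutator (FreeMetabelian r), commutator (FreeMetabelian r)⁆ :
      Subgroup (FreeMetabelian r)) = ⊥ := by
    rw [hcommG, ← Subgroup.map_commutator]
    apply (Subgroup.map_eq_bot_iff _).mpr
    rw [hφ, QuotientGroup.ker_mk']
    exact le_of_eq rfl
  have habel : ∀ a ∈ commutator (FreeMetabelian r), ∀ b ∈ commutator (FreeMetabelian r),
      a * b = b * a := by
    intro a ha b hb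
    have h1 : ⁅a, b⁆ ∈ (⁅commutator (FreeMetabelian r), commutator (FreeMetabelian r)⁆ :
        Subgroup (FreeMetabelian r)) := Subgroup.commutator_mem_commutator ha hb
    rw [hbot, Subgroup.mem_bot] at h1
    exact commutatorElement_eq_one_iff_mul_comm.mp h1
  have hgmem : g ∈ commutator (FreeMetabelian r) := by rw [hcommG]; exact hg
  obtain ⟨L, hLlen, hLmem, hLprod⟩ := PalAux.main_abstract x hgen habel hgmem
  have hLmem' : ∀ p ∈ L, p.2 ∈ Set.range x := hLmem
  obtain ⟨ws, hwslen, hwspal, hwsprod⟩ := PalAux.prod_comms_pal hgen L hLmem'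
  have hcount : 3 * L.length ≤ 2 ^ (r - 1) * r * (r + 1) * (2 * r + 3) + 3 * r + 1 := by
    rw [hLlen]
    have h1 : 1 ≤ 2 ^ (r - 1) := Nat.one_le_two_pow
    have h2 : 3 * (r * r) ≤ r * (r + 1) * (2 * r + 3) := by nlinarith
    have h3 : r * (r + 1) * (2 * r + 3) ≤ 2 ^ (r - 1) * r * (r + 1) * (2 * r + 3) := by
      calc r * (r + 1) * (2 * r + 3) = 1 * (r * (r + 1) * (2 * r + 3)) := by ring
        _ ≤ 2 ^ (r - 1) * (r * (r + 1) * (2 * r + 3)) :=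
            Nat.mul_le_mul_right _ h1
        _ = 2 ^ (r - 1) * r * (r + 1) * (2 * r + 3) := by ring
    calc 3 * (r + r * r) = 3 * (r * r) + 3 * r := by ring
      _ ≤ r * (r + 1) * (2 * r + 3) + 3 * r := by omega
      _ ≤ 2 ^ (r - 1) * r * (r + 1) * (2 * r + 3) + 3 * r + 1 := by omega
  rw [hXeq]
  apply PalAux.isProd_mono hcount
  exact ⟨ws, hwslen, hwspal, by rw [hwsprod, hLprod]⟩
end
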